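/- arXiv:1701.02124 — 5 statements merged into one kernel-verified Lean document; each statement's English description precedes it below -/
import Mathlib

section
/- Let Ω ⊂ ℝ³ be a bounded measurable set and N ≥ 1. The Hartree potential, viewed as the map Ψ ↦ V_H(ρ(Ψ)), is sequentially continuous from L²(Ω; ℂᴺ) to L²(Ω; ℝ): if Ψₙ → Ψ in L²(Ω; ℂᴺ), then V_H(ρ(Ψₙ)) → V_H(ρ(Ψ)) in L²(Ω; ℝ). -/
open MeasureTheory Filter

section HartreeAux

open Set Metric ENNReal

local notation "E3" => EuclideanSpace ℝ (Fin 3)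

lemma hartree_kernel_finite {r : ℝ} (hr : 0 < r) :
    ∫⁻ x in closedBall (0 : E3) r, ENNReal.ofReal (‖x‖⁻¹ ^ 2) ∂volume < ∞ := by
  set ν := volume.restrict (closedBall (0 : E3) r) with hν
  have hnn : 0 ≤ᵐ[ν] fun x : E3 => ‖x‖⁻¹ ^ 2 := .of_forall fun x => by positivity
  have hmble : AEMeasurable (fun x : E3 => ‖x‖⁻¹ ^ 2) ν :=
    (measurable_norm.inv.pow_const 2).aemeasurable
  rw [show (∫⁻ x in closedBall (0 : E3) r, ENNReal.ofReal (‖x‖⁻¹ ^ 2) ∂volume)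
      = ∫⁻ x, ENNReal.ofReal (‖x‖⁻¹ ^ 2) ∂ν from rfl,
    lintegral_eq_lintegral_meas_le ν hnn hmble]
  have hsub : ∀ t ∈ Ioi (1:ℝ),
      {a : E3 | t ≤ ‖a‖⁻¹ ^ 2} ⊆ closedBall 0 (t ^ (-(1/2) : ℝ)) := by
    intro t ht x hx
    have ht0 : (0:ℝ) < t := lt_trans one_pos ht
    have hx0 : x ≠ 0 := by
      rintro rfl
      norm_num at hx
      linarith
    have hnx : 0 < ‖x‖ := norm_pos_iff.mpr hx0
    have h1 : ‖x‖ ^ 2 ≤ t⁻¹ := by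
      have hx' : t ≤ (‖x‖ ^ 2)⁻¹ := by
        have : t ≤ ‖x‖⁻¹ ^ 2 := hx
        rwa [inv_pow] at this
      have := inv_anti₀ ht0 hx'
      rwa [inv_inv] at this
    have h2 : ‖x‖ ≤ Real.sqrt t⁻¹ := by
      have := Real.sqrt_le_sqrt h1
      rwa [Real.sqrt_sq hnx.le] at this
    have h3 : Real.sqrt t⁻¹ = t ^ (-(1/2) : ℝ) := by
      rw [Real.sqrt_eq_rpow, ← Real.rpow_neg_one t, ← Real.rpow_mul ht0.le]
      norm_num
    rw [mem_closedBall_zero_iff]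
    rwa [h3] at h2
  have hmono : ∫⁻ t in Ioi (0:ℝ), ν {a : E3 | t ≤ ‖a‖⁻¹ ^ 2}
      ≤ (∫⁻ t in Ioc (0:ℝ) 1, ν {a : E3 | t ≤ ‖a‖⁻¹ ^ 2})
        + ∫⁻ t in Ioi (1:ℝ), ν {a : E3 | t ≤ ‖a‖⁻¹ ^ 2} :=
    le_trans (lintegral_mono_set Ioi_subset_Ioc_union_Ioi) (lintegral_union_le _ _ _)
  refine lt_of_le_of_lt hmono (ENNReal.add_lt_top.2 ⟨?_, ?_⟩)
  · calc ∫⁻ t in Ioc (0:ℝ) 1, ν {a : E3 | t ≤ ‖a‖⁻¹ ^ 2}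
        ≤ ∫⁻ _ in Ioc (0:ℝ) 1, volume (closedBall (0 : E3) r) := by
          refine setLIntegral_mono' measurableSet_Ioc fun t _ => ?_
          calc ν {a : E3 | t ≤ ‖a‖⁻¹ ^ 2} ≤ ν univ := measure_mono (subset_univ _)
            _ = volume (closedBall (0 : E3) r) := by
                rw [hν, Measure.restrict_apply_univ]
      _ = volume (closedBall (0 : E3) r) * volume (Ioc (0:ℝ) 1) := by
          rw [setLIntegral_const]
      _ < ∞ := ENNReal.mul_lt_top measure_closedBall_lt_top (by simp)
  · calc ∫⁻ t in Ioi (1:ℝ), ν {a : E3 | t ≤ ‖a‖⁻¹ ^ 2}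
        ≤ ∫⁻ t in Ioi (1:ℝ),
            ENNReal.ofReal (t ^ (-(3/2) : ℝ)) * volume (ball (0 : E3) 1) := by
          refine setLIntegral_mono' measurableSet_Ioi fun t ht => ?_
          have ht0 : (0:ℝ) < t := lt_trans one_pos ht
          calc ν {a : E3 | t ≤ ‖a‖⁻¹ ^ 2}
              ≤ volume (closedBall (0 : E3) (t ^ (-(1/2) : ℝ))) := by
                exact le_trans (measure_mono (hsub t ht)) (Measure.restrict_le_self _)
            _ = ENNReal.ofReal ((t ^ (-(1/2) : ℝ)) ^ Module.finrank ℝ E3)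
                  * volume (ball (0 : E3) 1) :=
                Measure.addHaar_closedBall _ _ (Real.rpow_nonneg ht0.le _)
            _ = ENNReal.ofReal (t ^ (-(3/2) : ℝ)) * volume (ball (0 : E3) 1) := by
                congr 1
                rw [finrank_euclideanSpace_fin, ← Real.rpow_natCast (t ^ (-(1/2):ℝ)) 3,
                  ← Real.rpow_mul ht0.le]
                norm_num
      _ = (∫⁻ t in Ioi (1:ℝ), ENNReal.ofReal (t ^ (-(3/2) : ℝ)))
            * volume (ball (0 : E3) 1) := by
          exact lintegral_mul_const _
            (((measurable_id.pow measurable_const).ennreal_ofReal :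
              Measurable fun t : ℝ => ENNReal.ofReal (t ^ (-(3/2) : ℝ))))
      _ < ∞ := ENNReal.mul_lt_top
          ((integrableOn_Ioi_rpow_of_lt (by norm_num) one_pos).setLIntegral_lt_top)
          measure_ball_lt_top

lemma hartree_kernel_bound (Ω : Set E3) {R : ℝ} (hR : 0 < R)
    (hΩR : Ω ⊆ closedBall 0 R) :
    ∃ C : ℝ≥0∞, C ≠ ∞ ∧ ∀ y ∈ Ω,
      ∫⁻ x in Ω, ENNReal.ofReal ‖x - y‖⁻¹ ^ (2:ℝ) ∂volume ≤ C := by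
  refine ⟨∫⁻ z in closedBall (0 : E3) (2*R), ENNReal.ofReal (‖z‖⁻¹ ^ 2) ∂volume,
    (hartree_kernel_finite (by linarith)).ne, fun y hy => ?_⟩
  have hpow : ∀ x : E3, ENNReal.ofReal ‖x - y‖⁻¹ ^ (2:ℝ)
      = ENNReal.ofReal (‖x - y‖⁻¹ ^ 2) := by
    intro x
    rw [show ((2:ℝ)) = ((2:ℕ):ℝ) by norm_num, ENNReal.rpow_natCast,
      ENNReal.ofReal_pow (by positivity)]
  simp_rw [hpow]
  have hsub : Ω ⊆ closedBall y (2*R) := by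
    intro x hx
    rw [mem_closedBall_iff_norm]
    have h1 : ‖x‖ ≤ R := mem_closedBall_zero_iff.1 (hΩR hx)
    have h2 : ‖y‖ ≤ R := mem_closedBall_zero_iff.1 (hΩR hy)
    calc ‖x - y‖ ≤ ‖x‖ + ‖y‖ := norm_sub_le _ _
      _ ≤ 2*R := by linarith
  refine le_trans (lintegral_mono_set hsub) (le_of_eq ?_)
  have hmp : MeasurePreserving (fun z : E3 => z + y) volume volume :=
    measurePreserving_add_right volume y
  have key := hmp.setLIntegral_comp_preimage (measurableSet_closedBall :
      MeasurableSet (closedBall y (2*R)))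
    (((measurable_id.sub measurable_const).norm.inv.pow_const 2).ennreal_ofReal :
      Measurable fun x : E3 => ENNReal.ofReal (‖x - y‖⁻¹ ^ 2))
  simp only [Pi.inv_apply, Pi.sub_apply, id_eq] at key
  rw [← key]
  have hpre : (fun z : E3 => z + y) ⁻¹' closedBall y (2*R) = closedBall 0 (2*R) := by
    ext z
    simp [mem_closedBall_iff_norm]
  rw [hpre]
  refine setLIntegral_congr_fun measurableSet_closedBall (fun z _ => ?_)
  simp

lemma hartree_ofReal_norm_div (a c : ℝ) (hc : 0 ≤ c) :
    ENNReal.ofReal ‖a / c‖ = ENNReal.ofReal ‖a‖ * ENNReal.ofReal c⁻¹ := by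
  rcases eq_or_lt_of_le hc with h | h
  · rw [← h]
    simp
  · rw [norm_div, Real.norm_eq_abs c, abs_of_pos h, div_eq_mul_inv,
      ENNReal.ofReal_mul (norm_nonneg a)]


lemma hartree_key (Ω : Set E3) (hΩm : MeasurableSet Ω)
    (C : ℝ≥0∞) (hC : C ≠ ∞)
    (hK : ∀ y ∈ Ω, ∫⁻ x in Ω, ENNReal.ofReal ‖x - y‖⁻¹ ^ (2:ℝ) ∂volume ≤ C)
    (f g : E3 → ℝ) (hf : Measurable f) (hg : Measurable g)
    (hfI : ∫⁻ y in Ω, ENNReal.ofReal ‖f y‖ ∂volume ≠ ∞)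
    (hgI : ∫⁻ y in Ω, ENNReal.ofReal ‖g y‖ ∂volume ≠ ∞) :
    eLpNorm (fun x => (∫ y in Ω, f y / ‖x - y‖ ∂volume)
        - ∫ y in Ω, g y / ‖x - y‖ ∂volume) 2 (volume.restrict Ω)
      ≤ (∫⁻ y in Ω, ENNReal.ofReal ‖f y - g y‖ ∂volume) * C ^ (1/2 : ℝ) := by
  set μ := volume.restrict Ω with hμdef
  set K : E3 → E3 → ℝ≥0∞ := fun x y => ENNReal.ofReal ‖x - y‖⁻¹ with hKdef
  have hKm : Measurable (fun p : E3 × E3 => K p.1 p.2) :=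
    ((continuous_fst.sub continuous_snd).norm.measurable.inv).ennreal_ofReal
  have hKx : ∀ x, Measurable (K x) := fun x =>
    ((measurable_const.sub measurable_id).norm.inv).ennreal_ofReal
  have hKy : ∀ y, Measurable fun x => K x y := fun y =>
    ((measurable_id.sub measurable_const).norm.inv).ennreal_ofReal
  have hKsymm : ∀ x y, K x y = K y x := fun x y => by
    simp only [hKdef, norm_sub_rev]
  -- square-root helper
  have sqrt_mul_self : ∀ a : ℝ≥0∞, a ^ (1/2:ℝ) * a ^ (1/2:ℝ) = a := fun a => by
    rw [← ENNReal.rpow_add_of_nonneg _ _ (by norm_num) (by norm_num)]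
    norm_num
  have rpow_half_sq : ∀ a : ℝ≥0∞, (a ^ (1/2:ℝ)) ^ (2:ℝ) = a := fun a => by
    rw [← ENNReal.rpow_mul]
    norm_num
  -- Tonelli bound
  have tonelli : ∀ H : E3 → ℝ≥0∞, AEMeasurable H μ →
      ∫⁻ x, (∫⁻ y, H y * K x y ^ (2:ℝ) ∂μ) ∂μ ≤ (∫⁻ y, H y ∂μ) * C := by
    intro H hH
    have hu : AEMeasurable (Function.uncurry fun x y => H y * K x y ^ (2:ℝ)) (μ.prod μ) := by
      have h1 : AEMeasurable (fun p : E3 × E3 => H p.2) (μ.prod μ) := hH.comp_snd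
      exact h1.mul ((hKm.pow measurable_const).aemeasurable)
    rw [lintegral_lintegral_swap hu]
    calc ∫⁻ y, (∫⁻ x, H y * K x y ^ (2:ℝ) ∂μ) ∂μ
        = ∫⁻ y in Ω, H y * ∫⁻ x, K x y ^ (2:ℝ) ∂μ ∂volume :=
          lintegral_congr fun y =>
            lintegral_const_mul _ ((hKy y).pow measurable_const)
      _ ≤ ∫⁻ y in Ω, H y * C ∂volume :=
          setLIntegral_mono' hΩm fun y hy => mul_le_mul_right (hK y hy) _
      _ = (∫⁻ y, H y ∂μ) * C := lintegral_mul_const'' C hH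
  -- Cauchy-Schwarz
  have CS : ∀ H W : E3 → ℝ≥0∞, AEMeasurable H μ → AEMeasurable W μ →
      ∫⁻ y, H y * W y ∂μ
        ≤ (∫⁻ y, H y ∂μ) ^ (1/2:ℝ) * (∫⁻ y, H y * W y ^ (2:ℝ) ∂μ) ^ (1/2:ℝ) := by
    intro H W hH hW
    have h2 : Real.HolderConjugate 2 2 := Real.HolderConjugate.two_two
    have hH2 : AEMeasurable (fun y => H y ^ (1/2:ℝ)) μ :=
      hH.pow (aemeasurable_const : AEMeasurable (fun _ : E3 => (1/2:ℝ)) μ)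
    have key := ENNReal.lintegral_mul_le_Lp_mul_Lq μ h2
      (f := fun y => H y ^ (1/2:ℝ)) (g := fun y => H y ^ (1/2:ℝ) * W y)
      hH2 (hH2.mul hW)
    calc ∫⁻ y, H y * W y ∂μ
        = ∫⁻ y, ((fun y => H y ^ (1/2:ℝ)) * fun y => H y ^ (1/2:ℝ) * W y) y ∂μ := by
          refine lintegral_congr fun y => ?_
          simp only [Pi.mul_apply]
          rw [← mul_assoc, sqrt_mul_self]
      _ ≤ (∫⁻ y, (H y ^ (1/2:ℝ)) ^ (2:ℝ) ∂μ) ^ (1/(2:ℝ))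
            * (∫⁻ y, (H y ^ (1/2:ℝ) * W y) ^ (2:ℝ) ∂μ) ^ (1/(2:ℝ)) := key
      _ = (∫⁻ y, H y ∂μ) ^ (1/2:ℝ) * (∫⁻ y, H y * W y ^ (2:ℝ) ∂μ) ^ (1/2:ℝ) := by
          congr 2
          · exact lintegral_congr fun y => rpow_half_sq _
          · refine lintegral_congr fun y => ?_
            rw [ENNReal.mul_rpow_of_nonneg _ _ (by norm_num : (0:ℝ) ≤ 2),
              rpow_half_sq]
  -- a.e. integrability
  have main_int : ∀ φ : E3 → ℝ, Measurable φ →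
      (∫⁻ y in Ω, ENNReal.ofReal ‖φ y‖ ∂volume ≠ ∞) →
      ∀ᵐ x ∂μ, Integrable (fun y => φ y / ‖x - y‖) μ := by
    intro φ hφ hφI
    set Φ : E3 → ℝ≥0∞ := fun y => ENNReal.ofReal ‖φ y‖ with hΦdef
    have hΦm : Measurable Φ := hφ.norm.ennreal_ofReal
    have hAmble : Measurable fun x => ∫⁻ y, Φ y * K x y ^ (2:ℝ) ∂μ :=
      Measurable.lintegral_prod_right'
        ((hΦm.comp measurable_snd).mul (hKm.pow measurable_const))
    have hA : ∀ᵐ x ∂μ, (∫⁻ y, Φ y * K x y ^ (2:ℝ) ∂μ) < ∞ := by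
      refine ae_lt_top hAmble ?_
      exact (lt_of_le_of_lt (tonelli Φ hΦm.aemeasurable)
        (ENNReal.mul_lt_top (lt_top_iff_ne_top.2 hφI) (lt_top_iff_ne_top.2 hC))).ne
    filter_upwards [hA] with x hAx
    refine ⟨(hφ.div ((measurable_const.sub measurable_id).norm)).aestronglyMeasurable, ?_⟩
    rw [hasFiniteIntegral_iff_norm]
    calc ∫⁻ y, ENNReal.ofReal ‖φ y / ‖x - y‖‖ ∂μ
        = ∫⁻ y, Φ y * K x y ∂μ :=
          lintegral_congr fun y => hartree_ofReal_norm_div _ _ (norm_nonneg _)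
      _ ≤ (∫⁻ y, Φ y ∂μ) ^ (1/2:ℝ) * (∫⁻ y, Φ y * K x y ^ (2:ℝ) ∂μ) ^ (1/2:ℝ) :=
          CS Φ (K x) hΦm.aemeasurable (hKx x).aemeasurable
      _ < ∞ := ENNReal.mul_lt_top
          (ENNReal.rpow_lt_top_of_nonneg (by norm_num) hφI)
          (ENNReal.rpow_lt_top_of_nonneg (by norm_num) hAx.ne)
  have hf_int := main_int f hf hfI
  have hg_int := main_int g hg hgI
  set D : E3 → ℝ≥0∞ := fun y => ENNReal.ofReal ‖f y - g y‖ with hDdef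
  have hDm : Measurable D := (hf.sub hg).norm.ennreal_ofReal
  set δ := ∫⁻ y, D y ∂μ with hδdef
  have hδfin : δ ≠ ∞ := by
    have hle : ∀ y, D y ≤ ENNReal.ofReal ‖f y‖ + ENNReal.ofReal ‖g y‖ := fun y => by
      rw [← ENNReal.ofReal_add (norm_nonneg _) (norm_nonneg _)]
      exact ENNReal.ofReal_le_ofReal (norm_sub_le _ _)
    refine ne_top_of_le_ne_top ?_ (lintegral_mono hle)
    rw [lintegral_add_left hf.norm.ennreal_ofReal]
    exact (ENNReal.add_lt_top.2 ⟨lt_top_iff_ne_top.2 hfI, lt_top_iff_ne_top.2 hgI⟩).ne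
  -- pointwise bound
  have hptwise : ∀ᵐ x ∂μ,
      ENNReal.ofReal ‖(∫ y, f y / ‖x - y‖ ∂μ) - ∫ y, g y / ‖x - y‖ ∂μ‖ ^ (2:ℝ)
        ≤ δ * ∫⁻ y, D y * K x y ^ (2:ℝ) ∂μ := by
    filter_upwards [hf_int, hg_int] with x hfx hgx
    have hsubint : (∫ y, f y / ‖x - y‖ ∂μ) - ∫ y, g y / ‖x - y‖ ∂μ
        = ∫ y, (f y - g y) / ‖x - y‖ ∂μ := by
      rw [← integral_sub hfx hgx]
      exact integral_congr_ae (.of_forall fun y => (sub_div _ _ _).symm)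
    rw [hsubint]
    have h1 : ENNReal.ofReal ‖∫ y, (f y - g y) / ‖x - y‖ ∂μ‖
        ≤ ∫⁻ y, D y * K x y ∂μ := by
      rw [ofReal_norm]
      refine le_trans (enorm_integral_le_lintegral_enorm _) (le_of_eq ?_)
      refine lintegral_congr fun y => ?_
      rw [← ofReal_norm, hartree_ofReal_norm_div _ _ (norm_nonneg _)]
    calc ENNReal.ofReal ‖∫ y, (f y - g y) / ‖x - y‖ ∂μ‖ ^ (2:ℝ)
        ≤ (∫⁻ y, D y * K x y ∂μ) ^ (2:ℝ) :=
          ENNReal.rpow_le_rpow h1 (by norm_num)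
      _ ≤ (δ ^ (1/2:ℝ) * (∫⁻ y, D y * K x y ^ (2:ℝ) ∂μ) ^ (1/2:ℝ)) ^ (2:ℝ) :=
          ENNReal.rpow_le_rpow
            (CS D (K x) hDm.aemeasurable (hKx x).aemeasurable) (by norm_num)
      _ = δ * ∫⁻ y, D y * K x y ^ (2:ℝ) ∂μ := by
          rw [ENNReal.mul_rpow_of_nonneg _ _ (by norm_num : (0:ℝ) ≤ 2),
            rpow_half_sq, rpow_half_sq]
  -- conclude
  rw [eLpNorm_eq_lintegral_rpow_enorm_toReal two_ne_zero ENNReal.ofNat_ne_top]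
  have htr : ((2:ℝ≥0∞).toReal) = (2:ℝ) := by norm_num
  rw [htr]
  have hbound : (∫⁻ x, (‖(∫ y, f y / ‖x - y‖ ∂μ) - ∫ y, g y / ‖x - y‖ ∂μ‖₊ : ℝ≥0∞) ^ (2:ℝ) ∂μ)
      ≤ δ * (δ * C) := by
    calc (∫⁻ x, (‖(∫ y, f y / ‖x - y‖ ∂μ) - ∫ y, g y / ‖x - y‖ ∂μ‖₊ : ℝ≥0∞) ^ (2:ℝ) ∂μ)
        = ∫⁻ x, ENNReal.ofReal ‖(∫ y, f y / ‖x - y‖ ∂μ) - ∫ y, g y / ‖x - y‖ ∂μ‖ ^ (2:ℝ) ∂μ := by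
          refine lintegral_congr fun x => ?_
          rw [ofReal_norm, enorm_eq_nnnorm]
      _ ≤ ∫⁻ x, δ * ∫⁻ y, D y * K x y ^ (2:ℝ) ∂μ ∂μ := lintegral_mono_ae hptwise
      _ = δ * ∫⁻ x, ∫⁻ y, D y * K x y ^ (2:ℝ) ∂μ ∂μ := lintegral_const_mul' δ _ hδfin
      _ ≤ δ * ((∫⁻ y, D y ∂μ) * C) := mul_le_mul_right (tonelli D hDm.aemeasurable) δ
      _ = δ * (δ * C) := by rw [← hδdef]
  calc (∫⁻ x, (‖(∫ y, f y / ‖x - y‖ ∂μ) - ∫ y, g y / ‖x - y‖ ∂μ‖₊ : ℝ≥0∞) ^ (2:ℝ) ∂μ) ^ (1/(2:ℝ))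
      ≤ (δ * (δ * C)) ^ (1/(2:ℝ)) := ENNReal.rpow_le_rpow hbound (by norm_num)
    _ = δ * C ^ (1/2:ℝ) := by
        rw [← mul_assoc, ENNReal.mul_rpow_of_nonneg _ _ (by norm_num : (0:ℝ) ≤ 1/2),
          ENNReal.mul_rpow_of_nonneg _ _ (by norm_num : (0:ℝ) ≤ 1/2), sqrt_mul_self]

end HartreeAux

section HartreeMain

open Set Metric ENNReal

local notation "E3" => EuclideanSpace ℝ (Fin 3)

/-- For a bounded measurable set `Ω ⊆ ℝ³`, the Hartree potential map
`Ψ ↦ V_H(ρ(Ψ))`, where `ρ(Ψ)(x) = Σⱼ |ψⱼ(x)|²` and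
`V_H(ρ)(x) = ∫_Ω ρ(y)/‖x−y‖ dy`, is sequentially continuous from `L²(Ω; ℂᴺ)`
to `L²(Ω; ℝ)`: if `Ψₘ → Ψ` in `L²(Ω; ℂᴺ)` then `V_H(ρ(Ψₘ)) → V_H(ρ(Ψ))` in `L²(Ω; ℝ)`. -/
theorem hartree_continuous_L2_to_L2
    (Ω : Set (EuclideanSpace ℝ (Fin 3)))
    (hΩm : MeasurableSet Ω) (hΩb : Bornology.IsBounded Ω)
    (N : ℕ) (hN : 1 ≤ N)
    (Ψ : ℕ → EuclideanSpace ℝ (Fin 3) → EuclideanSpace ℂ (Fin N))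
    (Ψlim : EuclideanSpace ℝ (Fin 3) → EuclideanSpace ℂ (Fin N))
    (hΨ : ∀ m, MemLp (Ψ m) 2 (volume.restrict Ω))
    (hΨlim : MemLp Ψlim 2 (volume.restrict Ω))
    (hconv : Tendsto (fun m => eLpNorm (Ψ m - Ψlim) 2 (volume.restrict Ω)) atTop (nhds 0)) :
    Tendsto
      (fun m => eLpNorm
        (fun x => (∫ y in Ω, (∑ j, ‖Ψ m y j‖ ^ 2) / ‖x - y‖ ∂volume)
                    - ∫ y in Ω, (∑ j, ‖Ψlim y j‖ ^ 2) / ‖x - y‖ ∂volume)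
        2 (volume.restrict Ω))
      atTop (nhds 0) := by
  set μ := volume.restrict Ω with hμdef
  have hsum : ∀ v : EuclideanSpace ℂ (Fin N), (∑ j, ‖v j‖ ^ 2) = ‖v‖ ^ 2 := fun v => by
    rw [EuclideanSpace.norm_eq, Real.sq_sqrt (Finset.sum_nonneg fun j _ => sq_nonneg _)]
  simp only [hsum]
  -- measurable representatives of the densities
  have hφm : ∀ m, AEMeasurable (fun y => ‖Ψ m y‖ ^ 2) μ := fun m =>
    ((hΨ m).1.norm.aemeasurable).pow_const 2
  have hφl : AEMeasurable (fun y => ‖Ψlim y‖ ^ 2) μ :=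
    (hΨlim.1.norm.aemeasurable).pow_const 2
  set ψ : ℕ → E3 → ℝ := fun m => (hφm m).mk _ with hψdef
  set ψl : E3 → ℝ := hφl.mk _ with hψldef
  have hψmeas : ∀ m, Measurable (ψ m) := fun m => (hφm m).measurable_mk
  have hψlmeas : Measurable ψl := hφl.measurable_mk
  have hψae : ∀ m, (fun y => ‖Ψ m y‖ ^ 2) =ᵐ[μ] ψ m := fun m => (hφm m).ae_eq_mk
  have hψlae : (fun y => ‖Ψlim y‖ ^ 2) =ᵐ[μ] ψl := hφl.ae_eq_mk
  -- L¹ finiteness of densities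
  have hsqI : ∀ Θ : EuclideanSpace ℝ (Fin 3) → EuclideanSpace ℂ (Fin N),
      MemLp Θ 2 μ → ∫⁻ y, ENNReal.ofReal ‖‖Θ y‖ ^ 2‖ ∂μ ≠ ∞ := by
    intro Θ hΘ
    have h2 := (hΘ.integrable_norm_rpow two_ne_zero ENNReal.ofNat_ne_top).hasFiniteIntegral
    rw [hasFiniteIntegral_iff_norm] at h2
    refine ne_top_of_le_ne_top h2.ne (le_of_eq (lintegral_congr fun y => ?_))
    congr 1
    rw [ENNReal.toReal_ofNat, show ‖Θ y‖ ^ (2:ℝ) = ‖Θ y‖ ^ (2:ℕ) by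
      rw [← Real.rpow_natCast]; norm_num]
  have hψI : ∀ m, ∫⁻ y, ENNReal.ofReal ‖ψ m y‖ ∂μ ≠ ∞ := fun m => by
    have heq : ∫⁻ y, ENNReal.ofReal ‖ψ m y‖ ∂μ
        = ∫⁻ y, ENNReal.ofReal ‖‖Ψ m y‖ ^ 2‖ ∂μ := by
      refine lintegral_congr_ae ?_
      filter_upwards [hψae m] with y hy
      rw [← hy]
    rw [heq]
    exact hsqI (Ψ m) (hΨ m)
  have hψlI : ∫⁻ y, ENNReal.ofReal ‖ψl y‖ ∂μ ≠ ∞ := by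
    have heq : ∫⁻ y, ENNReal.ofReal ‖ψl y‖ ∂μ
        = ∫⁻ y, ENNReal.ofReal ‖‖Ψlim y‖ ^ 2‖ ∂μ := by
      refine lintegral_congr_ae ?_
      filter_upwards [hψlae] with y hy
      rw [← hy]
    rw [heq]
    exact hsqI Ψlim hΨlim
  -- kernel constant
  obtain ⟨R, hR, hΩR⟩ := hΩb.subset_closedBall_lt 0 0
  obtain ⟨C, hC, hK⟩ := hartree_kernel_bound Ω hR hΩR
  -- the L¹ distance of the densities
  set δ : ℕ → ℝ≥0∞ := fun m => ∫⁻ y, ENNReal.ofReal ‖ψ m y - ψl y‖ ∂μ with hδdef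
  -- convergence of δ to 0
  set ε : ℕ → ℝ≥0∞ := fun m => eLpNorm (Ψ m - Ψlim) 2 μ with hεdef
  set KK : ℝ≥0∞ := eLpNorm Ψlim 2 μ with hKKdef
  have hKKfin : KK ≠ ∞ := hΨlim.2.ne
  have heLp_eq : ∀ Θ : EuclideanSpace ℝ (Fin 3) → EuclideanSpace ℂ (Fin N),
      (∫⁻ y, ENNReal.ofReal ‖Θ y‖ ^ (2:ℝ) ∂μ) ^ (1/(2:ℝ)) = eLpNorm Θ 2 μ := by
    intro Θ
    rw [eLpNorm_eq_lintegral_rpow_enorm_toReal two_ne_zero ENNReal.ofNat_ne_top,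
      ENNReal.toReal_ofNat]
    simp_rw [ofReal_norm]
  have hδ_le : ∀ m, δ m ≤ ε m * (eLpNorm (Ψ m) 2 μ + KK) := by
    intro m
    have hδeq : δ m = ∫⁻ y, ENNReal.ofReal ‖‖Ψ m y‖^2 - ‖Ψlim y‖^2‖ ∂μ := by
      refine lintegral_congr_ae ?_
      filter_upwards [hψae m, hψlae] with y h1 h2
      rw [← h1, ← h2]
    rw [hδeq]
    have hpt : ∀ y, ENNReal.ofReal ‖‖Ψ m y‖^2 - ‖Ψlim y‖^2‖
        ≤ ENNReal.ofReal ‖(Ψ m - Ψlim) y‖ * ENNReal.ofReal (‖Ψ m y‖ + ‖Ψlim y‖) := by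
      intro y
      rw [← ENNReal.ofReal_mul (norm_nonneg _)]
      refine ENNReal.ofReal_le_ofReal ?_
      have habs : ‖‖Ψ m y‖^2 - ‖Ψlim y‖^2‖
          = |‖Ψ m y‖ - ‖Ψlim y‖| * (‖Ψ m y‖ + ‖Ψlim y‖) := by
        rw [Real.norm_eq_abs, sq_sub_sq, abs_mul,
          abs_of_nonneg (by positivity : (0:ℝ) ≤ ‖Ψ m y‖ + ‖Ψlim y‖), mul_comm]
      rw [habs]
      refine mul_le_mul_of_nonneg_right ?_ (by positivity)
      have := abs_norm_sub_norm_le (Ψ m y) (Ψlim y)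
      simpa using this
    have h2 : Real.HolderConjugate 2 2 := Real.HolderConjugate.two_two
    have hf' : AEMeasurable (fun y => ENNReal.ofReal ‖(Ψ m - Ψlim) y‖) μ :=
      ((hΨ m).1.sub hΨlim.1).norm.aemeasurable.ennreal_ofReal
    have hg' : AEMeasurable (fun y => ENNReal.ofReal (‖Ψ m y‖ + ‖Ψlim y‖)) μ :=
      ((hΨ m).1.norm.aemeasurable.add hΨlim.1.norm.aemeasurable).ennreal_ofReal
    calc ∫⁻ y, ENNReal.ofReal ‖‖Ψ m y‖^2 - ‖Ψlim y‖^2‖ ∂μ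
        ≤ ∫⁻ y, ENNReal.ofReal ‖(Ψ m - Ψlim) y‖
            * ENNReal.ofReal (‖Ψ m y‖ + ‖Ψlim y‖) ∂μ := lintegral_mono hpt
      _ ≤ (∫⁻ y, ENNReal.ofReal ‖(Ψ m - Ψlim) y‖ ^ (2:ℝ) ∂μ) ^ (1/(2:ℝ))
            * (∫⁻ y, ENNReal.ofReal (‖Ψ m y‖ + ‖Ψlim y‖) ^ (2:ℝ) ∂μ) ^ (1/(2:ℝ)) :=
          ENNReal.lintegral_mul_le_Lp_mul_Lq μ h2 hf' hg'
      _ ≤ ε m * (eLpNorm (Ψ m) 2 μ + KK) := by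
          refine mul_le_mul ?_ ?_ zero_le zero_le
          · rw [heLp_eq]
          · have hsplit : ∀ y : E3, ENNReal.ofReal (‖Ψ m y‖ + ‖Ψlim y‖)
                = ENNReal.ofReal ‖Ψ m y‖ + ENNReal.ofReal ‖Ψlim y‖ := fun y =>
              ENNReal.ofReal_add (norm_nonneg _) (norm_nonneg _)
            simp_rw [hsplit]
            refine le_trans (ENNReal.lintegral_Lp_add_le
              ((hΨ m).1.norm.aemeasurable.ennreal_ofReal)
              (hΨlim.1.norm.aemeasurable.ennreal_ofReal) one_le_two) ?_
            rw [heLp_eq, heLp_eq]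
  have heventually : ∀ᶠ m in atTop, δ m ≤ ε m * (1 + (KK + KK)) := by
    filter_upwards [hconv.eventually_lt_const (by norm_num : (0:ℝ≥0∞) < 1)] with m hm
    refine le_trans (hδ_le m) (mul_le_mul_right ?_ _)
    have hΨmle : eLpNorm (Ψ m) 2 μ ≤ ε m + KK := by
      have hrw : Ψ m = (Ψ m - Ψlim) + Ψlim := by funext y; simp
      calc eLpNorm (Ψ m) 2 μ = eLpNorm ((Ψ m - Ψlim) + Ψlim) 2 μ := by rw [← hrw]
        _ ≤ ε m + KK := eLpNorm_add_le ((hΨ m).1.sub hΨlim.1) hΨlim.1 one_le_two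
    calc eLpNorm (Ψ m) 2 μ + KK ≤ (ε m + KK) + KK := add_le_add_left hΨmle _
      _ ≤ (1 + KK) + KK := add_le_add_left (add_le_add_left hm.le _) _
      _ = 1 + (KK + KK) := by rw [add_assoc]
  have hMfin : (1 + (KK + KK)) ≠ ∞ := by
    simp [ENNReal.add_ne_top, hKKfin]
  have hδ0 : Tendsto δ atTop (nhds 0) := by
    have hub : Tendsto (fun m => ε m * (1 + (KK + KK))) atTop (nhds 0) := by
      have := ENNReal.Tendsto.mul_const hconv (Or.inr hMfin)
      simpa using this
    exact tendsto_of_tendsto_of_tendsto_of_le_of_le' tendsto_const_nhds hub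
      (Eventually.of_forall fun m => zero_le) heventually
  -- final squeeze
  have hCfin : C ^ (1/2:ℝ) ≠ ∞ := by
    exact (ENNReal.rpow_lt_top_of_nonneg (by norm_num) hC).ne
  have hub2 : Tendsto (fun m => δ m * C ^ (1/2:ℝ)) atTop (nhds 0) := by
    have := ENNReal.Tendsto.mul_const hδ0 (Or.inr hCfin)
    simpa using this
  refine tendsto_of_tendsto_of_tendsto_of_le_of_le' tendsto_const_nhds hub2
    (Eventually.of_forall fun m => zero_le) (Eventually.of_forall fun m => ?_)
  -- per-m bound
  have hfn_eq : (fun x => (∫ y in Ω, ‖Ψ m y‖^2 / ‖x - y‖ ∂volume)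
        - ∫ y in Ω, ‖Ψlim y‖^2 / ‖x - y‖ ∂volume)
      = fun x => (∫ y in Ω, ψ m y / ‖x - y‖ ∂volume)
        - ∫ y in Ω, ψl y / ‖x - y‖ ∂volume := by
    funext x
    congr 1
    · refine integral_congr_ae ?_
      filter_upwards [hψae m] with y hy
      rw [hy]
    · refine integral_congr_ae ?_
      filter_upwards [hψlae] with y hy
      rw [hy]
  calc eLpNorm (fun x => (∫ y in Ω, ‖Ψ m y‖^2 / ‖x - y‖ ∂volume)
        - ∫ y in Ω, ‖Ψlim y‖^2 / ‖x - y‖ ∂volume) 2 μ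
      = eLpNorm (fun x => (∫ y in Ω, ψ m y / ‖x - y‖ ∂volume)
        - ∫ y in Ω, ψl y / ‖x - y‖ ∂volume) 2 μ := by rw [hfn_eq]
    _ ≤ δ m * C ^ (1/2:ℝ) :=
      hartree_key Ω hΩm C hC hK (ψ m) ψl (hψmeas m) hψlmeas (hψI m) hψlI

end HartreeMain
end

section
/- Let Ω ⊂ ℝ³ be a bounded measurable set and N ≥ 1. Then there exists a constant C > 0, depending only on N and Ω, such that: for every Λ = (λ₁, …, λ_N) ∈ L^∞(Ω; ℂᴺ) and all Ψ = (ψ₁, …, ψ_N), Φ = (φ₁, …, φ_N) ∈ L²(Ω; ℂᴺ), the expression D_H(Ψ, Φ) := Σ_{k=1}^N ∫_Ω ∫_Ω (Σ_{j=1}^N (ψ_j(y) conj(λ_j(y)) + conj(ψ_j(y)) λ_j(y)))/‖x − y‖ · λ_k(x) conj(φ_k(x)) dy dx is well defined and satisfies |D_H(Ψ, Φ)| ≤ C ‖Λ‖²_{L^∞(Ω)} ‖Ψ‖_{L²(Ω)} ‖Φ‖_{L²(Ω)}. -/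
open MeasureTheory
open scoped ENNReal NNReal

open Set Metric

local notation "E3" => EuclideanSpace ℝ (Fin 3)

lemma DH_ker_finite (Ω : Set E3) (hΩb : Bornology.IsBounded Ω) :
    ∃ CK : ℝ≥0∞, CK ≠ ⊤ ∧ ∀ x : E3,
      ∫⁻ y in Ω, ENNReal.ofReal (‖x - y‖⁻¹ ^ 2) ∂volume ≤ CK := by
  set J : ℝ≥0∞ := ∫⁻ t in Ioi (1:ℝ), ENNReal.ofReal (t ^ (-(3:ℝ)/2)) with hJ
  have hJfin : J < ⊤ := by
    refine IntegrableOn.setLIntegral_lt_top ?_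
    exact integrableOn_Ioi_rpow_of_lt (by norm_num) one_pos
  refine ⟨volume Ω + J * volume (ball (0:E3) 1), ?_, ?_⟩
  · exact ENNReal.add_ne_top.2 ⟨hΩb.measure_lt_top.ne,
      (ENNReal.mul_lt_top hJfin measure_ball_lt_top).ne⟩
  intro x
  set μ := volume.restrict Ω with hμ
  have hnn : 0 ≤ᵐ[μ] fun y : E3 => ‖x - y‖⁻¹ ^ 2 :=
    Filter.Eventually.of_forall fun y => by positivity
  have hmeas : AEMeasurable (fun y : E3 => ‖x - y‖⁻¹ ^ 2) μ := by
    fun_prop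
  rw [show (∫⁻ y in Ω, ENNReal.ofReal (‖x - y‖⁻¹ ^ 2) ∂volume)
      = ∫⁻ y, ENNReal.ofReal (‖x - y‖⁻¹ ^ 2) ∂μ from rfl,
    lintegral_eq_lintegral_meas_le μ hnn hmeas]
  have key : ∀ t : ℝ, 0 < t → μ {a : E3 | t ≤ ‖x - a‖⁻¹ ^ 2}
      ≤ ENNReal.ofReal (t ^ (-(3:ℝ)/2)) * volume (ball (0:E3) 1) := by
    intro t ht
    have hsub : {a : E3 | t ≤ ‖x - a‖⁻¹ ^ 2} ⊆ closedBall x (Real.sqrt t⁻¹) := by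
      intro a ha
      simp only [mem_setOf_eq] at ha
      have hb : ‖x - a‖ ^ 2 ≤ t⁻¹ := by
        rcases eq_or_lt_of_le (norm_nonneg (x - a)) with h0 | h0
        · rw [← h0]; simpa using (inv_nonneg.2 ht.le)
        · have h1 : ‖x - a‖⁻¹ ^ 2 = (‖x - a‖ ^ 2)⁻¹ := by
            rw [inv_pow]
          rw [h1] at ha
          have h2 : (0:ℝ) < ‖x - a‖ ^ 2 := by positivity
          calc ‖x - a‖ ^ 2 = ((‖x - a‖ ^ 2)⁻¹)⁻¹ := by rw [inv_inv]
            _ ≤ t⁻¹ := by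
              exact inv_anti₀ ht ha
      have : dist a x ≤ Real.sqrt t⁻¹ := by
        rw [dist_eq_norm, ← norm_neg, neg_sub]
        exact Real.le_sqrt_of_sq_le hb
      exact mem_closedBall.2 this
    calc μ {a : E3 | t ≤ ‖x - a‖⁻¹ ^ 2} ≤ volume (closedBall x (Real.sqrt t⁻¹)) :=
        le_trans (measure_mono hsub) (Measure.restrict_le_self _)
      _ = ENNReal.ofReal (Real.sqrt t⁻¹ ^ Module.finrank ℝ E3) * volume (ball (0:E3) 1) :=
        volume.addHaar_closedBall x (Real.sqrt_nonneg _)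
      _ = ENNReal.ofReal (t ^ (-(3:ℝ)/2)) * volume (ball (0:E3) 1) := by
        congr 2
        rw [finrank_euclideanSpace_fin]
        rw [Real.sqrt_eq_rpow, ← Real.rpow_natCast (t⁻¹ ^ (1/2 : ℝ)) 3,
          ← Real.rpow_mul (by positivity), ← Real.rpow_neg_one t,
          ← Real.rpow_mul ht.le]
        norm_num
  calc ∫⁻ t in Ioi (0:ℝ), μ {a : E3 | t ≤ ‖x - a‖⁻¹ ^ 2}
      ≤ ∫⁻ t in Ioc (0:ℝ) 1 ∪ Ioi 1, μ {a : E3 | t ≤ ‖x - a‖⁻¹ ^ 2} :=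
        lintegral_mono_set Ioi_subset_Ioc_union_Ioi
    _ ≤ (∫⁻ t in Ioc (0:ℝ) 1, μ {a : E3 | t ≤ ‖x - a‖⁻¹ ^ 2})
        + ∫⁻ t in Ioi (1:ℝ), μ {a : E3 | t ≤ ‖x - a‖⁻¹ ^ 2} := lintegral_union_le _ _ _
    _ ≤ volume Ω + J * volume (ball (0:E3) 1) := by
      gcongr
      · calc ∫⁻ t in Ioc (0:ℝ) 1, μ {a : E3 | t ≤ ‖x - a‖⁻¹ ^ 2}
            ≤ ∫⁻ _ in Ioc (0:ℝ) 1, volume Ω := by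
              refine lintegral_mono fun t => ?_
              exact le_trans (measure_mono (subset_univ _))
                (by rw [Measure.restrict_apply_univ])
          _ = volume Ω * volume (Ioc (0:ℝ) 1) := setLIntegral_const _ _
          _ = volume Ω := by simp [Real.volume_Ioc]
      · calc ∫⁻ t in Ioi (1:ℝ), μ {a : E3 | t ≤ ‖x - a‖⁻¹ ^ 2}
            ≤ ∫⁻ t in Ioi (1:ℝ), ENNReal.ofReal (t ^ (-(3:ℝ)/2)) * volume (ball (0:E3) 1) := by
              refine setLIntegral_mono' measurableSet_Ioi fun t ht => key t (lt_trans one_pos ht)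
          _ = J * volume (ball (0:E3) 1) := by
            rw [lintegral_mul_const' _ _ measure_ball_lt_top.ne]

lemma DH_euclid_apply_le {n : ℕ} (x : EuclideanSpace ℂ (Fin n)) (j : Fin n) : ‖x j‖ ≤ ‖x‖ := by
  rw [EuclideanSpace.norm_eq]
  exact Real.le_sqrt_of_sq_le (Finset.single_le_sum
    (f := fun i => ‖x i‖ ^ 2) (fun i _ => by positivity) (Finset.mem_univ j))

lemma DH_sq_integrable {α : Type*} [MeasurableSpace α] {μ : Measure α}
    (h : α → ℂ) (hh : MemLp h 2 μ) : Integrable (fun a => ‖h a‖ ^ 2) μ := by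
  have h0 := hh.integrable_norm_rpow two_ne_zero ENNReal.ofNat_ne_top
  have h2 : (fun a => ‖h a‖ ^ ((2:ℝ≥0∞)).toReal) = fun a => ‖h a‖ ^ 2 := by
    funext a
    rw [show ((2:ℝ≥0∞)).toReal = ((2:ℕ):ℝ) by norm_num, Real.rpow_natCast]
  rwa [h2] at h0

lemma DH_CS {α : Type*} [MeasurableSpace α] (μ : Measure α) [IsFiniteMeasure μ]
    (h : α → ℂ) (hh : MemLp h 2 μ) :
    ∫ a, ‖h a‖ ∂μ ≤ Real.sqrt (μ Set.univ).toReal * Real.sqrt (∫ a, ‖h a‖ ^ 2 ∂μ) := by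
  have hint : Integrable h μ := hh.integrable one_le_two
  have hsq : Integrable (fun a => ‖h a‖ ^ 2) μ := by
    have h0 := hh.integrable_norm_rpow two_ne_zero ENNReal.ofNat_ne_top
    have h2 : (fun a => ‖h a‖ ^ ((2:ℝ≥0∞)).toReal) = fun a => ‖h a‖ ^ 2 := by
      funext a
      rw [show ((2:ℝ≥0∞)).toReal = ((2:ℕ):ℝ) by norm_num, Real.rpow_natCast]
    rwa [h2] at h0
  have hlin : ∫⁻ a, (‖h a‖₊ : ℝ≥0∞) ^ (2:ℝ) ∂μ = ENNReal.ofReal (∫ a, ‖h a‖ ^ 2 ∂μ) := by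
    rw [ofReal_integral_eq_lintegral_ofReal hsq
      (Filter.Eventually.of_forall fun a => by positivity)]
    congr 1
    funext a
    rw [show (2:ℝ) = ((2:ℕ):ℝ) by norm_num, ENNReal.rpow_natCast,
      ← enorm_eq_nnnorm, ← ofReal_norm, ← ENNReal.ofReal_pow (norm_nonneg _)]
  have hcs : ∫⁻ a, (‖h a‖₊ : ℝ≥0∞) ∂μ
      ≤ (μ Set.univ) ^ ((1:ℝ)/2) * (ENNReal.ofReal (∫ a, ‖h a‖ ^ 2 ∂μ)) ^ ((1:ℝ)/2) := by
    have h22 : Real.HolderConjugate 2 2 := Real.HolderConjugate.two_two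
    have := ENNReal.lintegral_mul_le_Lp_mul_Lq μ h22
      (f := fun _ => (1:ℝ≥0∞)) (g := fun a => (‖h a‖₊ : ℝ≥0∞))
      aemeasurable_const hint.aestronglyMeasurable.enorm
    simp only [one_mul, ENNReal.one_rpow, lintegral_const, one_mul] at this
    rw [hlin] at this
    simpa using this
  have hrhs_ne : (μ Set.univ) ^ ((1:ℝ)/2) * (ENNReal.ofReal (∫ a, ‖h a‖ ^ 2 ∂μ)) ^ ((1:ℝ)/2) ≠ ⊤ :=
    ENNReal.mul_ne_top (by simp [ENNReal.rpow_eq_top_iff, measure_ne_top])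
      (by simp [ENNReal.rpow_eq_top_iff])
  calc ∫ a, ‖h a‖ ∂μ = (∫⁻ a, (‖h a‖₊ : ℝ≥0∞) ∂μ).toReal :=
        integral_norm_eq_lintegral_enorm hint.aestronglyMeasurable
    _ ≤ ((μ Set.univ) ^ ((1:ℝ)/2) * (ENNReal.ofReal (∫ a, ‖h a‖ ^ 2 ∂μ)) ^ ((1:ℝ)/2)).toReal :=
        ENNReal.toReal_mono hrhs_ne hcs
    _ = Real.sqrt (μ Set.univ).toReal * Real.sqrt (∫ a, ‖h a‖ ^ 2 ∂μ) := by
        rw [ENNReal.toReal_mul, ← ENNReal.toReal_rpow, ← ENNReal.toReal_rpow,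
          ENNReal.toReal_ofReal (integral_nonneg fun a => by positivity),
          Real.sqrt_eq_rpow, Real.sqrt_eq_rpow]

/-- Bound on the Hartree bilinear form `D_H` of the adjoint Kohn–Sham equations.
For a bounded measurable set `Ω ⊆ ℝ³` there is `C > 0`, depending only on `N` and `Ω`,
such that for all `Λ ∈ L^∞(Ω; ℂᴺ)` (with `‖Λ‖_{L^∞} = max_k ess sup |λₖ|`) and all
`Ψ, Φ ∈ L²(Ω; ℂᴺ)`, the expression
`D_H(Ψ, Φ) = Σₖ ∫_Ω (∫_Ω Σⱼ (ψⱼ(y) conj λⱼ(y) + conj ψⱼ(y) λⱼ(y)) / ‖x−y‖ dy) λₖ(x) conj φₖ(x) dx`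
is well defined and `|D_H(Ψ, Φ)| ≤ C ‖Λ‖²_{L^∞} ‖Ψ‖_{L²(Ω)} ‖Φ‖_{L²(Ω)}`. -/
theorem DH_bound
    (Ω : Set (EuclideanSpace ℝ (Fin 3)))
    (hΩm : MeasurableSet Ω) (hΩb : Bornology.IsBounded Ω)
    (N : ℕ) (hN : 1 ≤ N) :
    ∃ C > (0 : ℝ), ∀ Λ Ψ Φ : EuclideanSpace ℝ (Fin 3) → EuclideanSpace ℂ (Fin N),
      StronglyMeasurable Λ →
      (⨆ k : Fin N, essSup (fun x => (‖Λ x k‖₊ : ℝ≥0∞)) (volume.restrict Ω)) ≠ ⊤ →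
      MemLp Ψ 2 (volume.restrict Ω) → MemLp Φ 2 (volume.restrict Ω) →
      (∀ k : Fin N, IntegrableOn
          (fun x => (∫ y in Ω,
                (∑ j, (Ψ y j * (starRingEnd ℂ) (Λ y j) + (starRingEnd ℂ) (Ψ y j) * Λ y j))
                  / (‖x - y‖ : ℂ) ∂volume)
              * Λ x k * (starRingEnd ℂ) (Φ x k)) Ω volume)
      ∧ ‖∑ k : Fin N, ∫ x in Ω,
            (∫ y in Ω,
                (∑ j, (Ψ y j * (starRingEnd ℂ) (Λ y j) + (starRingEnd ℂ) (Ψ y j) * Λ y j))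
                  / (‖x - y‖ : ℂ) ∂volume)
              * Λ x k * (starRingEnd ℂ) (Φ x k) ∂volume‖
          ≤ C * ((⨆ k : Fin N, essSup (fun x => (‖Λ x k‖₊ : ℝ≥0∞))
                    (volume.restrict Ω)).toReal) ^ 2
              * Real.sqrt (∫ x in Ω, ∑ j, ‖Ψ x j‖ ^ 2 ∂volume)
              * Real.sqrt (∫ x in Ω, ∑ j, ‖Φ x j‖ ^ 2 ∂volume) := by
  obtain ⟨CK, hCKne, hK⟩ := DH_ker_finite Ω hΩb
  refine ⟨2 * N * Real.sqrt N * Real.sqrt CK.toReal * Real.sqrt (volume Ω).toReal + 1,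
    by positivity, ?_⟩
  intro Λ Ψ Φ hΛ hL hΨ hΦ
  set μ := volume.restrict Ω with hμdef
  haveI : IsFiniteMeasure μ := ⟨by rw [Measure.restrict_apply_univ]; exact hΩb.measure_lt_top⟩
  set L := (⨆ k : Fin N, essSup (fun x => (‖Λ x k‖₊ : ℝ≥0∞)) μ) with hLdef
  set ℓ := L.toReal with hldef
  have hl0 : 0 ≤ ℓ := ENNReal.toReal_nonneg
  -- a.e. bound on Λ
  have hΛae : ∀ᵐ x ∂μ, ∀ k, ‖Λ x k‖ ≤ ℓ := by
    rw [ae_all_iff]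
    intro k
    filter_upwards [ENNReal.ae_le_essSup (μ := μ) (fun x => (‖Λ x k‖₊ : ℝ≥0∞))] with x hx
    have h2 : (‖Λ x k‖₊ : ℝ≥0∞) ≤ L :=
      le_trans hx (le_iSup (fun k => essSup (fun x => (‖Λ x k‖₊ : ℝ≥0∞)) μ) k)
    have := ENNReal.toReal_mono hL h2
    simpa using this
  -- component memℒp
  have hΨc : ∀ j, MemLp (fun y => Ψ y j) 2 μ := fun j =>
    hΨ.of_le ((EuclideanSpace.proj j).continuous.comp_aestronglyMeasurable hΨ.1)
      (Filter.Eventually.of_forall fun y => DH_euclid_apply_le _ j)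
  have hΦc : ∀ j, MemLp (fun y => Φ y j) 2 μ := fun j =>
    hΦ.of_le ((EuclideanSpace.proj j).continuous.comp_aestronglyMeasurable hΦ.1)
      (Filter.Eventually.of_forall fun y => DH_euclid_apply_le _ j)
  have hpInt : Integrable (fun y => ∑ j, ‖Ψ y j‖ ^ 2) μ :=
    integrable_finset_sum _ fun j _ => DH_sq_integrable _ (hΨc j)
  have hqInt : Integrable (fun y => ∑ j, ‖Φ y j‖ ^ 2) μ :=
    integrable_finset_sum _ fun j _ => DH_sq_integrable _ (hΦc j)
  set IΨ := ∫ y, (∑ j, ‖Ψ y j‖ ^ 2) ∂μ with hIΨdef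
  set IΦ := ∫ y, (∑ j, ‖Φ y j‖ ^ 2) ∂μ with hIΦdef
  have hIΨ0 : 0 ≤ IΨ := integral_nonneg fun y => by positivity
  have hIΦ0 : 0 ≤ IΦ := integral_nonneg fun y => by positivity
  -- measurable representative of Ψ
  set Ψ' := hΨ.1.mk Ψ with hΨ'def
  have hΨ'm : StronglyMeasurable Ψ' := hΨ.1.stronglyMeasurable_mk
  have hΨe : Ψ =ᵐ[μ] Ψ' := hΨ.1.ae_eq_mk
  set f : E3 → ℂ := fun y => ∑ j, (Ψ y j * (starRingEnd ℂ) (Λ y j)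
      + (starRingEnd ℂ) (Ψ y j) * Λ y j) with hfdef
  set f' : E3 → ℂ := fun y => ∑ j, (Ψ' y j * (starRingEnd ℂ) (Λ y j)
      + (starRingEnd ℂ) (Ψ' y j) * Λ y j) with hf'def
  have hff' : f =ᵐ[μ] f' := hΨe.mono fun y hy => by simp only [hfdef, hf'def, hy]
  have hΛj : ∀ j : Fin N, StronglyMeasurable fun y => Λ y j := fun j =>
    (EuclideanSpace.proj j).continuous.comp_stronglyMeasurable hΛ
  have hΨ'j : ∀ j : Fin N, StronglyMeasurable fun y => Ψ' y j := fun j =>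
    (EuclideanSpace.proj j).continuous.comp_stronglyMeasurable hΨ'm
  have hconj : Continuous (starRingEnd ℂ) := Complex.continuous_conj
  have hf'm : StronglyMeasurable f' := by
    apply Measurable.stronglyMeasurable
    refine Finset.measurable_sum _ fun j _ => ?_
    exact ((hΨ'j j).measurable.mul (hconj.measurable.comp (hΛj j).measurable)).add
      ((hconj.measurable.comp (hΨ'j j).measurable).mul (hΛj j).measurable)
  have hfm : AEStronglyMeasurable f μ := hf'm.aestronglyMeasurable.congr hff'.symm
  set g : E3 → ℂ := fun x => ∫ y, f y / ((‖x - y‖ : ℝ) : ℂ) ∂μ with hgdef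
  set g' : E3 → ℂ := fun x => ∫ y, ((‖x - y‖⁻¹ : ℝ) : ℂ) * f' y ∂μ with hg'def
  have hgg' : ∀ x, g x = g' x := by
    intro x
    exact integral_congr_ae (hff'.mono fun y hy => by
      simp only [hy, div_eq_inv_mul, Complex.ofReal_inv])
  have hg'm : StronglyMeasurable g' := by
    have hFm : StronglyMeasurable (fun p : E3 × E3 => ((‖p.1 - p.2‖⁻¹ : ℝ) : ℂ) * f' p.2) := by
      apply StronglyMeasurable.mul
      · exact (Complex.measurable_ofReal.comp
          ((measurable_fst.sub measurable_snd).norm.inv)).stronglyMeasurable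
      · exact hf'm.comp_measurable measurable_snd
    exact hFm.integral_prod_right'
  have hgm : AEStronglyMeasurable g μ := by
    rw [funext hgg']
    exact hg'm.aestronglyMeasurable
  -- pointwise a.e. bound on ‖f‖²
  have hfb2 : ∀ᵐ y ∂μ, ‖f y‖ ^ 2 ≤ 4 * ℓ ^ 2 * N * ∑ j, ‖Ψ y j‖ ^ 2 := by
    filter_upwards [hΛae] with y hy
    have h1 : ‖f y‖ ≤ 2 * ℓ * ∑ j, ‖Ψ y j‖ := by
      calc ‖f y‖ ≤ ∑ j, ‖Ψ y j * (starRingEnd ℂ) (Λ y j)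
            + (starRingEnd ℂ) (Ψ y j) * Λ y j‖ := norm_sum_le _ _
        _ ≤ ∑ j, 2 * ℓ * ‖Ψ y j‖ := by
            refine Finset.sum_le_sum fun j _ => ?_
            calc ‖Ψ y j * (starRingEnd ℂ) (Λ y j) + (starRingEnd ℂ) (Ψ y j) * Λ y j‖
                ≤ ‖Ψ y j * (starRingEnd ℂ) (Λ y j)‖
                  + ‖(starRingEnd ℂ) (Ψ y j) * Λ y j‖ := norm_add_le _ _
              _ = ‖Ψ y j‖ * ‖Λ y j‖ + ‖Ψ y j‖ * ‖Λ y j‖ := by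
                  rw [norm_mul, norm_mul, RCLike.norm_conj, RCLike.norm_conj]
              _ ≤ 2 * ℓ * ‖Ψ y j‖ := by
                  have h3 := hy j
                  have h4 := norm_nonneg (Ψ y j)
                  nlinarith
        _ = 2 * ℓ * ∑ j, ‖Ψ y j‖ := by rw [Finset.mul_sum]
    have h2 : (∑ j, ‖Ψ y j‖) ^ 2 ≤ N * ∑ j, ‖Ψ y j‖ ^ 2 := by
      have := sq_sum_le_card_mul_sum_sq (s := (Finset.univ : Finset (Fin N)))
        (f := fun j => ‖Ψ y j‖)
      simpa using this
    have h5 : 0 ≤ ∑ j, ‖Ψ y j‖ := Finset.sum_nonneg fun j _ => norm_nonneg _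
    have h6 := norm_nonneg (f y)
    nlinarith
  -- lintegral bound on ‖f‖²
  have hS : ∫⁻ y, (‖f y‖₊ : ℝ≥0∞) ^ (2:ℝ) ∂μ ≤ ENNReal.ofReal (4 * ℓ ^ 2 * N * IΨ) := by
    have hstep : ∫⁻ y, (‖f y‖₊ : ℝ≥0∞) ^ (2:ℝ) ∂μ
        ≤ ∫⁻ y, ENNReal.ofReal (4 * ℓ ^ 2 * N * ∑ j, ‖Ψ y j‖ ^ 2) ∂μ := by
      refine lintegral_mono_ae (hfb2.mono fun y hy => ?_)
      rw [show (2:ℝ) = ((2:ℕ):ℝ) by norm_num, ENNReal.rpow_natCast,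
        ← enorm_eq_nnnorm, ← ofReal_norm, ← ENNReal.ofReal_pow (norm_nonneg _)]
      exact ENNReal.ofReal_le_ofReal hy
    rw [← ofReal_integral_eq_lintegral_ofReal (hpInt.const_mul _)
      (Filter.Eventually.of_forall fun y => by positivity), integral_const_mul] at hstep
    exact hstep
  -- kernel bound, squared form
  have hk2 : ∀ x : E3, ∫⁻ y, (ENNReal.ofReal ‖x - y‖⁻¹) ^ (2:ℝ) ∂μ ≤ CK := by
    intro x
    refine le_trans (le_of_eq ?_) (hK x)
    congr 1
    funext y
    rw [show (2:ℝ) = ((2:ℕ):ℝ) by norm_num, ENNReal.rpow_natCast,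
      ← ENNReal.ofReal_pow (by positivity)]
  -- pointwise bound on g
  set Gb : ℝ≥0∞ := (ENNReal.ofReal (4 * ℓ ^ 2 * N * IΨ)) ^ ((1:ℝ)/2) * CK ^ ((1:ℝ)/2)
    with hGbdef
  have hGbne : Gb ≠ ⊤ := by
    refine ENNReal.mul_ne_top ?_ ?_
    · simp [ENNReal.rpow_eq_top_iff]
    · simp [ENNReal.rpow_eq_top_iff, hCKne]
  set G : ℝ := Gb.toReal with hGdef
  have hG0 : 0 ≤ G := ENNReal.toReal_nonneg
  have hgb : ∀ x, ‖g x‖ ≤ G := by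
    intro x
    have h22 : Real.HolderConjugate 2 2 := Real.HolderConjugate.two_two
    have hcs := ENNReal.lintegral_mul_le_Lp_mul_Lq μ h22
      (f := fun y => (‖f y‖₊ : ℝ≥0∞)) (g := fun y => ENNReal.ofReal ‖x - y‖⁻¹)
      hfm.enorm (by fun_prop)
    have hA : ∫⁻ y, ENNReal.ofReal ‖f y / ((‖x - y‖ : ℝ) : ℂ)‖ ∂μ ≤ Gb := by
      have heq : ∀ y, ENNReal.ofReal ‖f y / ((‖x - y‖ : ℝ) : ℂ)‖
          = (‖f y‖₊ : ℝ≥0∞) * ENNReal.ofReal ‖x - y‖⁻¹ := by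
        intro y
        rw [norm_div, Complex.norm_real, Real.norm_eq_abs, abs_of_nonneg (norm_nonneg _),
          div_eq_mul_inv, ENNReal.ofReal_mul (norm_nonneg _), ofReal_norm, enorm_eq_nnnorm]
      calc ∫⁻ y, ENNReal.ofReal ‖f y / ((‖x - y‖ : ℝ) : ℂ)‖ ∂μ
          = ∫⁻ y, (‖f y‖₊ : ℝ≥0∞) * ENNReal.ofReal ‖x - y‖⁻¹ ∂μ := by
            simp_rw [heq]
        _ ≤ (∫⁻ y, (‖f y‖₊ : ℝ≥0∞) ^ (2:ℝ) ∂μ) ^ ((1:ℝ)/2)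
            * (∫⁻ y, (ENNReal.ofReal ‖x - y‖⁻¹) ^ (2:ℝ) ∂μ) ^ ((1:ℝ)/2) := hcs
        _ ≤ Gb := by
            rw [hGbdef]
            exact mul_le_mul' (ENNReal.rpow_le_rpow hS (by norm_num))
              (ENNReal.rpow_le_rpow (hk2 x) (by norm_num))
    calc ‖g x‖ ≤ (∫⁻ y, ENNReal.ofReal ‖f y / ((‖x - y‖ : ℝ) : ℂ)‖ ∂μ).toReal :=
          norm_integral_le_lintegral_norm _
      _ ≤ G := ENNReal.toReal_mono hGbne hA
  -- integrability of each term
  have hΛkm : ∀ k : Fin N, AEStronglyMeasurable (fun x => Λ x k) μ :=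
    fun k => (hΛj k).aestronglyMeasurable
  have hΦkm : ∀ k : Fin N, AEStronglyMeasurable (fun x => (starRingEnd ℂ) (Φ x k)) μ :=
    fun k => (Complex.continuous_conj).comp_aestronglyMeasurable
      ((EuclideanSpace.proj k).continuous.comp_aestronglyMeasurable hΦ.1)
  have hI : ∀ k : Fin N, Integrable (fun x => g x * Λ x k * (starRingEnd ℂ) (Φ x k)) μ := by
    intro k
    have hmeas : AEStronglyMeasurable (fun x => g x * Λ x k * (starRingEnd ℂ) (Φ x k)) μ :=
      (hgm.mul (hΛkm k)).mul (hΦkm k)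
    refine Integrable.mono' (((hΦc k).integrable one_le_two).norm.const_mul (G * ℓ)) hmeas ?_
    filter_upwards [hΛae] with x hx
    calc ‖g x * Λ x k * (starRingEnd ℂ) (Φ x k)‖
        = ‖g x‖ * ‖Λ x k‖ * ‖Φ x k‖ := by rw [norm_mul, norm_mul, RCLike.norm_conj]
      _ ≤ G * ℓ * ‖Φ x k‖ := by
          have h1 := hgb x
          have h2 := hx k
          have h4 := norm_nonneg (Λ x k)
          have h5 := norm_nonneg (Φ x k)
          exact mul_le_mul (mul_le_mul h1 h2 h4 hG0) le_rfl h5 (by positivity)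
  -- norm bound for each term
  have hTk : ∀ k : Fin N, ‖∫ x, g x * Λ x k * (starRingEnd ℂ) (Φ x k) ∂μ‖
      ≤ G * ℓ * (Real.sqrt (volume Ω).toReal * Real.sqrt IΦ) := by
    intro k
    have hb1 : ∫ x, ‖Φ x k‖ ∂μ ≤ Real.sqrt (volume Ω).toReal * Real.sqrt IΦ := by
      have hcs := DH_CS μ (fun x => Φ x k) (hΦc k)
      have huniv : μ Set.univ = volume Ω := by rw [hμdef, Measure.restrict_apply_univ]
      rw [huniv] at hcs
      refine le_trans hcs (mul_le_mul_of_nonneg_left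
        (Real.sqrt_le_sqrt (integral_mono (DH_sq_integrable _ (hΦc k)) hqInt
          (fun y => Finset.single_le_sum (f := fun j => ‖Φ y j‖ ^ 2)
            (fun j _ => by positivity) (Finset.mem_univ k)))) (Real.sqrt_nonneg _))
    calc ‖∫ x, g x * Λ x k * (starRingEnd ℂ) (Φ x k) ∂μ‖
        ≤ ∫ x, ‖g x * Λ x k * (starRingEnd ℂ) (Φ x k)‖ ∂μ := norm_integral_le_integral_norm _
      _ ≤ ∫ x, G * ℓ * ‖Φ x k‖ ∂μ := by
          refine integral_mono_ae (hI k).norm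
            (((hΦc k).integrable one_le_two).norm.const_mul (G * ℓ)) ?_
          filter_upwards [hΛae] with x hx
          calc ‖g x * Λ x k * (starRingEnd ℂ) (Φ x k)‖
              = ‖g x‖ * ‖Λ x k‖ * ‖Φ x k‖ := by rw [norm_mul, norm_mul, RCLike.norm_conj]
            _ ≤ G * ℓ * ‖Φ x k‖ := by
                have h1 := hgb x
                have h2 := hx k
                have h4 := norm_nonneg (Λ x k)
                have h5 := norm_nonneg (Φ x k)
                exact mul_le_mul (mul_le_mul h1 h2 h4 hG0) le_rfl h5 (by positivity)
      _ = G * ℓ * ∫ x, ‖Φ x k‖ ∂μ := integral_const_mul _ _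
      _ ≤ G * ℓ * (Real.sqrt (volume Ω).toReal * Real.sqrt IΦ) := by
          refine mul_le_mul_of_nonneg_left hb1 (by positivity)
  -- bound on G
  have hGb2 : G ≤ 2 * ℓ * Real.sqrt N * Real.sqrt IΨ * Real.sqrt CK.toReal := by
    rw [hGdef, hGbdef, ENNReal.toReal_mul, ← ENNReal.toReal_rpow, ← ENNReal.toReal_rpow,
      ENNReal.toReal_ofReal (by positivity)]
    rw [← Real.sqrt_eq_rpow, ← Real.sqrt_eq_rpow]
    have : Real.sqrt (4 * ℓ ^ 2 * N * IΨ) = 2 * ℓ * Real.sqrt N * Real.sqrt IΨ := by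
      rw [show 4 * ℓ ^ 2 * N * IΨ = (2 * ℓ) ^ 2 * ((N : ℝ) * IΨ) by ring,
        Real.sqrt_mul (by positivity), Real.sqrt_sq (by positivity),
        Real.sqrt_mul (by positivity)]
      ring
    rw [this]
  -- conclude
  constructor
  · intro k
    exact hI k
  · calc ‖∑ k : Fin N, ∫ x, g x * Λ x k * (starRingEnd ℂ) (Φ x k) ∂μ‖
        ≤ ∑ k : Fin N, ‖∫ x, g x * Λ x k * (starRingEnd ℂ) (Φ x k) ∂μ‖ :=
          norm_sum_le _ _
      _ ≤ ∑ _k : Fin N, G * ℓ * (Real.sqrt (volume Ω).toReal * Real.sqrt IΦ) :=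
          Finset.sum_le_sum fun k _ => hTk k
      _ = N * (G * ℓ * (Real.sqrt (volume Ω).toReal * Real.sqrt IΦ)) := by
          rw [Finset.sum_const, Finset.card_univ, Fintype.card_fin, nsmul_eq_mul]
      _ ≤ N * ((2 * ℓ * Real.sqrt N * Real.sqrt IΨ * Real.sqrt CK.toReal) * ℓ
            * (Real.sqrt (volume Ω).toReal * Real.sqrt IΦ)) := by
          have hstep := mul_le_mul_of_nonneg_right (mul_le_mul_of_nonneg_right hGb2 hl0)
            (mul_nonneg (Real.sqrt_nonneg ((volume Ω).toReal)) (Real.sqrt_nonneg IΦ))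
          exact mul_le_mul_of_nonneg_left hstep (Nat.cast_nonneg N)
      _ = (2 * N * Real.sqrt N * Real.sqrt CK.toReal * Real.sqrt (volume Ω).toReal)
            * ℓ ^ 2 * Real.sqrt IΨ * Real.sqrt IΦ := by ring
      _ ≤ (2 * N * Real.sqrt N * Real.sqrt CK.toReal * Real.sqrt (volume Ω).toReal + 1)
            * ℓ ^ 2 * Real.sqrt IΨ * Real.sqrt IΦ := by
          have hA : (2 * N * Real.sqrt N * Real.sqrt CK.toReal * Real.sqrt (volume Ω).toReal)
              ≤ 2 * N * Real.sqrt N * Real.sqrt CK.toReal * Real.sqrt (volume Ω).toReal + 1 := by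
            linarith
          exact mul_le_mul_of_nonneg_right (mul_le_mul_of_nonneg_right
            (mul_le_mul_of_nonneg_right hA (by positivity)) (Real.sqrt_nonneg _))
            (Real.sqrt_nonneg _)
end

section
/- Let Ω ⊂ ℝ³ be a bounded open set and N ≥ 1. There exists a constant C > 0, depending only on N, such that for every continuously differentiable Φ = (φ₁, …, φ_N) : ℝ³ → ℂᴺ with compact support contained in Ω and every Υ ∈ L²(Ω; ℂᴺ): ‖(ρ(Φ) ⋆ w) Υ‖_{L²(Ω)} ≤ C ‖Φ‖_{L²} ‖∇Φ‖_{L²} ‖Υ‖_{L²(Ω)}, where (ρ(Φ) ⋆ w)(x) := ∫_{ℝ³} ρ(Φ)(y)/‖x − y‖ dy and ((ρ(Φ) ⋆ w) Υ)(x) := (ρ(Φ) ⋆ w)(x) · Υ(x). -/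
open MeasureTheory Metric Set Filter

set_option maxHeartbeats 1000000
set_option synthInstance.maxHeartbeats 400000

private lemma integral_fderiv_pi_single (h : (Fin 3 → ℝ) → ℝ) (h1 : ContDiff ℝ 1 h)
    (h2 : HasCompactSupport h) (i : Fin 3) :
    ∫ y : Fin 3 → ℝ, fderiv ℝ h y (Pi.single i 1) = 0 := by
  classical
  obtain ⟨R, hR⟩ := h2.isBounded.subset_closedBall 0
  set M : ℝ := |R| + 1 with hM
  have hMpos : 0 < M := by positivity
  have hout : ∀ y : Fin 3 → ℝ, M ≤ ‖y‖ → y ∉ tsupport h := by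
    intro y hy hmem
    have h1 := hR hmem
    simp only [mem_closedBall, dist_zero_right] at h1
    have h2 : ‖y‖ ≤ |R| := h1.trans (le_abs_self R)
    simp only [hM] at hy; linarith
  set a : Fin 3 → ℝ := fun _ => -M with ha
  set b : Fin 3 → ℝ := fun _ => M with hb
  have hab : a ≤ b := fun _ => by simp only [ha, hb]; linarith
  set J : ℝ →L[ℝ] (Fin 3 → ℝ) :=
    ContinuousLinearMap.pi (Pi.single i (ContinuousLinearMap.id ℝ ℝ)) with hJdef
  have hJ : ∀ c : ℝ, J c = Pi.single i c := by
    intro c; ext j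
    simp only [hJdef, ContinuousLinearMap.pi_apply, Pi.single_apply]
    rw [apply_ite (fun T : ℝ →L[ℝ] ℝ => T c)]
    simp
  set f : (Fin 3 → ℝ) → (Fin 3 → ℝ) := fun y => J (h y) with hfdef
  set f' : (Fin 3 → ℝ) → (Fin 3 → ℝ) →L[ℝ] (Fin 3 → ℝ) :=
    fun y => J.comp (fderiv ℝ h y) with hf'def
  have hdh : ∀ y, HasFDerivAt f (f' y) y := fun y =>
    J.hasFDerivAt.comp y ((h1.differentiable one_ne_zero y).hasFDerivAt)
  have hsum : ∀ y, (∑ j, f' y (Pi.single j 1) j) = fderiv ℝ h y (Pi.single i 1) := by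
    intro y
    simp only [hf'def, ContinuousLinearMap.comp_apply, hJ, Pi.single_apply]
    rw [Finset.sum_congr rfl (fun j _ => rfl)]
    simp [Finset.sum_ite_eq' Finset.univ i (fun j => fderiv ℝ h y (Pi.single j 1))]
  have hcont : Continuous fun y => fderiv ℝ h y (Pi.single i 1) :=
    (h1.continuous_fderiv one_ne_zero).clm_apply continuous_const
  have hcs : HasCompactSupport fun y => fderiv ℝ h y (Pi.single i 1) := by
    refine HasCompactSupport.intro h2.isCompact ?_
    intro y hy
    have : fderiv ℝ h y = 0 := by
      by_contra hne
      exact hy (support_fderiv_subset ℝ (f := h) hne)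
    simp [this]
  have hint : Integrable (fun y => fderiv ℝ h y (Pi.single i 1)) volume :=
    hcont.integrable_of_hasCompactSupport hcs
  have key := integral_divergence_of_hasFDerivAt_off_countable (n := 2) (a := a) (b := b) hab f f'
    ∅ countable_empty ((J.continuous.comp h1.continuous).continuousOn)
    (fun y _ => hdh y) ?_
  · -- faces vanish
    have hface : ∀ (j : Fin (2+1)) (c : ℝ), |c| = M →
        ∀ x : Fin 2 → ℝ, f (Fin.insertNth (α := fun _ : Fin (2+1) => ℝ) j c x) = 0 := by
      intro j c hc x
      have hnorm : M ≤ ‖Fin.insertNth (α := fun _ : Fin (2+1) => ℝ) j c x‖ := by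
        have := norm_le_pi_norm (Fin.insertNth (α := fun _ : Fin (2+1) => ℝ) j c x) j
        rw [Fin.insertNth_apply_same] at this
        simpa [Real.norm_eq_abs, hc] using this
      have : h (j.insertNth c x) = 0 := image_eq_zero_of_notMem_tsupport (hout _ hnorm)
      simp [hfdef, this]
    rw [Finset.sum_eq_zero] at key
    · -- LHS of key is 0; transfer to full-space integral
      have h0 : (∫ y in Icc a b, ∑ j, f' y (Pi.single j 1) j) = 0 := key
      have hIcc : (∫ y in Icc a b, fderiv ℝ h y (Pi.single i 1)) = 0 := by
        rw [← h0]; exact setIntegral_congr_fun measurableSet_Icc (fun y _ => (hsum y).symm)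
      rw [← setIntegral_eq_integral_of_forall_compl_eq_zero (s := Icc a b), hIcc]
      intro y hy
      have : M ≤ ‖y‖ := by
        by_contra hlt
        push_neg at hlt
        have habs : ∀ j, |y j| ≤ M := fun j => by
          have := (norm_le_pi_norm y j).trans hlt.le
          rwa [Real.norm_eq_abs] at this
        refine hy (Set.mem_Icc.2 ⟨fun j => ?_, fun j => ?_⟩)
        · have := (abs_le.1 (habs j)).1; simpa [ha] using this
        · have := (abs_le.1 (habs j)).2; simpa [hb] using this
      have hzero : fderiv ℝ h y = 0 := by
        by_contra hne
        exact (hout y this) (support_fderiv_subset ℝ (f := h) hne)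
      simp [hzero]
    · intro j _
      have hb1 : ∀ x : Fin 2 → ℝ, f (j.insertNth (b j) x) j = 0 := fun x => by
        rw [hface j (b j) (by simp [hb, abs_of_pos hMpos]) x]; rfl
      have ha1 : ∀ x : Fin 2 → ℝ, f (j.insertNth (a j) x) j = 0 := fun x => by
        rw [hface j (a j) (by simp [ha, abs_of_pos hMpos]) x]; rfl
      simp only [hb1, ha1, integral_zero, sub_zero]
  · -- integrability on Icc
    refine (hint.congr ?_).integrableOn
    exact Eventually.of_forall (fun y => (hsum y).symm)

private lemma integral_fderiv_eq_zero (h : EuclideanSpace ℝ (Fin 3) → ℝ)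
    (h1 : ContDiff ℝ 1 h) (h2 : HasCompactSupport h) (v : EuclideanSpace ℝ (Fin 3)) :
    ∫ y, fderiv ℝ h y v = 0 := by
  classical
  set L : (Fin 3 → ℝ) ≃L[ℝ] EuclideanSpace ℝ (Fin 3) :=
    (PiLp.continuousLinearEquiv 2 ℝ (fun _ : Fin 3 => ℝ)).symm with hL
  set ht : (Fin 3 → ℝ) → ℝ := h ∘ L with hht
  have ht1 : ContDiff ℝ 1 ht := h1.comp ((L : (Fin 3 → ℝ) →L[ℝ] EuclideanSpace ℝ (Fin 3)).contDiff)
  have ht2 : HasCompactSupport ht := h2.comp_homeomorph L.toHomeomorph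
  have hfd : ∀ z : Fin 3 → ℝ, fderiv ℝ ht z = (fderiv ℝ h (L z)).comp
      (L : (Fin 3 → ℝ) →L[ℝ] EuclideanSpace ℝ (Fin 3)) :=
    fun z => L.comp_right_fderiv
  have hmp : MeasurePreserving ((MeasurableEquiv.toLp 2 (Fin 3 → ℝ)))
      volume volume := (EuclideanSpace.volume_preserving_symm_measurableEquiv_toLp (Fin 3)).symm
  have htrans : ∫ y, fderiv ℝ h y v =
      ∫ z : Fin 3 → ℝ, fderiv ℝ h ((MeasurableEquiv.toLp 2 (Fin 3 → ℝ)) z) v := by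
    rw [hmp.integral_comp (MeasurableEquiv.measurableEmbedding _) (fun y => fderiv ℝ h y v)]
  have hcoe : ∀ z : Fin 3 → ℝ, ((MeasurableEquiv.toLp 2 (Fin 3 → ℝ)) z) = L z := by
    intro z; rfl
  set u : Fin 3 → ℝ := L.symm v with hu
  have hLu : L u = v := L.apply_symm_apply v
  have hdecomp : ∀ z, fderiv ℝ h (L z) v = ∑ i, (u i) * fderiv ℝ ht z (Pi.single i 1) := by
    intro z
    have hv : v = L (∑ i, Pi.single i (u i)) := by
      rw [Finset.univ_sum_single u, hLu]
    rw [hv, map_sum, map_sum]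
    refine Finset.sum_congr rfl (fun i _ => ?_)
    have h1 : (Pi.single i (u i) : Fin 3 → ℝ) = (u i) • (Pi.single i (1:ℝ) : Fin 3 → ℝ) := by
      ext j
      rcases eq_or_ne j i with rfl | hj
      · simp
      · simp [Pi.single_eq_of_ne hj]
    rw [h1, _root_.map_smul, _root_.map_smul, smul_eq_mul]
    congr 1
    rw [hfd]
    rfl
  have hintegr : ∀ i : Fin 3, Integrable (fun z => fderiv ℝ ht z (Pi.single i 1)) volume := by
    intro i
    refine Continuous.integrable_of_hasCompactSupport
      ((ht1.continuous_fderiv one_ne_zero).clm_apply continuous_const) ?_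
    refine HasCompactSupport.intro ht2.isCompact ?_
    intro z hz
    have : fderiv ℝ ht z = 0 := by
      by_contra hne
      exact hz (support_fderiv_subset ℝ (f := ht) hne)
    simp [this]
  rw [htrans]
  simp only [hcoe, hdecomp]
  rw [integral_finset_sum _ (fun i _ => ((hintegr i).const_mul (u i)))]
  refine Finset.sum_eq_zero (fun i _ => ?_)
  rw [integral_const_mul, integral_fderiv_pi_single ht ht1 ht2 i, mul_zero]

private lemma integral_mul_le_sqrt_mul_sqrt {α : Type*} [MeasurableSpace α] (μ : Measure α)
    {f g : α → ℝ} (hf0 : ∀ a, 0 ≤ f a) (hg0 : ∀ a, 0 ≤ g a)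
    (hfm : AEMeasurable f μ) (hgm : AEMeasurable g μ)
    (hf2 : Integrable (fun a => f a ^ 2) μ) (hg2 : Integrable (fun a => g a ^ 2) μ) :
    ∫ a, f a * g a ∂μ ≤ Real.sqrt (∫ a, f a ^ 2 ∂μ) * Real.sqrt (∫ a, g a ^ 2 ∂μ) := by
  have hmul : AEStronglyMeasurable (fun a => f a * g a) μ := (hfm.mul hgm).aestronglyMeasurable
  rw [integral_eq_lintegral_of_nonneg_ae
    (Eventually.of_forall (fun a => mul_nonneg (hf0 a) (hg0 a))) hmul]
  set Sf := ∫ a, f a ^ 2 ∂μ with hSf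
  set Sg := ∫ a, g a ^ 2 ∂μ with hSg
  have hSf0 : 0 ≤ Sf := integral_nonneg (fun a => sq_nonneg _)
  have hSg0 : 0 ≤ Sg := integral_nonneg (fun a => sq_nonneg _)
  refine ENNReal.toReal_le_of_le_ofReal
    (mul_nonneg (Real.sqrt_nonneg _) (Real.sqrt_nonneg _)) ?_
  have hconj : Real.HolderConjugate 2 2 := Real.HolderConjugate.two_two
  have hH := ENNReal.lintegral_mul_le_Lp_mul_Lq μ hconj
    (f := fun a => ENNReal.ofReal (f a)) (g := fun a => ENNReal.ofReal (g a))
    hfm.ennreal_ofReal hgm.ennreal_ofReal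
  have hpt : ∀ a : α, ENNReal.ofReal (f a * g a)
      = ((fun a => ENNReal.ofReal (f a)) * fun a => ENNReal.ofReal (g a)) a :=
    fun a => ENNReal.ofReal_mul (hf0 a)
  calc ∫⁻ a, ENNReal.ofReal (f a * g a) ∂μ
      = ∫⁻ a, ((fun a => ENNReal.ofReal (f a)) * fun a => ENNReal.ofReal (g a)) a ∂μ := by
        simp only [hpt]
    _ ≤ (∫⁻ a, ENNReal.ofReal (f a) ^ (2:ℝ) ∂μ) ^ (1/(2:ℝ))
        * (∫⁻ a, ENNReal.ofReal (g a) ^ (2:ℝ) ∂μ) ^ (1/(2:ℝ)) := hH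
    _ = (ENNReal.ofReal Sf) ^ (1/(2:ℝ)) * (ENNReal.ofReal Sg) ^ (1/(2:ℝ)) := by
        congr 1
        · congr 1
          rw [hSf, ofReal_integral_eq_lintegral_ofReal hf2
            (Eventually.of_forall (fun a => sq_nonneg _))]
          refine lintegral_congr (fun a => ?_)
          rw [show ((2:ℝ)) = ((2:ℕ):ℝ) by norm_num, ENNReal.rpow_natCast,
            ← ENNReal.ofReal_pow (hf0 a)]
        · congr 1
          rw [hSg, ofReal_integral_eq_lintegral_ofReal hg2
            (Eventually.of_forall (fun a => sq_nonneg _))]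
          refine lintegral_congr (fun a => ?_)
          rw [show ((2:ℝ)) = ((2:ℕ):ℝ) by norm_num, ENNReal.rpow_natCast,
            ← ENNReal.ofReal_pow (hg0 a)]
    _ = ENNReal.ofReal (Real.sqrt Sf * Real.sqrt Sg) := by
        rw [ENNReal.ofReal_mul (Real.sqrt_nonneg _), Real.sqrt_eq_rpow, Real.sqrt_eq_rpow,
            ENNReal.ofReal_rpow_of_nonneg hSf0 (by norm_num),
            ENNReal.ofReal_rpow_of_nonneg hSg0 (by norm_num)]

private lemma fderiv_apply_integrable (h : EuclideanSpace ℝ (Fin 3) → ℝ)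
    (h1 : ContDiff ℝ 1 h) (h2 : HasCompactSupport h) (v : EuclideanSpace ℝ (Fin 3)) :
    Integrable (fun y => fderiv ℝ h y v) volume := by
  refine Continuous.integrable_of_hasCompactSupport
    ((h1.continuous_fderiv one_ne_zero).clm_apply continuous_const) ?_
  refine HasCompactSupport.intro h2.isCompact ?_
  intro z hz
  have : fderiv ℝ h z = 0 := by
    by_contra hne
    exact hz (support_fderiv_subset ℝ (f := h) hne)
  simp [this]

private lemma hardy_aux (g : EuclideanSpace ℝ (Fin 3) → ℝ)
    (hg1 : ContDiff ℝ 1 g) (hg2 : HasCompactSupport g) (hg0 : ∀ y, 0 ≤ g y)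
    (x : EuclideanSpace ℝ (Fin 3)) {ε : ℝ} (hε : 0 < ε) :
    ∫ y, g y * (‖x - y‖^2 + ε)⁻¹
      ≤ ∫ y, ‖fderiv ℝ g y‖ * (Real.sqrt (‖x - y‖^2 + ε))⁻¹ := by
  classical
  set n2 : EuclideanSpace ℝ (Fin 3) → ℝ := fun y => ‖x - y‖^2 with hn2def
  have hn2nonneg : ∀ y, 0 ≤ n2 y := fun y => sq_nonneg _
  have hpos : ∀ y, 0 < n2 y + ε := fun y => by have := hn2nonneg y; linarith
  set ψ : EuclideanSpace ℝ (Fin 3) → ℝ := fun y => (n2 y + ε)⁻¹ with hψdef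
  have hψpos : ∀ y, 0 < ψ y := fun y => inv_pos.2 (hpos y)
  -- smoothness facts
  have hwC : ContDiff ℝ 1 (fun y : EuclideanSpace ℝ (Fin 3) => x - y) :=
    contDiff_const.sub contDiff_id
  have hn2C : ContDiff ℝ 1 n2 := hwC.norm_sq (𝕜 := ℝ)
  have hψC : ContDiff ℝ 1 ψ := (hn2C.add contDiff_const).inv (fun y => (hpos y).ne')
  have hprojC : ∀ i : Fin 3, ContDiff ℝ 1 (fun y : EuclideanSpace ℝ (Fin 3) => (x - y) i) :=
    fun i => (EuclideanSpace.proj (𝕜 := ℝ) i).contDiff.comp hwC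
  set hh : Fin 3 → EuclideanSpace ℝ (Fin 3) → ℝ :=
    fun i y => g y * (ψ y * (x - y) i) with hhdef
  have hhC1 : ∀ i, ContDiff ℝ 1 (hh i) := fun i => hg1.mul (hψC.mul (hprojC i))
  have hhcs : ∀ i, HasCompactSupport (hh i) := fun i => hg2.mul_right
  -- pointwise derivative value
  have hval : ∀ (i : Fin 3) (y : EuclideanSpace ℝ (Fin 3)),
      fderiv ℝ (hh i) y (EuclideanSpace.single i (1:ℝ))
        = g y * (2 * (ψ y)^2 * ((x - y) i)^2 - ψ y)
          + (ψ y * (x - y) i) * fderiv ℝ g y (EuclideanSpace.single i (1:ℝ)) := by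
    intro i y
    have Hg : HasFDerivAt g (fderiv ℝ g y) y := (hg1.differentiable one_ne_zero y).hasFDerivAt
    have Hw : HasFDerivAt (fun y : EuclideanSpace ℝ (Fin 3) => x - y)
        (-(ContinuousLinearMap.id ℝ (EuclideanSpace ℝ (Fin 3)))) y :=
      (hasFDerivAt_id y).const_sub x
    have Hn2 : HasFDerivAt n2
        ((2:ℕ) • (innerSL ℝ (x - y)).comp
          (-(ContinuousLinearMap.id ℝ (EuclideanSpace ℝ (Fin 3))))) y := Hw.norm_sq
    have Hinv : HasDerivAt (fun t : ℝ => t⁻¹) (-(((n2 y + ε))^2)⁻¹) (n2 y + ε) :=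
      hasDerivAt_inv (hpos y).ne'
    have Hψ : HasFDerivAt ψ ((-(((n2 y + ε))^2)⁻¹) •
        ((2:ℕ) • (innerSL ℝ (x - y)).comp
          (-(ContinuousLinearMap.id ℝ (EuclideanSpace ℝ (Fin 3)))))) y := by
      have := Hinv.comp_hasFDerivAt y (Hn2.add_const ε)
      exact this
    have Hproj : HasFDerivAt (fun y : EuclideanSpace ℝ (Fin 3) => (x - y) i)
        ((EuclideanSpace.proj (𝕜 := ℝ) i).comp
          (-(ContinuousLinearMap.id ℝ (EuclideanSpace ℝ (Fin 3))))) y :=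
      (EuclideanSpace.proj (𝕜 := ℝ) i).hasFDerivAt.comp y Hw
    have HV := Hψ.mul Hproj
    have Hh := Hg.mul HV
    rw [HasFDerivAt.fderiv (f := hh i) Hh]
    simp only [ContinuousLinearMap.add_apply, ContinuousLinearMap.smul_apply,
      ContinuousLinearMap.comp_apply, ContinuousLinearMap.neg_apply,
      ContinuousLinearMap.id_apply, smul_eq_mul, innerSL_apply_apply, nsmul_eq_mul, Pi.mul_apply]
    have hinner : (inner ℝ (x - y) (EuclideanSpace.single i (1:ℝ)) : ℝ) = (x - y) i := by
      rw [EuclideanSpace.inner_single_right]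
      simp
    have hproj1 : (EuclideanSpace.proj (𝕜 := ℝ) i) (EuclideanSpace.single i (1:ℝ)) = 1 := by
      simp
    rw [map_neg, inner_neg_right, hinner, hproj1]
    push_cast
    have hψsq : (((n2 y + ε))^2)⁻¹ = (ψ y)^2 := by
      rw [hψdef]; rw [← inv_pow]
    rw [hψsq]
    ring
  -- vector decomposition in the standard basis
  have hrep : ∀ v : EuclideanSpace ℝ (Fin 3), ∑ i, (v i) • EuclideanSpace.single i (1:ℝ) = v := by
    intro v
    have := (EuclideanSpace.basisFun (Fin 3) ℝ).sum_repr v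
    simpa [EuclideanSpace.basisFun_repr, EuclideanSpace.basisFun_apply] using this
  have hsumsq : ∀ v : EuclideanSpace ℝ (Fin 3), ∑ i, (v i)^2 = ‖v‖^2 := by
    intro v
    rw [EuclideanSpace.norm_eq, Real.sq_sqrt (Finset.sum_nonneg (fun i _ => sq_nonneg _))]
    refine Finset.sum_congr rfl (fun i _ => ?_)
    rw [Real.norm_eq_abs, sq_abs]
  have hsumg : ∀ y, (∑ i, (ψ y * (x - y) i) * fderiv ℝ g y (EuclideanSpace.single i (1:ℝ)))
      = fderiv ℝ g y (ψ y • (x - y)) := by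
    intro y
    have hvec : ψ y • (x - y) = ∑ i, (ψ y * (x - y) i) • EuclideanSpace.single i (1:ℝ) := by
      rw [show (∑ i, (ψ y * (x - y) i) • EuclideanSpace.single i (1:ℝ))
          = ψ y • ∑ i, ((x - y) i) • EuclideanSpace.single i (1:ℝ) by
        rw [Finset.smul_sum]
        exact Finset.sum_congr rfl (fun i _ => (mul_smul (ψ y) _ _))]
      rw [hrep]
    rw [hvec, map_sum]
    exact Finset.sum_congr rfl (fun i _ => by rw [_root_.map_smul, smul_eq_mul])
  have hkey : ∀ y, (∑ i, fderiv ℝ (hh i) y (EuclideanSpace.single i (1:ℝ)))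
      = fderiv ℝ g y (ψ y • (x - y)) + g y * (2*(ψ y)^2*‖x - y‖^2 - 3*ψ y) := by
    intro y
    simp only [hval]
    rw [Finset.sum_add_distrib, hsumg]
    rw [add_comm]
    congr 1
    rw [← Finset.mul_sum]
    congr 1
    rw [Finset.sum_sub_distrib, ← Finset.mul_sum, hsumsq, Finset.sum_const, Finset.card_univ]
    simp only [Fintype.card_fin, nsmul_eq_mul, Nat.cast_ofNat]
    try ring
  -- integrability facts
  have hI1 : Integrable (fun y => fderiv ℝ g y (ψ y • (x - y))) volume := by
    refine Continuous.integrable_of_hasCompactSupport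
      ((hg1.continuous_fderiv one_ne_zero).clm_apply (hψC.continuous.smul hwC.continuous)) ?_
    refine HasCompactSupport.intro hg2.isCompact ?_
    intro z hz
    have : fderiv ℝ g z = 0 := by
      by_contra hne
      exact hz (support_fderiv_subset ℝ (f := g) hne)
    simp [this]
  have hI2 : Integrable (fun y => g y * (2*(ψ y)^2*‖x - y‖^2 - 3*ψ y)) volume := by
    refine Continuous.integrable_of_hasCompactSupport
      (hg1.continuous.mul (((continuous_const.mul (hψC.continuous.pow 2)).mul
        hn2C.continuous).sub (continuous_const.mul hψC.continuous))) hg2.mul_right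
  have hzero : (∫ y, (fderiv ℝ g y (ψ y • (x - y))
      + g y * (2*(ψ y)^2*‖x - y‖^2 - 3*ψ y))) = 0 := by
    have hcongr : (∫ y, (fderiv ℝ g y (ψ y • (x - y))
        + g y * (2*(ψ y)^2*‖x - y‖^2 - 3*ψ y)))
        = ∫ y, ∑ i, fderiv ℝ (hh i) y (EuclideanSpace.single i (1:ℝ)) := by
      refine integral_congr_ae (Eventually.of_forall (fun y => ?_))
      exact (hkey y).symm
    rw [hcongr, integral_finset_sum _
      (fun i _ => fderiv_apply_integrable (hh i) (hhC1 i) (hhcs i) _)]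
    exact Finset.sum_eq_zero
      (fun i _ => integral_fderiv_eq_zero (hh i) (hhC1 i) (hhcs i) _)
  have hsplit : (∫ y, fderiv ℝ g y (ψ y • (x - y)))
      = - ∫ y, g y * (2*(ψ y)^2*‖x - y‖^2 - 3*ψ y) := by
    have := integral_add hI1 hI2
    rw [hzero] at this
    linarith [this]
  -- first inequality
  have hIgψ : Integrable (fun y => g y * ψ y) volume :=
    Continuous.integrable_of_hasCompactSupport (hg1.continuous.mul hψC.continuous) hg2.mul_right
  have hstep1 : (∫ y, g y * ψ y) ≤ ∫ y, fderiv ℝ g y (ψ y • (x - y)) := by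
    rw [hsplit, ← integral_neg]
    refine integral_mono hIgψ hI2.neg (fun y => ?_)
    have h1 : ψ y * n2 y ≤ 1 := by
      rw [hψdef]
      rw [inv_mul_le_iff₀ (hpos y)]
      have := hn2nonneg y
      linarith
    have h2 := hg0 y
    have h3 := hψpos y
    simp only [Pi.neg_apply]
    have key : g y * ψ y * (ψ y * n2 y) ≤ g y * ψ y * 1 :=
      mul_le_mul_of_nonneg_left h1 (mul_nonneg h2 h3.le)
    have hn2y : n2 y = ‖x - y‖ ^ 2 := rfl
    rw [hn2y] at key
    nlinarith [key]
  -- second inequality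
  have hI3 : Integrable (fun y => ‖fderiv ℝ g y‖ * (Real.sqrt (‖x - y‖^2 + ε))⁻¹) volume := by
    refine Continuous.integrable_of_hasCompactSupport
      (((hg1.continuous_fderiv one_ne_zero).norm).mul ?_) ?_
    · refine Continuous.inv₀ ?_ (fun y => ?_)
      · exact Real.continuous_sqrt.comp (hn2C.continuous.add continuous_const)
      · exact (Real.sqrt_pos.2 (hpos y)).ne'
    · refine HasCompactSupport.intro hg2.isCompact ?_
      intro z hz
      have : fderiv ℝ g z = 0 := by
        by_contra hne
        exact hz (support_fderiv_subset ℝ (f := g) hne)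
      simp [this]
  have hstep2 : (∫ y, fderiv ℝ g y (ψ y • (x - y)))
      ≤ ∫ y, ‖fderiv ℝ g y‖ * (Real.sqrt (‖x - y‖^2 + ε))⁻¹ := by
    refine integral_mono hI1 hI3 (fun y => ?_)
    have hb1 : fderiv ℝ g y (ψ y • (x - y)) ≤ ‖fderiv ℝ g y‖ * ‖ψ y • (x - y)‖ :=
      (le_abs_self _).trans ((fderiv ℝ g y).le_opNorm _)
    refine hb1.trans (mul_le_mul_of_nonneg_left ?_ (norm_nonneg _))
    rw [norm_smul, Real.norm_eq_abs, abs_of_pos (hψpos y)]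
    have hS : 0 < n2 y + ε := hpos y
    have hsq : ‖x - y‖ ≤ Real.sqrt (n2 y + ε) := by
      conv_lhs => rw [← Real.sqrt_sq (norm_nonneg (x - y))]
      exact Real.sqrt_le_sqrt (le_add_of_nonneg_right hε.le)
    have hsqrtpos : 0 < Real.sqrt (n2 y + ε) := Real.sqrt_pos.2 hS
    show (n2 y + ε)⁻¹ * ‖x - y‖ ≤ (Real.sqrt (n2 y + ε))⁻¹
    rw [inv_mul_le_iff₀ hS]
    have hid : (n2 y + ε) * (Real.sqrt (n2 y + ε))⁻¹ = Real.sqrt (n2 y + ε) := by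
      field_simp
      rw [Real.sq_sqrt hS.le]
    rw [hid]
    exact hsq
  calc (∫ y, g y * (‖x - y‖^2 + ε)⁻¹) = ∫ y, g y * ψ y := by rfl
    _ ≤ ∫ y, fderiv ℝ g y (ψ y • (x - y)) := hstep1
    _ ≤ _ := hstep2

section main
variable {N : ℕ} (Φ : EuclideanSpace ℝ (Fin 3) → EuclideanSpace ℂ (Fin N))

private lemma hardy_eps_bound (hΦ : ContDiff ℝ 1 Φ) (hsupp : HasCompactSupport Φ)
    (x : EuclideanSpace ℝ (Fin 3)) {ε : ℝ} (hε : 0 < ε) :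
    ∫ y, (∑ j, ‖Φ y j‖ ^ 2) * (‖x - y‖^2 + ε)⁻¹
      ≤ 4 * (∑ j, ∫ y, ‖fderiv ℝ (fun z => Φ z j) y‖ ^ 2) := by
  classical
  set φ : Fin N → EuclideanSpace ℝ (Fin 3) → ℂ := fun j z => Φ z j with hφdef
  have hφC : ∀ j, ContDiff ℝ 1 (φ j) := fun j =>
    (((EuclideanSpace.proj (𝕜 := ℂ) j).restrictScalars ℝ).contDiff).comp hΦ
  have hφs : ∀ j, HasCompactSupport (φ j) := by
    intro j
    refine HasCompactSupport.intro hsupp.isCompact (fun y hy => ?_)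
    have h0 : Φ y = 0 := image_eq_zero_of_notMem_tsupport hy
    show Φ y j = 0
    rw [h0]; rfl
  have hφderC : ∀ j, Continuous (fun y => fderiv ℝ (φ j) y) :=
    fun j => (hφC j).continuous_fderiv one_ne_zero
  have hφders : ∀ j, HasCompactSupport (fun y => fderiv ℝ (φ j) y) :=
    fun j => (hφs j).fderiv (𝕜 := ℝ)
  set g : EuclideanSpace ℝ (Fin 3) → ℝ := fun y => ∑ j, ‖Φ y j‖ ^ 2 with hgdef
  have hgj : ∀ (j : Fin N), ContDiff ℝ 1 (fun y => ‖φ j y‖ ^ 2) := fun j =>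
    ContDiff.norm_sq (𝕜 := ℂ) (hφC j)
  have hgC : ContDiff ℝ 1 g := ContDiff.sum (fun j _ => hgj j)
  have hgs : HasCompactSupport g := by
    refine HasCompactSupport.intro hsupp.isCompact (fun y hy => ?_)
    have h0 : Φ y = 0 := image_eq_zero_of_notMem_tsupport hy
    show (∑ j, ‖Φ y j‖ ^ 2) = 0
    rw [h0]
    simp
  have hg0 : ∀ y, 0 ≤ g y := fun y => Finset.sum_nonneg (fun j _ => sq_nonneg _)
  -- derivative bound
  have hgjd : ∀ (j : Fin N) (y), HasFDerivAt (fun y => ‖φ j y‖ ^ 2)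
      ((2:ℕ) • (innerSL ℝ (φ j y)).comp (fderiv ℝ (φ j) y)) y :=
    fun j y => (((hφC j).differentiable one_ne_zero) y).hasFDerivAt.norm_sq
  have hgd : ∀ y, HasFDerivAt g (∑ j, ((2:ℕ) • (innerSL ℝ (φ j y)).comp (fderiv ℝ (φ j) y))) y :=
    fun y => HasFDerivAt.fun_sum (fun j _ => hgjd j y)
  have hbound : ∀ y, ‖fderiv ℝ g y‖ ≤ ∑ j, 2 * ‖φ j y‖ * ‖fderiv ℝ (φ j) y‖ := by
    intro y
    rw [(hgd y).fderiv]
    refine (norm_sum_le _ _).trans (Finset.sum_le_sum (fun j _ => ?_))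
    have h1 : ‖(2:ℕ) • (innerSL ℝ (φ j y)).comp (fderiv ℝ (φ j) y)‖
        = 2 * ‖(innerSL ℝ (φ j y)).comp (fderiv ℝ (φ j) y)‖ := by
      rw [← Nat.cast_smul_eq_nsmul ℝ, norm_smul]
      norm_num
    rw [h1, mul_assoc]
    refine mul_le_mul_of_nonneg_left ?_ (by norm_num)
    refine (ContinuousLinearMap.opNorm_comp_le _ _).trans ?_
    rw [innerSL_apply_norm]
  -- notation
  have hpos : ∀ y : EuclideanSpace ℝ (Fin 3), 0 < ‖x - y‖^2 + ε :=
    fun y => by positivity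
  have hsqcont : Continuous (fun y : EuclideanSpace ℝ (Fin 3) =>
      (Real.sqrt (‖x - y‖^2 + ε))⁻¹) := by
    refine Continuous.inv₀ (Real.continuous_sqrt.comp ?_) (fun y => (Real.sqrt_pos.2 (hpos y)).ne')
    exact ((continuous_const.sub continuous_id).norm.pow 2).add continuous_const
  have hsq0 : ∀ y, 0 ≤ (Real.sqrt (‖x - y‖^2 + ε))⁻¹ :=
    fun y => inv_nonneg.2 (Real.sqrt_nonneg _)
  set u : Fin N → EuclideanSpace ℝ (Fin 3) → ℝ :=
    fun j y => ‖Φ y j‖ * (Real.sqrt (‖x - y‖^2 + ε))⁻¹ with hudef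
  set v : Fin N → EuclideanSpace ℝ (Fin 3) → ℝ :=
    fun j y => ‖fderiv ℝ (φ j) y‖ with hvdef
  have hu0 : ∀ j y, 0 ≤ u j y := fun j y => mul_nonneg (norm_nonneg _) (hsq0 y)
  have hv0 : ∀ j y, 0 ≤ v j y := fun j y => norm_nonneg _
  have hucont : ∀ j, Continuous (u j) := fun j =>
    (((hφC j).continuous).norm).mul hsqcont
  have hvcont : ∀ j, Continuous (v j) := fun j => (hφderC j).norm
  have hucs : ∀ j, HasCompactSupport (u j) := by
    intro j
    refine HasCompactSupport.intro (hφs j).isCompact (fun y hy => ?_)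
    have h0 : φ j y = 0 := image_eq_zero_of_notMem_tsupport hy
    show ‖Φ y j‖ * _ = 0
    have : ‖Φ y j‖ = 0 := by rw [show Φ y j = φ j y from rfl, h0, norm_zero]
    rw [this, zero_mul]
  have hvcs : ∀ j, HasCompactSupport (v j) := fun j => (hφders j).norm
  have hIu2 : ∀ j, Integrable (fun y => u j y ^ 2) volume := by
    intro j
    refine Continuous.integrable_of_hasCompactSupport ((hucont j).pow 2) ?_
    refine HasCompactSupport.intro (hucs j).isCompact (fun y hy => ?_)
    have h0 : u j y = 0 := image_eq_zero_of_notMem_tsupport hy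
    simp [h0]
  have hIv2 : ∀ j, Integrable (fun y => v j y ^ 2) volume := by
    intro j
    refine Continuous.integrable_of_hasCompactSupport ((hvcont j).pow 2) ?_
    refine HasCompactSupport.intro (hvcs j).isCompact (fun y hy => ?_)
    have h0 : v j y = 0 := image_eq_zero_of_notMem_tsupport hy
    simp [h0]
  have hIuv : ∀ j, Integrable (fun y => u j y * v j y) volume := fun j =>
    Continuous.integrable_of_hasCompactSupport ((hucont j).mul (hvcont j))
      (HasCompactSupport.mul_right (hucs j))
  have hIdg : Integrable (fun y => ‖fderiv ℝ g y‖ * (Real.sqrt (‖x - y‖^2 + ε))⁻¹) volume := by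
    refine Continuous.integrable_of_hasCompactSupport
      (((hgC.continuous_fderiv one_ne_zero).norm).mul hsqcont) ?_
    refine HasCompactSupport.intro hgs.isCompact (fun z hz => ?_)
    have : fderiv ℝ g z = 0 := by
      by_contra hne
      exact hz (support_fderiv_subset ℝ (f := g) hne)
    simp [this]
  set A : ℝ := ∫ y, g y * (‖x - y‖^2 + ε)⁻¹ with hAdef
  have hA0 : 0 ≤ A := integral_nonneg (fun y => mul_nonneg (hg0 y) (inv_nonneg.2 (hpos y).le))
  set Dsq : ℝ := ∑ j, ∫ y, ‖fderiv ℝ (φ j) y‖ ^ 2 with hDdef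
  have hDsq0 : 0 ≤ Dsq := Finset.sum_nonneg
    (fun j _ => integral_nonneg (fun y => sq_nonneg _))
  -- key computation : ∑ j ∫ u j ^2 = A
  have hsumu : (∑ j, ∫ y, u j y ^ 2) = A := by
    have h1 : ∀ j, (fun y => u j y ^ 2)
        = fun y => ‖Φ y j‖^2 * (‖x - y‖^2 + ε)⁻¹ := by
      intro j
      funext y
      show (‖Φ y j‖ * (Real.sqrt (‖x - y‖^2 + ε))⁻¹)^2 = _
      rw [mul_pow, ← Real.sqrt_inv, Real.sq_sqrt (inv_nonneg.2 (hpos y).le)]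
    rw [hAdef, show (fun y => g y * (‖x - y‖^2 + ε)⁻¹)
        = fun y => ∑ j, ‖Φ y j‖^2 * (‖x - y‖^2 + ε)⁻¹ by
      funext y
      rw [show g y = ∑ j, ‖Φ y j‖^2 from rfl, Finset.sum_mul]]
    rw [integral_finset_sum _ (fun j _ => ?_)]
    · refine Finset.sum_congr rfl (fun j _ => ?_)
      rw [h1 j]
    · rw [← h1 j]
      exact hIu2 j
  have hcs : A ≤ 2 * (Real.sqrt A * Real.sqrt Dsq) := by
    calc A ≤ ∫ y, ‖fderiv ℝ g y‖ * (Real.sqrt (‖x - y‖^2 + ε))⁻¹ :=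
          hardy_aux g hgC hgs hg0 x hε
      _ ≤ ∫ y, ∑ j, 2 * (u j y * v j y) := by
          refine integral_mono hIdg
            (integrable_finset_sum _ (fun j _ => (hIuv j).const_mul 2)) (fun y => ?_)
          have h2 := mul_le_mul_of_nonneg_right (hbound y) (hsq0 y)
          refine h2.trans_eq ?_
          rw [Finset.sum_mul]
          refine Finset.sum_congr rfl (fun j _ => ?_)
          show 2 * ‖φ j y‖ * ‖fderiv ℝ (φ j) y‖ * (Real.sqrt (‖x - y‖^2 + ε))⁻¹
            = 2 * (u j y * v j y)
          rw [hudef, hvdef]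
          show _ = 2 * ((‖Φ y j‖ * (Real.sqrt (‖x - y‖^2 + ε))⁻¹) * ‖fderiv ℝ (φ j) y‖)
          rw [show ‖φ j y‖ = ‖Φ y j‖ from rfl]
          ring
      _ = ∑ j, ∫ y, 2 * (u j y * v j y) :=
          integral_finset_sum _ (fun j _ => (hIuv j).const_mul 2)
      _ = ∑ j, 2 * ∫ y, u j y * v j y := by
          refine Finset.sum_congr rfl (fun j _ => ?_)
          rw [integral_const_mul]
      _ ≤ ∑ j, 2 * (Real.sqrt (∫ y, u j y ^ 2) * Real.sqrt (∫ y, v j y ^ 2)) := by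
          refine Finset.sum_le_sum (fun j _ => ?_)
          refine mul_le_mul_of_nonneg_left ?_ (by norm_num)
          exact integral_mul_le_sqrt_mul_sqrt volume (hu0 j) (hv0 j)
            (hucont j).aemeasurable (hvcont j).aemeasurable (hIu2 j) (hIv2 j)
      _ = 2 * ∑ j, Real.sqrt (∫ y, u j y ^ 2) * Real.sqrt (∫ y, v j y ^ 2) := by
          rw [Finset.mul_sum]
      _ ≤ 2 * (Real.sqrt (∑ j, ∫ y, u j y ^ 2) * Real.sqrt (∑ j, ∫ y, v j y ^ 2)) := by
          refine mul_le_mul_of_nonneg_left ?_ (by norm_num)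
          exact Real.sum_sqrt_mul_sqrt_le _ (fun j => integral_nonneg (fun y => sq_nonneg _))
            (fun j => integral_nonneg (fun y => sq_nonneg _))
      _ = 2 * (Real.sqrt A * Real.sqrt Dsq) := by rw [hsumu]
  have hfinal : A ≤ 4 * Dsq := by
    nlinarith [Real.sq_sqrt hA0, Real.sq_sqrt hDsq0, Real.sqrt_nonneg A, Real.sqrt_nonneg Dsq,
      sq_nonneg (Real.sqrt A - 2 * Real.sqrt Dsq)]
  exact hfinal

private lemma hardy_lintegral_bound (hΦ : ContDiff ℝ 1 Φ) (hsupp : HasCompactSupport Φ)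
    (x : EuclideanSpace ℝ (Fin 3)) :
    ∫⁻ y, ENNReal.ofReal ((∑ j, ‖Φ y j‖ ^ 2) / ‖x - y‖^2)
      ≤ ENNReal.ofReal (4 * (∑ j, ∫ y, ‖fderiv ℝ (fun z => Φ z j) y‖ ^ 2)) := by
  classical
  set g : EuclideanSpace ℝ (Fin 3) → ℝ := fun y => ∑ j, ‖Φ y j‖ ^ 2 with hgdef
  have hgcont : Continuous g := by
    refine continuous_finset_sum _ (fun j _ => ?_)
    have : Continuous (fun y => Φ y j) :=
      (((EuclideanSpace.proj (𝕜 := ℂ) j).restrictScalars ℝ).continuous).comp hΦ.continuous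
    exact this.norm.pow 2
  have hg0 : ∀ y, 0 ≤ g y := fun y => Finset.sum_nonneg (fun j _ => sq_nonneg _)
  have hgs : HasCompactSupport g := by
    refine HasCompactSupport.intro hsupp.isCompact (fun y hy => ?_)
    have h0 : Φ y = 0 := image_eq_zero_of_notMem_tsupport hy
    show (∑ j, ‖Φ y j‖ ^ 2) = 0
    rw [h0]
    simp
  set F : ℕ → EuclideanSpace ℝ (Fin 3) → ENNReal :=
    fun n y => ENNReal.ofReal (g y * (‖x - y‖^2 + ((n:ℝ)+1)⁻¹)⁻¹) with hFdef
  have hεpos : ∀ n : ℕ, 0 < ((n:ℝ)+1)⁻¹ := fun n => by positivity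
  have hpos : ∀ (n : ℕ) y, 0 < ‖x - y‖^2 + ((n:ℝ)+1)⁻¹ := fun n y => by positivity
  have hFmeas : ∀ n, Measurable (F n) := by
    intro n
    refine ENNReal.measurable_ofReal.comp (Continuous.measurable ?_)
    refine hgcont.mul (Continuous.inv₀ ?_ (fun y => (hpos n y).ne'))
    exact ((continuous_const.sub continuous_id).norm.pow 2).add continuous_const
  have hFmono : Monotone F := by
    intro n m hnm y
    refine ENNReal.ofReal_le_ofReal ?_
    refine mul_le_mul_of_nonneg_left ?_ (hg0 y)
    refine inv_anti₀ (hpos m y) (add_le_add le_rfl ?_)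
    refine inv_anti₀ (by positivity) (add_le_add (by exact_mod_cast hnm) le_rfl)
  have hFint : ∀ n : ℕ, Integrable (fun y => g y * (‖x - y‖^2 + ((n:ℝ)+1)⁻¹)⁻¹) volume := by
    intro n
    refine Continuous.integrable_of_hasCompactSupport
      (hgcont.mul (Continuous.inv₀ (((continuous_const.sub continuous_id).norm.pow 2).add
        continuous_const) (fun y => (hpos n y).ne'))) hgs.mul_right
  have hpt : ∀ y, ENNReal.ofReal (g y / ‖x - y‖^2) ≤ ⨆ n, F n y := by
    intro y
    rcases eq_or_ne (‖x - y‖^2) 0 with h0 | h0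
    · rw [h0, div_zero, ENNReal.ofReal_zero]
      exact zero_le
    · have hr : 0 < ‖x - y‖^2 := lt_of_le_of_ne (sq_nonneg _) (Ne.symm h0)
      have htendr : Tendsto (fun n : ℕ => (‖x - y‖^2 + ((n:ℝ)+1)⁻¹)⁻¹) atTop
          (nhds ((‖x - y‖^2)⁻¹)) := by
        have h1 : Tendsto (fun n : ℕ => ((n:ℝ)+1)⁻¹) atTop (nhds 0) := by
          simpa only [one_div] using tendsto_one_div_add_atTop_nhds_zero_nat (𝕜 := ℝ)
        have h2 : Tendsto (fun n : ℕ => ‖x - y‖^2 + ((n:ℝ)+1)⁻¹) atTop (nhds (‖x - y‖^2)) := by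
          simpa using (tendsto_const_nhds.add h1)
        exact h2.inv₀ h0
      have htend : Tendsto (fun n => F n y) atTop
          (nhds (ENNReal.ofReal (g y / ‖x - y‖^2))) := by
        rw [div_eq_mul_inv]
        exact (ENNReal.continuous_ofReal.tendsto _).comp (tendsto_const_nhds.mul htendr)
      rw [← iSup_eq_of_tendsto (fun n m hnm => hFmono hnm y) htend]
  calc ∫⁻ y, ENNReal.ofReal (g y / ‖x - y‖^2) ≤ ∫⁻ y, ⨆ n, F n y := lintegral_mono hpt
    _ = ⨆ n, ∫⁻ y, F n y := lintegral_iSup hFmeas hFmono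
    _ ≤ ENNReal.ofReal (4 * (∑ j, ∫ y, ‖fderiv ℝ (fun z => Φ z j) y‖ ^ 2)) := by
        refine iSup_le (fun n => ?_)
        rw [hFdef]
        rw [← ofReal_integral_eq_lintegral_ofReal (hFint n)
          (Eventually.of_forall (fun y => mul_nonneg (hg0 y) (inv_nonneg.2 (hpos n y).le)))]
        exact ENNReal.ofReal_le_ofReal (hardy_eps_bound Φ hΦ hsupp x (hεpos n))

private lemma pointwise_S_bound (hΦ : ContDiff ℝ 1 Φ) (hsupp : HasCompactSupport Φ)
    (x : EuclideanSpace ℝ (Fin 3)) :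
    ∫ y, (∑ j, ‖Φ y j‖ ^ 2) / ‖x - y‖
      ≤ Real.sqrt (∫ y, ∑ j, ‖Φ y j‖ ^ 2)
        * (2 * Real.sqrt (∑ j, ∫ y, ‖fderiv ℝ (fun z => Φ z j) y‖ ^ 2)) := by
  classical
  set g : EuclideanSpace ℝ (Fin 3) → ℝ := fun y => ∑ j, ‖Φ y j‖ ^ 2 with hgdef
  have hgcont : Continuous g := by
    refine continuous_finset_sum _ (fun j _ => ?_)
    have : Continuous (fun y => Φ y j) :=
      (((EuclideanSpace.proj (𝕜 := ℂ) j).restrictScalars ℝ).continuous).comp hΦ.continuous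
    exact this.norm.pow 2
  have hg0 : ∀ y, 0 ≤ g y := fun y => Finset.sum_nonneg (fun j _ => sq_nonneg _)
  have hgs : HasCompactSupport g := by
    refine HasCompactSupport.intro hsupp.isCompact (fun y hy => ?_)
    have h0 : Φ y = 0 := image_eq_zero_of_notMem_tsupport hy
    show (∑ j, ‖Φ y j‖ ^ 2) = 0
    rw [h0]
    simp
  have hIg : Integrable g volume := hgcont.integrable_of_hasCompactSupport hgs
  have hrcont : Continuous (fun y : EuclideanSpace ℝ (Fin 3) => ‖x - y‖) :=
    (continuous_const.sub continuous_id).norm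
  set L : ℝ := Real.sqrt (∫ y, g y) with hLdef
  set Dsq : ℝ := ∑ j, ∫ y, ‖fderiv ℝ (fun z => Φ z j) y‖ ^ 2 with hDdef
  have hL0 : 0 ≤ L := Real.sqrt_nonneg _
  have hDsq0 : 0 ≤ Dsq := Finset.sum_nonneg (fun j _ => integral_nonneg (fun y => sq_nonneg _))
  have hSmeas : AEStronglyMeasurable (fun y => g y / ‖x - y‖) volume :=
    (hgcont.measurable.div hrcont.measurable).aestronglyMeasurable
  rw [integral_eq_lintegral_of_nonneg_ae
    (Eventually.of_forall (fun y => div_nonneg (hg0 y) (norm_nonneg _))) hSmeas]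
  refine ENNReal.toReal_le_of_le_ofReal
    (mul_nonneg hL0 (mul_nonneg (by norm_num) (Real.sqrt_nonneg _))) ?_
  have hconj : Real.HolderConjugate 2 2 := Real.HolderConjugate.two_two
  set F1 : EuclideanSpace ℝ (Fin 3) → ENNReal := fun y => ENNReal.ofReal (Real.sqrt (g y))
    with hF1def
  set F2 : EuclideanSpace ℝ (Fin 3) → ENNReal :=
    fun y => ENNReal.ofReal (Real.sqrt (g y) / ‖x - y‖) with hF2def
  have hF1m : AEMeasurable F1 volume :=
    (ENNReal.measurable_ofReal.comp
      (Real.continuous_sqrt.comp hgcont).measurable).aemeasurable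
  have hF2m : AEMeasurable F2 volume :=
    (ENNReal.measurable_ofReal.comp
      ((Real.continuous_sqrt.comp hgcont).measurable.div hrcont.measurable)).aemeasurable
  have hfact : ∀ y, ENNReal.ofReal (g y / ‖x - y‖) = (F1 * F2) y := by
    intro y
    have h1 : g y / ‖x - y‖ = Real.sqrt (g y) * (Real.sqrt (g y) / ‖x - y‖) := by
      rw [div_eq_mul_inv, div_eq_mul_inv, ← mul_assoc, Real.mul_self_sqrt (hg0 y)]
    rw [h1]
    exact ENNReal.ofReal_mul (Real.sqrt_nonneg _)
  have hF1sq : ∀ y, F1 y ^ (2:ℝ) = ENNReal.ofReal (g y) := by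
    intro y
    rw [hF1def, show ((2:ℝ)) = ((2:ℕ):ℝ) by norm_num, ENNReal.rpow_natCast,
      ← ENNReal.ofReal_pow (Real.sqrt_nonneg _), Real.sq_sqrt (hg0 y)]
  have hF2sq : ∀ y, F2 y ^ (2:ℝ) = ENNReal.ofReal (g y / ‖x - y‖^2) := by
    intro y
    rw [hF2def, show ((2:ℝ)) = ((2:ℕ):ℝ) by norm_num, ENNReal.rpow_natCast,
      ← ENNReal.ofReal_pow (div_nonneg (Real.sqrt_nonneg _) (norm_nonneg _)),
      div_pow, Real.sq_sqrt (hg0 y)]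
  calc ∫⁻ y, ENNReal.ofReal (g y / ‖x - y‖)
      = ∫⁻ y, (F1 * F2) y := by
        refine lintegral_congr (fun y => hfact y)
    _ ≤ (∫⁻ y, F1 y ^ (2:ℝ)) ^ (1/(2:ℝ)) * (∫⁻ y, F2 y ^ (2:ℝ)) ^ (1/(2:ℝ)) :=
        ENNReal.lintegral_mul_le_Lp_mul_Lq volume hconj hF1m hF2m
    _ ≤ (ENNReal.ofReal (∫ y, g y)) ^ (1/(2:ℝ))
        * (ENNReal.ofReal (4 * Dsq)) ^ (1/(2:ℝ)) := by
        refine mul_le_mul' ?_ ?_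
        · refine ENNReal.rpow_le_rpow ?_ (by norm_num)
          rw [show (∫⁻ y, F1 y ^ (2:ℝ)) = ∫⁻ y, ENNReal.ofReal (g y) from
            lintegral_congr hF1sq]
          rw [ofReal_integral_eq_lintegral_ofReal hIg (Eventually.of_forall hg0)]
        · refine ENNReal.rpow_le_rpow ?_ (by norm_num)
          rw [show (∫⁻ y, F2 y ^ (2:ℝ)) = ∫⁻ y, ENNReal.ofReal (g y / ‖x - y‖^2) from
            lintegral_congr hF2sq]
          exact hardy_lintegral_bound Φ hΦ hsupp x
    _ = ENNReal.ofReal (Real.sqrt (∫ y, g y)) * ENNReal.ofReal (Real.sqrt (4 * Dsq)) := by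
        rw [Real.sqrt_eq_rpow, Real.sqrt_eq_rpow,
          ENNReal.ofReal_rpow_of_nonneg (integral_nonneg hg0) (by norm_num),
          ENNReal.ofReal_rpow_of_nonneg (by linarith : (0:ℝ) ≤ 4 * Dsq) (by norm_num)]
    _ ≤ ENNReal.ofReal (L * (2 * Real.sqrt Dsq)) := by
        rw [← ENNReal.ofReal_mul (Real.sqrt_nonneg _)]
        refine ENNReal.ofReal_le_ofReal ?_
        refine mul_le_mul_of_nonneg_left ?_ hL0
        rw [show (4 : ℝ) * Dsq = 2^2 * Dsq by norm_num, Real.sqrt_mul (by norm_num) Dsq,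
          Real.sqrt_sq (by norm_num : (0:ℝ) ≤ 2)]
end main

/-- For a bounded open set `Ω ⊆ ℝ³` there is `C > 0`, depending only on `N`, such that for
every `C¹` function `Φ : ℝ³ → ℂᴺ` with compact support contained in `Ω` and every
`Υ ∈ L²(Ω; ℂᴺ)`:
`‖(ρ(Φ) ⋆ w) Υ‖_{L²(Ω)} ≤ C ‖Φ‖_{L²} ‖∇Φ‖_{L²} ‖Υ‖_{L²(Ω)}`,
where `ρ(Φ) = Σⱼ |φⱼ|²`, `w(x) = 1/‖x‖` and `(ρ(Φ) ⋆ w)(x) = ∫_{ℝ³} ρ(Φ)(y)/‖x−y‖ dy`. -/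
theorem hartree_product_L2_bound
    (Ω : Set (EuclideanSpace ℝ (Fin 3)))
    (hΩo : IsOpen Ω) (hΩb : Bornology.IsBounded Ω)
    (N : ℕ) (hN : 1 ≤ N) :
    ∃ C > (0 : ℝ), ∀ Φ : EuclideanSpace ℝ (Fin 3) → EuclideanSpace ℂ (Fin N),
      ContDiff ℝ 1 Φ → HasCompactSupport Φ → tsupport Φ ⊆ Ω →
      ∀ Υ : EuclideanSpace ℝ (Fin 3) → EuclideanSpace ℂ (Fin N),
        MemLp Υ 2 (volume.restrict Ω) →
        Real.sqrt (∫ x in Ω,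
            ‖(∫ y, (∑ j, ‖Φ y j‖ ^ 2) / ‖x - y‖ ∂volume) • Υ x‖ ^ 2 ∂volume)
          ≤ C * Real.sqrt (∫ x, ∑ j, ‖Φ x j‖ ^ 2 ∂volume)
              * Real.sqrt (∑ j, ∫ x, ‖fderiv ℝ (fun z => Φ z j) x‖ ^ 2 ∂volume)
              * Real.sqrt (∫ x in Ω, ‖Υ x‖ ^ 2 ∂volume) := by
  refine ⟨2, by norm_num, ?_⟩
  intro Φ hC1 hcs hsub Υ hΥ
  set S : EuclideanSpace ℝ (Fin 3) → ℝ :=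
    fun x => ∫ y, (∑ j, ‖Φ y j‖ ^ 2) / ‖x - y‖ with hSdef
  set L : ℝ := Real.sqrt (∫ x, ∑ j, ‖Φ x j‖ ^ 2) with hLdef
  set Dr : ℝ := Real.sqrt (∑ j, ∫ x, ‖fderiv ℝ (fun z => Φ z j) x‖ ^ 2) with hDdef
  have hL0 : 0 ≤ L := Real.sqrt_nonneg _
  have hD0 : 0 ≤ Dr := Real.sqrt_nonneg _
  have hS0 : ∀ x, 0 ≤ S x := fun x => integral_nonneg
    (fun y => div_nonneg (Finset.sum_nonneg (fun j _ => sq_nonneg _)) (norm_nonneg _))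
  have hSb : ∀ x, S x ≤ L * (2 * Dr) := fun x => pointwise_S_bound Φ hC1 hcs x
  set c : ℝ := L * (2 * Dr) with hcdef
  have hc0 : 0 ≤ c := mul_nonneg hL0 (mul_nonneg (by norm_num) hD0)
  -- integrability of ‖Υ‖²
  have hΥ2 : Integrable (fun x => ‖Υ x‖ ^ 2) (volume.restrict Ω) := by
    have h := hΥ.integrable_norm_rpow (by norm_num) (by norm_num)
    refine h.congr (Eventually.of_forall (fun x => ?_))
    norm_num
  have hmono : (∫ x in Ω, ‖S x • Υ x‖ ^ 2)
      ≤ ∫ x in Ω, c ^ 2 * ‖Υ x‖ ^ 2 := by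
    refine integral_mono_of_nonneg (Eventually.of_forall (fun x => by positivity))
      (hΥ2.const_mul _) (Eventually.of_forall (fun x => ?_))
    have h1 : ‖S x • Υ x‖ = S x * ‖Υ x‖ := by
      rw [norm_smul, Real.norm_eq_abs, abs_of_nonneg (hS0 x)]
    show ‖S x • Υ x‖ ^ 2 ≤ c ^ 2 * ‖Υ x‖ ^ 2
    rw [h1, mul_pow]
    refine mul_le_mul_of_nonneg_right ?_ (sq_nonneg _)
    exact pow_le_pow_left₀ (hS0 x) (hSb x) 2
  have hstep := Real.sqrt_le_sqrt hmono
  refine hstep.trans ?_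
  rw [integral_const_mul, Real.sqrt_mul (sq_nonneg c), Real.sqrt_sq hc0]
  rw [show (2 : ℝ) * L * Dr * Real.sqrt (∫ x in Ω, ‖Υ x‖ ^ 2)
      = c * Real.sqrt (∫ x in Ω, ‖Υ x‖ ^ 2) by rw [hcdef]; ring]
end

section
/- Let Ω ⊂ ℝ³ be a bounded open set, N ≥ 1, and m ≥ 1. Let Φ₁, …, Φ_m : ℝ³ → ℂᴺ be continuously differentiable with compact support contained in Ω. For d = (d¹, …, dᵐ) ∈ ℂᵐ set Ψ_d := Σ_{l=1}^m d^l Φ_l, and for each k ∈ {1,…,m} define G^k : ℂᵐ → ℂ by G^k(d) := ∫_Ω V_H(Ψ_d)(x) · ⟨Ψ_d(x), Φ_k(x)⟩_{ℂᴺ} dx, where V_H(Ψ_d)(x) := ∫_{ℝ³} ρ(Ψ_d)(y)/‖x − y‖ dy. Then each G^k is locally Lipschitz continuous: for every ε > 0 there exists L > 0 such that |G^k(d) − G^k(b)| ≤ L |d − b| for all d, b ∈ ℂᵐ with |d| ≤ ε and |b| ≤ ε. -/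
open MeasureTheory Metric

lemma aux_integrableOn_inv_norm {r : ℝ} (hr : 0 < r) :
    IntegrableOn (fun z : EuclideanSpace ℝ (Fin 3) => ‖z‖⁻¹) (ball 0 r) volume := by
  constructor
  · exact (measurable_norm.inv).aestronglyMeasurable.restrict
  · rw [hasFiniteIntegral_iff_norm]
    have hnorm : ∀ z : EuclideanSpace ℝ (Fin 3),
        ENNReal.ofReal ‖‖z‖⁻¹‖ = ENNReal.ofReal ‖z‖⁻¹ := by
      intro z; rw [Real.norm_eq_abs, abs_of_nonneg (by positivity)]
    simp only [hnorm]
    set S : ℕ → Set (EuclideanSpace ℝ (Fin 3)) :=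
      fun n => ball 0 (r / 2 ^ n) \ ball 0 (r / 2 ^ (n + 1)) with hS
    have hcover : ball (0 : EuclideanSpace ℝ (Fin 3)) r ⊆ {0} ∪ ⋃ n, S n := by
      intro z hz
      rcases eq_or_ne z 0 with h0 | h0
      · exact Or.inl (by simp [h0])
      have hzpos : 0 < ‖z‖ := norm_pos_iff.mpr h0
      have hzr : ‖z‖ < r := by simpa [mem_ball_zero_iff] using hz
      have hex : ∃ n : ℕ, r / 2 ^ (n + 1) ≤ ‖z‖ := by
        obtain ⟨n, hn⟩ := exists_pow_lt_of_lt_one (div_pos hzpos hr) (by norm_num : (1:ℝ)/2 < 1)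
        have h1 : ((1:ℝ)/2) ^ n = 1 / 2 ^ n := by rw [div_pow]; norm_num
        rw [h1] at hn
        refine ⟨n, ?_⟩
        have h2 : r / 2 ^ n ≤ ‖z‖ := by
          have := mul_lt_mul_of_pos_right hn hr
          calc r / 2 ^ n = (1 / 2 ^ n) * r := by ring
            _ ≤ (‖z‖ / r) * r := (mul_le_mul_of_nonneg_right hn.le hr.le)
            _ = ‖z‖ := by field_simp
        refine le_trans ?_ h2
        gcongr
        · exact one_le_two
        · omega
      classical
      set n₀ := Nat.find hex with hn₀
      refine Or.inr (Set.mem_iUnion.mpr ⟨n₀, ?_⟩)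
      constructor
      · rw [mem_ball_zero_iff]
        rcases Nat.eq_zero_or_pos n₀ with h | h
        · rw [h]; simpa using hzr
        · have hmin := Nat.find_min hex (m := n₀ - 1) (by omega)
          push_neg at hmin
          simpa [Nat.sub_add_cancel h] using hmin
      · intro hmem
        rw [mem_ball_zero_iff] at hmem
        exact absurd (Nat.find_spec hex) (not_le.mpr hmem)
    calc ∫⁻ z in ball (0 : EuclideanSpace ℝ (Fin 3)) r, ENNReal.ofReal ‖z‖⁻¹
        ≤ ∫⁻ z in ({0} ∪ ⋃ n, S n : Set (EuclideanSpace ℝ (Fin 3))), ENNReal.ofReal ‖z‖⁻¹ :=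
          lintegral_mono_set hcover
      _ ≤ (∫⁻ z in ({0} : Set (EuclideanSpace ℝ (Fin 3))), ENNReal.ofReal ‖z‖⁻¹)
          + ∫⁻ z in (⋃ n, S n), ENNReal.ofReal ‖z‖⁻¹ := lintegral_union_le _ _ _
      _ = ∫⁻ z in (⋃ n, S n), ENNReal.ofReal ‖z‖⁻¹ := by
          rw [setLIntegral_measure_zero _ _ (measure_singleton 0), zero_add]
      _ ≤ ∑' n, ∫⁻ z in S n, ENNReal.ofReal ‖z‖⁻¹ := lintegral_iUnion_le _ _
      _ ≤ ∑' n, ENNReal.ofReal (2 * r ^ 2 * (1/4 : ℝ) ^ n)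
            * volume (ball (0 : EuclideanSpace ℝ (Fin 3)) 1) := by
          refine ENNReal.tsum_le_tsum fun n => ?_
          have hstep : ∫⁻ z in S n, ENNReal.ofReal ‖z‖⁻¹
              ≤ ∫⁻ _z in S n, ENNReal.ofReal (2 ^ (n+1) / r) := by
            refine setLIntegral_mono measurable_const fun z hz => ?_
            refine ENNReal.ofReal_le_ofReal ?_
            have hz2 : r / 2 ^ (n+1) ≤ ‖z‖ := by
              have := hz.2
              rw [mem_ball_zero_iff] at this
              exact not_lt.mp this
            have hpos : (0:ℝ) < r / 2 ^ (n+1) := by positivity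
            calc ‖z‖⁻¹ ≤ (r / 2 ^ (n+1))⁻¹ := inv_anti₀ hpos hz2
              _ = 2 ^ (n+1) / r := by field_simp
          refine hstep.trans ?_
          rw [setLIntegral_const]
          have hvol : volume (S n)
              ≤ ENNReal.ofReal ((r / 2 ^ n) ^ 3) * volume (ball (0 : EuclideanSpace ℝ (Fin 3)) 1) := by
            calc volume (S n) ≤ volume (ball (0 : EuclideanSpace ℝ (Fin 3)) (r / 2 ^ n)) :=
                  measure_mono Set.diff_subset
              _ = ENNReal.ofReal ((r / 2 ^ n) ^ Module.finrank ℝ (EuclideanSpace ℝ (Fin 3)))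
                    * volume (ball (0 : EuclideanSpace ℝ (Fin 3)) 1) := Measure.addHaar_ball volume 0 (by positivity)
              _ = ENNReal.ofReal ((r / 2 ^ n) ^ 3) * volume (ball (0 : EuclideanSpace ℝ (Fin 3)) 1) := by
                  rw [finrank_euclideanSpace]; norm_num
          have key : 2 * r ^ 2 * (1/4 : ℝ) ^ n = 2 ^ (n+1) / r * (r / 2 ^ n) ^ 3 := by
            have h4 : ((1:ℝ)/4) ^ n = 1 / ((2:ℝ) ^ n * 2 ^ n) := by
              rw [div_pow, one_pow, show (4:ℝ) = 2 * 2 by norm_num, mul_pow]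
            rw [h4, pow_succ, div_pow]
            have ht : (2:ℝ) ^ n ≠ 0 := by positivity
            field_simp
            ring
          calc ENNReal.ofReal (2 ^ (n+1) / r) * volume (S n)
              ≤ ENNReal.ofReal (2 ^ (n+1) / r)
                  * (ENNReal.ofReal ((r / 2 ^ n) ^ 3) * volume (ball (0 : EuclideanSpace ℝ (Fin 3)) 1)) := by gcongr
            _ = ENNReal.ofReal (2 * r ^ 2 * (1/4 : ℝ) ^ n) * volume (ball (0 : EuclideanSpace ℝ (Fin 3)) 1) := by
                rw [key, ENNReal.ofReal_mul (by positivity), mul_assoc]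
      _ < ⊤ := by
          rw [ENNReal.tsum_mul_right]
          refine ENNReal.mul_lt_top ?_ measure_ball_lt_top
          have hre : ∀ n : ℕ, ENNReal.ofReal (2 * r ^ 2 * (1/4 : ℝ) ^ n)
              = ENNReal.ofReal (2 * r ^ 2) * ENNReal.ofReal ((1/4 : ℝ)) ^ n := by
            intro n
            rw [← ENNReal.ofReal_pow (by norm_num), ← ENNReal.ofReal_mul (by positivity)]
          simp only [hre]
          rw [ENNReal.tsum_mul_left, ENNReal.tsum_geometric]
          refine ENNReal.mul_lt_top ENNReal.ofReal_lt_top ?_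
          rw [ENNReal.inv_lt_top, tsub_pos_iff_lt]
          exact ENNReal.ofReal_lt_one.mpr (by norm_num)

lemma aux_main
    (Ω : Set (EuclideanSpace ℝ (Fin 3)))
    (hΩmeas : MeasurableSet Ω) (hΩfin : volume Ω ≠ ⊤)
    (m : ℕ)
    (ρ : EuclideanSpace ℂ (Fin m) → EuclideanSpace ℝ (Fin 3) → ℝ)
    (P : EuclideanSpace ℂ (Fin m) → EuclideanSpace ℝ (Fin 3) → ℂ)
    (K : Set (EuclideanSpace ℝ (Fin 3)))
    (R0 : ℝ) (hR0 : 0 < R0)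
    (hKR : K ⊆ ball 0 R0) (hΩR : Ω ⊆ ball 0 R0)
    (ε Cb Cρ Cp Cp' : ℝ)
    (hCb : 0 ≤ Cb) (hCρ : 0 ≤ Cρ) (hCp : 0 ≤ Cp) (hCp' : 0 ≤ Cp')
    (hρ_cont : ∀ c, Continuous (ρ c))
    (hρ_nonneg : ∀ c y, 0 ≤ ρ c y)
    (hρ_supp : ∀ c y, y ∉ K → ρ c y = 0)
    (hρ_bound : ∀ c : EuclideanSpace ℂ (Fin m), ‖c‖ ≤ ε → ∀ y, ρ c y ≤ Cb)
    (hρ_lip : ∀ d b : EuclideanSpace ℂ (Fin m), ‖d‖ ≤ ε → ‖b‖ ≤ ε →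
      ∀ y, |ρ d y - ρ b y| ≤ Cρ * ‖d - b‖)
    (hP_cont : ∀ c, Continuous (P c))
    (hP_bound : ∀ c : EuclideanSpace ℂ (Fin m), ‖c‖ ≤ ε → ∀ x, ‖P c x‖ ≤ Cp)
    (hP_lip : ∀ d b : EuclideanSpace ℂ (Fin m), ∀ x, ‖P d x - P b x‖ ≤ Cp' * ‖d - b‖) :
    ∃ L > (0:ℝ), ∀ d b : EuclideanSpace ℂ (Fin m), ‖d‖ ≤ ε → ‖b‖ ≤ ε →
      ‖(∫ x in Ω, ((∫ y, ρ d y / ‖x - y‖ ∂volume : ℝ) : ℂ) * P d x ∂volume)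
        - ∫ x in Ω, ((∫ y, ρ b y / ‖x - y‖ ∂volume : ℝ) : ℂ) * P b x ∂volume‖
        ≤ L * ‖d - b‖ := by
  classical
  set R : ℝ := 2 * R0 with hR
  have hRpos : 0 < R := by positivity
  set J : ℝ := ∫ z in ball (0 : (EuclideanSpace ℝ (Fin 3))) R, ‖z‖⁻¹ ∂volume with hJ
  have hJint : IntegrableOn (fun z : (EuclideanSpace ℝ (Fin 3)) => ‖z‖⁻¹) (ball 0 R) volume :=
    aux_integrableOn_inv_norm hRpos
  have hJnonneg : 0 ≤ J :=
    setIntegral_nonneg measurableSet_ball fun z _ => inv_nonneg.mpr (norm_nonneg _)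
  -- dominating function
  set hdom : (EuclideanSpace ℝ (Fin 3)) → (EuclideanSpace ℝ (Fin 3)) → ℝ := fun x y => (ball x R).indicator (fun y => ‖x - y‖⁻¹) y with hhdom
  have hdom_eq : ∀ x y : (EuclideanSpace ℝ (Fin 3)), hdom x y = (ball (0 : (EuclideanSpace ℝ (Fin 3))) R).indicator (fun z => ‖z‖⁻¹) (x - y) := by
    intro x y
    have hmem : y ∈ ball x R ↔ x - y ∈ ball (0 : (EuclideanSpace ℝ (Fin 3))) R := by
      rw [mem_ball_zero_iff, mem_ball, dist_eq_norm, ← norm_neg, neg_sub]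
    by_cases h : y ∈ ball x R
    · rw [hhdom]; simp only [Set.indicator_of_mem h, Set.indicator_of_mem (hmem.mp h)]
    · rw [hhdom]; simp only [Set.indicator_of_notMem h,
        Set.indicator_of_notMem (fun hc => h (hmem.mpr hc))]
  have hdom_nonneg : ∀ x y : (EuclideanSpace ℝ (Fin 3)), 0 ≤ hdom x y := by
    intro x y
    exact Set.indicator_nonneg (fun y _ => inv_nonneg.mpr (norm_nonneg _)) y
  have hdom_int : ∀ x : (EuclideanSpace ℝ (Fin 3)), Integrable (hdom x) volume := by
    intro x
    have h1 : Integrable ((ball (0 : (EuclideanSpace ℝ (Fin 3))) R).indicator fun z => ‖z‖⁻¹) volume :=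
      (integrable_indicator_iff measurableSet_ball).mpr hJint
    have h2 := h1.comp_sub_left x
    refine h2.congr (Filter.Eventually.of_forall fun y => ?_)
    exact (hdom_eq x y).symm
  have hdom_integral : ∀ x : (EuclideanSpace ℝ (Fin 3)), ∫ y, hdom x y ∂volume = J := by
    intro x
    simp_rw [hdom_eq]
    rw [integral_sub_left_eq_self ((ball (0 : (EuclideanSpace ℝ (Fin 3))) R).indicator fun z => ‖z‖⁻¹) volume x,
      integral_indicator measurableSet_ball]
  have hK_ball : ∀ x ∈ ball (0 : (EuclideanSpace ℝ (Fin 3))) R0, K ⊆ ball x R := by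
    intro x hx y hy
    have h1 : ‖y‖ < R0 := mem_ball_zero_iff.mp (hKR hy)
    have h2 : ‖x‖ < R0 := mem_ball_zero_iff.mp hx
    rw [mem_ball, dist_eq_norm]
    calc ‖y - x‖ ≤ ‖y‖ + ‖x‖ := norm_sub_le _ _
      _ < R0 + R0 := by linarith
      _ = R := by rw [hR]; ring
  -- pointwise domination
  have hg_le : ∀ (c : EuclideanSpace ℂ (Fin m)) (C : ℝ), 0 ≤ C → (∀ y, ρ c y ≤ C) →
      ∀ x ∈ ball (0 : (EuclideanSpace ℝ (Fin 3))) R0, ∀ y, |ρ c y / ‖x - y‖| ≤ C * hdom x y := by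
    intro c C hC hbound x hx y
    by_cases hy : y ∈ K
    · rw [hhdom]
      simp only [Set.indicator_of_mem (hK_ball x hx hy)]
      rw [div_eq_mul_inv, abs_of_nonneg (mul_nonneg (hρ_nonneg c y) (inv_nonneg.mpr (norm_nonneg _)))]
      exact mul_le_mul_of_nonneg_right (hbound y) (inv_nonneg.mpr (norm_nonneg _))
    · rw [hρ_supp c y hy]
      simp only [zero_div, abs_zero]
      exact mul_nonneg hC (hdom_nonneg x y)
  have hg_meas : ∀ (c : EuclideanSpace ℂ (Fin m)) (x : (EuclideanSpace ℝ (Fin 3))),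
      AEStronglyMeasurable (fun y => ρ c y / ‖x - y‖) volume := by
    intro c x
    exact ((hρ_cont c).measurable.div
      ((measurable_const.sub measurable_id).norm)).aestronglyMeasurable
  have hg_int : ∀ (c : EuclideanSpace ℂ (Fin m)) (C : ℝ), 0 ≤ C → (∀ y, ρ c y ≤ C) →
      ∀ x ∈ ball (0 : (EuclideanSpace ℝ (Fin 3))) R0, Integrable (fun y => ρ c y / ‖x - y‖) volume := by
    intro c C hC hbound x hx
    refine Integrable.mono' ((hdom_int x).const_mul C) (hg_meas c x)
      (Filter.Eventually.of_forall fun y => ?_)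
    rw [Real.norm_eq_abs]
    exact hg_le c C hC hbound x hx y
  -- the Hartree potential
  set V : EuclideanSpace ℂ (Fin m) → (EuclideanSpace ℝ (Fin 3)) → ℝ :=
    fun c x => ∫ y, ρ c y / ‖x - y‖ ∂volume with hV
  have hV_meas : ∀ c, AEStronglyMeasurable (V c) volume := by
    intro c
    have hF : StronglyMeasurable
        (fun p : (EuclideanSpace ℝ (Fin 3)) × (EuclideanSpace ℝ (Fin 3)) =>
          ρ c p.2 / ‖p.1 - p.2‖) :=
      (((hρ_cont c).measurable.comp measurable_snd).div
        ((measurable_fst.sub measurable_snd).norm)).stronglyMeasurable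
    exact hF.integral_prod_right'.aestronglyMeasurable
  have hV_bound : ∀ c : EuclideanSpace ℂ (Fin m), ‖c‖ ≤ ε → ∀ x ∈ ball (0 : EuclideanSpace ℝ (Fin 3)) R0,
      |V c x| ≤ Cb * J := by
    intro c hc x hx
    have h : ‖∫ y, ρ c y / ‖x - y‖ ∂volume‖ ≤ ∫ y, Cb * hdom x y ∂volume :=
      norm_integral_le_of_norm_le ((hdom_int x).const_mul Cb)
        (Filter.Eventually.of_forall fun y => by
          rw [Real.norm_eq_abs]; exact hg_le c Cb hCb (hρ_bound c hc) x hx y)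
    rw [integral_const_mul, hdom_integral x] at h
    exact h
  have hV_lip : ∀ d b : EuclideanSpace ℂ (Fin m), ‖d‖ ≤ ε → ‖b‖ ≤ ε →
      ∀ x ∈ ball (0 : EuclideanSpace ℝ (Fin 3)) R0,
      |V d x - V b x| ≤ Cρ * ‖d - b‖ * J := by
    intro d b hd hb x hx
    have hid : Integrable (fun y => ρ d y / ‖x - y‖) volume :=
      hg_int d Cb hCb (hρ_bound d hd) x hx
    have hib : Integrable (fun y => ρ b y / ‖x - y‖) volume :=
      hg_int b Cb hCb (hρ_bound b hb) x hx
    have hsub : V d x - V b x = ∫ y, (ρ d y - ρ b y) / ‖x - y‖ ∂volume := by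
      rw [hV]
      rw [← integral_sub hid hib]
      congr 1
      funext y
      rw [sub_div]
    rw [hsub]
    have hptwise : ∀ y, |(ρ d y - ρ b y) / ‖x - y‖| ≤ (Cρ * ‖d - b‖) * hdom x y := by
      intro y
      by_cases hy : y ∈ K
      · rw [hhdom]
        simp only [Set.indicator_of_mem (hK_ball x hx hy)]
        rw [div_eq_mul_inv, abs_mul, abs_inv, abs_norm]
        exact mul_le_mul_of_nonneg_right (hρ_lip d b hd hb y)
          (inv_nonneg.mpr (norm_nonneg _))
      · rw [hρ_supp d y hy, hρ_supp b y hy]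
        simp only [sub_zero, zero_div, abs_zero]
        exact mul_nonneg (mul_nonneg hCρ (norm_nonneg _)) (hdom_nonneg x y)
    have h : ‖∫ y, (ρ d y - ρ b y) / ‖x - y‖ ∂volume‖ ≤ ∫ y, (Cρ * ‖d - b‖) * hdom x y ∂volume :=
      norm_integral_le_of_norm_le ((hdom_int x).const_mul _)
        (Filter.Eventually.of_forall fun y => by
          rw [Real.norm_eq_abs]; exact hptwise y)
    rw [integral_const_mul, hdom_integral x] at h
    exact h
  -- the integrand
  set f : EuclideanSpace ℂ (Fin m) → (EuclideanSpace ℝ (Fin 3)) → ℂ :=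
    fun c x => ((V c x : ℝ) : ℂ) * P c x with hf
  have hf_meas : ∀ c, AEStronglyMeasurable (f c) volume := by
    intro c
    exact (Complex.continuous_ofReal.comp_aestronglyMeasurable (hV_meas c)).mul
      (hP_cont c).aestronglyMeasurable
  have hf_int : ∀ c : EuclideanSpace ℂ (Fin m), ‖c‖ ≤ ε → IntegrableOn (f c) Ω volume := by
    intro c hc
    refine Measure.integrableOn_of_bounded hΩfin (hf_meas c) (M := Cb * J * Cp) ?_
    refine (ae_restrict_iff' hΩmeas).mpr (Filter.Eventually.of_forall fun x hx => ?_)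
    rw [hf]
    simp only [norm_mul, Complex.norm_real]
    have h1 : ‖V c x‖ ≤ Cb * J := by
      rw [Real.norm_eq_abs]; exact hV_bound c hc x (hΩR hx)
    exact mul_le_mul h1 (hP_bound c hc x) (norm_nonneg _) (mul_nonneg hCb hJnonneg)
  have hL0 : 0 ≤ J * Cp * Cρ + Cb * J * Cp' := by
    have h1 := mul_nonneg (mul_nonneg hJnonneg hCp) hCρ
    have h2 := mul_nonneg (mul_nonneg hCb hJnonneg) hCp'
    linarith
  have hL1 : 0 ≤ (J * Cp * Cρ + Cb * J * Cp') * (volume Ω).toReal :=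
    mul_nonneg hL0 ENNReal.toReal_nonneg
  refine ⟨(J * Cp * Cρ + Cb * J * Cp') * (volume Ω).toReal + 1, by linarith, ?_⟩
  intro d b hd hb
  have key : ‖(∫ x in Ω, f d x ∂volume) - ∫ x in Ω, f b x ∂volume‖
      ≤ (J * Cp * Cρ + Cb * J * Cp') * ‖d - b‖ * (volume Ω).toReal := by
    rw [← integral_sub (hf_int d hd) (hf_int b hb)]
    refine norm_setIntegral_le_of_norm_le_const (lt_top_iff_ne_top.mpr hΩfin) ?_
    intro x hx
    have hxball := hΩR hx
    have hsplit : f d x - f b x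
        = ((V d x - V b x : ℝ) : ℂ) * P d x + ((V b x : ℝ) : ℂ) * (P d x - P b x) := by
      rw [hf]; push_cast; ring
    rw [hsplit]
    calc ‖((V d x - V b x : ℝ) : ℂ) * P d x + ((V b x : ℝ) : ℂ) * (P d x - P b x)‖
        ≤ ‖((V d x - V b x : ℝ) : ℂ) * P d x‖ + ‖((V b x : ℝ) : ℂ) * (P d x - P b x)‖ :=
          norm_add_le _ _
      _ = |V d x - V b x| * ‖P d x‖ + |V b x| * ‖P d x - P b x‖ := by
          rw [norm_mul, norm_mul, Complex.norm_real, Complex.norm_real,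
            Real.norm_eq_abs, Real.norm_eq_abs]
      _ ≤ (Cρ * ‖d - b‖ * J) * Cp + (Cb * J) * (Cp' * ‖d - b‖) := by
          refine add_le_add ?_ ?_
          · exact mul_le_mul (hV_lip d b hd hb x hxball) (hP_bound d hd x)
              (norm_nonneg _) (by positivity)
          · exact mul_le_mul (hV_bound b hb x hxball) (hP_lip d b x)
              (norm_nonneg _) (by positivity)
      _ = (J * Cp * Cρ + Cb * J * Cp') * ‖d - b‖ := by ring
  refine key.trans ?_
  have h1 : (J * Cp * Cρ + Cb * J * Cp') * ‖d - b‖ * (volume Ω).toReal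
      = ((J * Cp * Cρ + Cb * J * Cp') * (volume Ω).toReal) * ‖d - b‖ := by ring
  rw [h1]
  exact mul_le_mul_of_nonneg_right (by linarith) (norm_nonneg _)

lemma euclid_comp_le {𝕜 : Type*} [RCLike 𝕜] {n : ℕ} (f : EuclideanSpace 𝕜 (Fin n)) (j : Fin n) :
    ‖f j‖ ≤ ‖f‖ := by
  rw [EuclideanSpace.norm_eq, show ‖f j‖ = Real.sqrt (‖f j‖ ^ 2) from
    (Real.sqrt_sq (norm_nonneg _)).symm]
  exact Real.sqrt_le_sqrt
    (Finset.single_le_sum (f := fun i => ‖f i‖ ^ 2) (fun i _ => sq_nonneg _) (Finset.mem_univ j))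

/-- Local Lipschitz continuity of the Hartree term in the Galerkin ODE system.
Let `Ω ⊆ ℝ³` be bounded open, and let `Φ₁, …, Φₘ : ℝ³ → ℂᴺ` be `C¹` with compact
support contained in `Ω`.  For `d ∈ ℂᵐ` set `Ψ_d = Σₗ dˡ Φₗ` and
`G^k(d) = ∫_Ω V_H(Ψ_d)(x) ⟨Ψ_d(x), Φₖ(x)⟩_{ℂᴺ} dx`, where
`V_H(Ψ)(x) = ∫_{ℝ³} ρ(Ψ)(y)/‖x−y‖ dy` and `ρ(Ψ) = Σⱼ |ψⱼ|²`.
Then every `G^k` is locally Lipschitz: for every `ε > 0` there is `L > 0` with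
`|G^k(d) − G^k(b)| ≤ L |d − b|` whenever `|d| ≤ ε` and `|b| ≤ ε`. -/
theorem galerkin_hartree_locally_lipschitz
    (Ω : Set (EuclideanSpace ℝ (Fin 3)))
    (hΩo : IsOpen Ω) (hΩb : Bornology.IsBounded Ω)
    (N : ℕ) (hN : 1 ≤ N) (m : ℕ) (hm : 1 ≤ m)
    (Φ : Fin m → EuclideanSpace ℝ (Fin 3) → EuclideanSpace ℂ (Fin N))
    (hΦ : ∀ l, ContDiff ℝ 1 (Φ l))
    (hΦsupp : ∀ l, HasCompactSupport (Φ l))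
    (hΦΩ : ∀ l, tsupport (Φ l) ⊆ Ω)
    (k : Fin m) :
    ∀ ε > (0 : ℝ), ∃ L > (0 : ℝ), ∀ d b : EuclideanSpace ℂ (Fin m),
      ‖d‖ ≤ ε → ‖b‖ ≤ ε →
      ‖(∫ x in Ω,
            ((∫ y, (∑ j, ‖∑ l, d l • Φ l y j‖ ^ 2) / ‖x - y‖ ∂volume : ℝ) : ℂ)
              * ∑ j, (∑ l, d l • Φ l x j) * (starRingEnd ℂ) (Φ k x j) ∂volume)
        - ∫ x in Ω,
            ((∫ y, (∑ j, ‖∑ l, b l • Φ l y j‖ ^ 2) / ‖x - y‖ ∂volume : ℝ) : ℂ)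
              * ∑ j, (∑ l, b l • Φ l x j) * (starRingEnd ℂ) (Φ k x j) ∂volume‖
        ≤ L * ‖d - b‖ := by

  intro ε hε
  -- bound on the basis functions
  choose C hC using fun l => (hΦ l).continuous.bounded_above_of_compact_support (hΦsupp l)
  set M : ℝ := 1 + ∑ l, |C l| with hM
  have hM1 : (1:ℝ) ≤ M := by
    rw [hM]
    have : (0:ℝ) ≤ ∑ l, |C l| := Finset.sum_nonneg fun l _ => abs_nonneg _
    linarith
  have hM0 : (0:ℝ) ≤ M := by linarith
  have hMl : ∀ l x, ‖Φ l x‖ ≤ M := by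
    intro l x
    calc ‖Φ l x‖ ≤ C l := hC l x
      _ ≤ |C l| := le_abs_self _
      _ ≤ ∑ i, |C i| := Finset.single_le_sum (f := fun i => |C i|)
          (fun i _ => abs_nonneg _) (Finset.mem_univ l)
      _ ≤ M := by rw [hM]; linarith
  have hMlj : ∀ l x j, ‖Φ l x j‖ ≤ M := fun l x j => (euclid_comp_le _ j).trans (hMl l x)
  -- component continuity
  have hcomp : ∀ l (j : Fin N), Continuous fun y => Φ l y j := by
    intro l j
    exact (continuous_apply j).comp ((PiLp.continuous_ofLp (p := 2) (β := fun _ : Fin N => ℂ)).comp (hΦ l).continuous)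
  -- the sum Ψ
  have hS : ∀ (c : EuclideanSpace ℂ (Fin m)) x (j : Fin N),
      ‖∑ l, c l • Φ l x j‖ ≤ m * ‖c‖ * M := by
    intro c x j
    calc ‖∑ l, c l • Φ l x j‖ ≤ ∑ l, ‖c l • Φ l x j‖ := norm_sum_le _ _
      _ ≤ ∑ _l : Fin m, ‖c‖ * M := by
          refine Finset.sum_le_sum fun l _ => ?_
          rw [norm_smul]
          exact mul_le_mul (euclid_comp_le c l) (hMlj l x j) (norm_nonneg _) (norm_nonneg _)
      _ = m * ‖c‖ * M := by
          rw [Finset.sum_const, Finset.card_univ, Fintype.card_fin, nsmul_eq_mul]; ring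
  have hS_sub : ∀ (d b : EuclideanSpace ℂ (Fin m)) x (j : Fin N),
      (∑ l, d l • Φ l x j) - ∑ l, b l • Φ l x j = ∑ l, (d - b) l • Φ l x j := by
    intro d b x j
    rw [← Finset.sum_sub_distrib]
    refine Finset.sum_congr rfl fun l _ => ?_
    rw [← sub_smul]
    congr 1
  have hmono : ∀ (c : EuclideanSpace ℂ (Fin m)), ‖c‖ ≤ ε →
      ∀ x (j : Fin N), ‖∑ l, c l • Φ l x j‖ ≤ m * ε * M := by
    intro c hc x j
    refine (hS c x j).trans ?_
    refine mul_le_mul_of_nonneg_right ?_ hM0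
    exact mul_le_mul_of_nonneg_left hc (by positivity)
  -- apply the abstract lemma
  obtain ⟨R0, hR0pos, hΩR⟩ := hΩb.subset_ball_lt 0 0
  have hKR : (⋃ l, tsupport (Φ l)) ⊆ ball (0 : EuclideanSpace ℝ (Fin 3)) R0 := by
    refine Set.iUnion_subset fun l => (hΦΩ l).trans hΩR
  have hzero : ∀ (c : EuclideanSpace ℂ (Fin m)) y, y ∉ (⋃ l, tsupport (Φ l)) →
      ∀ (j : Fin N), (∑ l, c l • Φ l y j) = 0 := by
    intro c y hy j
    have hz : ∀ l, Φ l y = 0 := fun l =>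
      image_eq_zero_of_notMem_tsupport fun hc => hy (Set.mem_iUnion.mpr ⟨l, hc⟩)
    have hzj : ∀ l, Φ l y j = 0 := fun l => by rw [hz l]; rfl
    simp [hzj]
  obtain ⟨L, hL, hmain⟩ := aux_main Ω hΩo.measurableSet hΩb.measure_lt_top.ne m
    (fun c y => ∑ j, ‖∑ l, c l • Φ l y j‖ ^ 2)
    (fun c x => ∑ j, (∑ l, c l • Φ l x j) * (starRingEnd ℂ) (Φ k x j))
    (⋃ l, tsupport (Φ l)) R0 hR0pos hKR hΩR ε
    (N * (m * ε * M) ^ 2) (N * (2 * m ^ 2 * M ^ 2 * ε)) (N * ((m * ε * M) * M))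
    (N * (m * M ^ 2))
    (by positivity)
    (by positivity)
    (by positivity)
    (by positivity)
    (by -- continuity of ρ
      intro c
      refine continuous_finset_sum _ fun j _ => ?_
      exact ((continuous_finset_sum _ fun l _ => (hcomp l j).const_smul (c l)).norm).pow 2)
    (by intro c y; exact Finset.sum_nonneg fun j _ => sq_nonneg _)
    (by -- support
      intro c y hy
      refine Finset.sum_eq_zero fun j _ => ?_
      rw [hzero c y hy j, norm_zero]
      norm_num)
    (by -- bound on ρ
      intro c hc y
      calc ∑ j, ‖∑ l, c l • Φ l y j‖ ^ 2 ≤ ∑ _j : Fin N, (m * ε * M) ^ 2 := by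
            refine Finset.sum_le_sum fun j _ => ?_
            exact pow_le_pow_left₀ (norm_nonneg _) (hmono c hc y j) 2
        _ = N * (m * ε * M) ^ 2 := by
            rw [Finset.sum_const, Finset.card_univ, Fintype.card_fin, nsmul_eq_mul]
      )
    (by -- Lipschitz for ρ
      intro d b hd hb y
      have hdiff : (∑ j, ‖∑ l, d l • Φ l y j‖ ^ 2) - ∑ j, ‖∑ l, b l • Φ l y j‖ ^ 2
          = ∑ j, (‖∑ l, d l • Φ l y j‖ ^ 2 - ‖∑ l, b l • Φ l y j‖ ^ 2) :=
        (Finset.sum_sub_distrib _ _).symm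
      rw [hdiff]
      calc |∑ j, (‖∑ l, d l • Φ l y j‖ ^ 2 - ‖∑ l, b l • Φ l y j‖ ^ 2)|
          ≤ ∑ j, |‖∑ l, d l • Φ l y j‖ ^ 2 - ‖∑ l, b l • Φ l y j‖ ^ 2| :=
            Finset.abs_sum_le_sum_abs _ _
        _ ≤ ∑ _j : Fin N, 2 * m ^ 2 * M ^ 2 * ε * ‖d - b‖ := by
            refine Finset.sum_le_sum fun j _ => ?_
            set a := ∑ l, d l • Φ l y j with ha
            set c := ∑ l, b l • Φ l y j with hc
            have h1 : ‖a‖ ^ 2 - ‖c‖ ^ 2 = (‖a‖ + ‖c‖) * (‖a‖ - ‖c‖) := by ring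
            rw [h1, abs_mul]
            have h2 : |‖a‖ - ‖c‖| ≤ ‖a - c‖ := abs_norm_sub_norm_le _ _
            have h3 : ‖a - c‖ ≤ m * ‖d - b‖ * M := by
              rw [ha, hc, hS_sub d b y j]
              exact hS (d - b) y j
            have h4 : |‖a‖ + ‖c‖| ≤ 2 * (m * ε * M) := by
              rw [abs_of_nonneg (by positivity)]
              have hda : ‖a‖ ≤ m * ε * M := hmono d hd y j
              have hdb : ‖c‖ ≤ m * ε * M := hmono b hb y j
              linarith
            calc |‖a‖ + ‖c‖| * |‖a‖ - ‖c‖| ≤ (2 * (m * ε * M)) * (m * ‖d - b‖ * M) := by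
                  refine mul_le_mul h4 (h2.trans h3) (abs_nonneg _) (by positivity)
              _ = 2 * m ^ 2 * M ^ 2 * ε * ‖d - b‖ := by ring
        _ = N * (2 * m ^ 2 * M ^ 2 * ε) * ‖d - b‖ := by
            rw [Finset.sum_const, Finset.card_univ, Fintype.card_fin, nsmul_eq_mul]; ring
      )
    (by -- continuity of P
      intro c
      refine continuous_finset_sum _ fun j _ => ?_
      exact (continuous_finset_sum _ fun l _ => (hcomp l j).const_smul (c l)).mul
        (continuous_star.comp (hcomp k j)))
    (by -- bound on P
      intro c hc x
      calc ‖∑ j, (∑ l, c l • Φ l x j) * (starRingEnd ℂ) (Φ k x j)‖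
          ≤ ∑ j, ‖(∑ l, c l • Φ l x j) * (starRingEnd ℂ) (Φ k x j)‖ := norm_sum_le _ _
        _ ≤ ∑ _j : Fin N, (m * ε * M) * M := by
            refine Finset.sum_le_sum fun j _ => ?_
            rw [norm_mul]
            have h1 : ‖∑ l, c l • Φ l x j‖ ≤ m * ε * M := hmono c hc x j
            have h2 : ‖(starRingEnd ℂ) (Φ k x j)‖ ≤ M := by
              rw [RCLike.norm_conj]; exact hMlj k x j
            exact mul_le_mul h1 h2 (norm_nonneg _) (by positivity)
        _ = N * ((m * ε * M) * M) := by
            rw [Finset.sum_const, Finset.card_univ, Fintype.card_fin, nsmul_eq_mul]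
      )
    (by -- Lipschitz for P
      intro d b x
      have hdiff : (∑ j, (∑ l, d l • Φ l x j) * (starRingEnd ℂ) (Φ k x j))
            - ∑ j, (∑ l, b l • Φ l x j) * (starRingEnd ℂ) (Φ k x j)
          = ∑ j, (∑ l, (d - b) l • Φ l x j) * (starRingEnd ℂ) (Φ k x j) := by
        rw [← Finset.sum_sub_distrib]
        refine Finset.sum_congr rfl fun j _ => ?_
        rw [← sub_mul, hS_sub d b x j]
      rw [hdiff]
      calc ‖∑ j, (∑ l, (d - b) l • Φ l x j) * (starRingEnd ℂ) (Φ k x j)‖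
          ≤ ∑ j, ‖(∑ l, (d - b) l • Φ l x j) * (starRingEnd ℂ) (Φ k x j)‖ := norm_sum_le _ _
        _ ≤ ∑ _j : Fin N, (m * ‖d - b‖ * M) * M := by
            refine Finset.sum_le_sum fun j _ => ?_
            rw [norm_mul]
            refine mul_le_mul (hS (d - b) x j) ?_ (norm_nonneg _) (by positivity)
            rw [RCLike.norm_conj]; exact hMlj k x j
        _ = N * (m * M ^ 2) * ‖d - b‖ := by
            rw [Finset.sum_const, Finset.card_univ, Fintype.card_fin, nsmul_eq_mul]; ring
      )
  exact ⟨L, hL, fun d b hd hb => hmain d b hd hb⟩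
end

section
/- Let Ω ⊂ ℝ³ be a bounded open set and N ≥ 1. There exists a constant C > 0, depending only on N, such that for every continuously differentiable Ψ : ℝ³ → ℂᴺ with compact support contained in Ω: 0 ≤ ⟨V_H(Ψ)Ψ, Ψ⟩_{L²(Ω)} ≤ C ‖Ψ‖³_{L²} ‖∇Ψ‖_{L²}, where ⟨V_H(Ψ)Ψ, Ψ⟩_{L²(Ω)} := ∫_Ω V_H(Ψ)(x) ρ(Ψ)(x) dx and V_H(Ψ)(x) := ∫_{ℝ³} ρ(Ψ)(y)/‖x − y‖ dy. -/
open MeasureTheory Metric Set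
open scoped ENNReal NNReal
noncomputable abbrev E3 := EuclideanSpace ℝ (Fin 3)

lemma frank3 : Module.finrank ℝ E3 = 3 := by simp [finrank_euclideanSpace_fin]

lemma kernel_bound (x : E3) {R : ℝ} (hR : 0 < R) :
    ∫⁻ y in ball x R, ENNReal.ofReal (‖x - y‖⁻¹ ^ 2) ∂volume
      ≤ ENNReal.ofReal (3 * R) * volume (ball (0 : E3) 1) := by
  set v1 := volume (ball (0 : E3) 1) with hv1
  have hmeas : AEMeasurable (fun y : E3 => ‖x - y‖⁻¹ ^ 2)
      (volume.restrict (ball x R)) := by fun_prop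
  rw [lintegral_eq_lintegral_meas_le _ (Filter.Eventually.of_forall (fun y => by positivity)) hmeas]
  set a : ℝ := R ^ (-2 : ℝ) with ha
  have haR : a = (R^2)⁻¹ := by
    rw [ha, Real.rpow_neg hR.le, Real.rpow_two]
  have ha0 : 0 < a := by rw [haR]; positivity
  have hsub : ∀ t : ℝ, 0 < t → {y : E3 | t ≤ ‖x - y‖⁻¹ ^ 2} ⊆ closedBall x (t ^ (-(1/2) : ℝ)) := by
    intro t ht y hy
    simp only [mem_setOf_eq] at hy
    have hxy : 0 < ‖x - y‖ := by
      rcases eq_or_lt_of_le (norm_nonneg (x - y)) with h | h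
      · exfalso; rw [← h] at hy; simp at hy; linarith
      · exact h
    have h1 : ‖x - y‖ ^ 2 ≤ t⁻¹ := by
      rw [inv_pow] at hy
      have := (le_inv_comm₀ ht (by positivity)).mp hy
      linarith
    have h2 : ‖x - y‖ ≤ Real.sqrt t⁻¹ := by
      rw [show ‖x-y‖ = Real.sqrt (‖x-y‖^2) by rw [Real.sqrt_sq hxy.le]]
      exact Real.sqrt_le_sqrt h1
    have h3 : Real.sqrt t⁻¹ = t ^ (-(1/2) : ℝ) := by
      rw [Real.sqrt_eq_rpow, ← Real.rpow_neg_one t, ← Real.rpow_mul ht.le]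
      norm_num
    rw [mem_closedBall, dist_eq_norm, norm_sub_rev, ← h3]
    exact h2
  calc ∫⁻ t in Ioi (0:ℝ), (volume.restrict (ball x R)) {y : E3 | t ≤ ‖x - y‖⁻¹ ^ 2}
      ≤ ∫⁻ t in Ioc (0:ℝ) a ∪ Ioi a, (volume.restrict (ball x R)) {y : E3 | t ≤ ‖x - y‖⁻¹ ^ 2} :=
        lintegral_mono_set Ioi_subset_Ioc_union_Ioi
    _ ≤ (∫⁻ t in Ioc (0:ℝ) a, (volume.restrict (ball x R)) {y : E3 | t ≤ ‖x - y‖⁻¹ ^ 2})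
          + ∫⁻ t in Ioi a, (volume.restrict (ball x R)) {y : E3 | t ≤ ‖x - y‖⁻¹ ^ 2} :=
        lintegral_union_le _ _ _
    _ ≤ (∫⁻ _t in Ioc (0:ℝ) a, ENNReal.ofReal (R ^ 3) * v1)
          + ∫⁻ t in Ioi a, ENNReal.ofReal ((t ^ (-(1/2) : ℝ)) ^ 3) * v1 := by
        refine add_le_add (setLIntegral_mono' measurableSet_Ioc (fun t _ => ?_))
          (setLIntegral_mono' measurableSet_Ioi (fun t ht => ?_))
        · calc (volume.restrict (ball x R)) {y : E3 | t ≤ ‖x - y‖⁻¹ ^ 2}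
              ≤ volume (ball x R) := by
                rw [Measure.restrict_apply' measurableSet_ball]
                exact measure_mono inter_subset_right
          _ = ENNReal.ofReal (R ^ 3) * v1 := by
                rw [Measure.addHaar_ball _ _ hR.le, frank3, hv1]
        · have ht0 : (0:ℝ) < t := lt_trans ha0 ht
          calc (volume.restrict (ball x R)) {y : E3 | t ≤ ‖x - y‖⁻¹ ^ 2}
              ≤ volume (closedBall x (t ^ (-(1/2) : ℝ))) := by
                rw [Measure.restrict_apply' measurableSet_ball]
                exact measure_mono (inter_subset_left.trans (hsub t ht0))
          _ = ENNReal.ofReal ((t ^ (-(1/2) : ℝ)) ^ 3) * v1 := by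
                rw [Measure.addHaar_closedBall _ _ (Real.rpow_nonneg ht0.le _), frank3, hv1]
    _ ≤ ENNReal.ofReal (3 * R) * v1 := by
        have e1 : (∫⁻ _t in Ioc (0:ℝ) a, ENNReal.ofReal (R ^ 3) * v1)
            = ENNReal.ofReal R * v1 := by
          rw [lintegral_const, Measure.restrict_apply MeasurableSet.univ, univ_inter,
            Real.volume_Ioc, sub_zero, mul_comm (ENNReal.ofReal (R ^ 3) * v1),
            ← mul_assoc, ← ENNReal.ofReal_mul ha0.le]
          congr 2
          rw [ha, ← Real.rpow_natCast R 3, ← Real.rpow_add hR]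
          norm_num
        have e2 : (∫⁻ t in Ioi a, ENNReal.ofReal ((t ^ (-(1/2) : ℝ)) ^ 3) * v1)
            = ENNReal.ofReal (2 * R) * v1 := by
          have hcong : ∀ t ∈ Ioi a, ENNReal.ofReal ((t ^ (-(1/2) : ℝ)) ^ 3) * v1
              = ENNReal.ofReal (t ^ (-(3/2) : ℝ)) * v1 := by
            intro t ht
            have ht0 : (0:ℝ) < t := lt_trans ha0 ht
            congr 2
            rw [← Real.rpow_natCast (t ^ (-(1/2):ℝ)) 3, ← Real.rpow_mul ht0.le]
            norm_num
          rw [setLIntegral_congr_fun measurableSet_Ioi hcong,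
            lintegral_mul_const' v1 _ (by rw [hv1]; exact measure_ball_lt_top.ne)]
          congr 1
          rw [← MeasureTheory.ofReal_integral_eq_lintegral_ofReal
            (integrableOn_Ioi_rpow_of_lt (by norm_num) ha0)
            ((ae_restrict_iff' measurableSet_Ioi).mpr (ae_of_all _
              (fun t ht => Real.rpow_nonneg (le_of_lt (lt_trans ha0 ht)) _)))]
          congr 1
          rw [integral_Ioi_rpow_of_lt (by norm_num) ha0]
          have : a ^ (-(3/2) + 1 : ℝ) = R := by
            rw [ha, ← Real.rpow_mul hR.le]
            norm_num
          rw [this]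
          ring
        rw [e1, e2, ← add_mul, ← ENNReal.ofReal_add hR.le (by linarith)]
        ring_nf
        exact le_refl _

lemma rpow_ne_top'' {x : ℝ≥0∞} (h0 : x ≠ 0) (ht : x ≠ ⊤) (y : ℝ) : x ^ y ≠ ⊤ := by
  lift x to NNReal using ht
  have hx : x ≠ 0 := by simpa using h0
  rw [← ENNReal.coe_rpow_of_ne_zero hx]
  exact ENNReal.coe_ne_top

lemma rpow_ne_zero'' {x : ℝ≥0∞} (h0 : x ≠ 0) (ht : x ≠ ⊤) (y : ℝ) : x ^ y ≠ 0 := by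
  simp [ENNReal.rpow_eq_zero_iff, h0, ht]

open ENNReal in
lemma hls (g : E3 → ℝ≥0∞) (hg : Measurable g)
    (hM : ∫⁻ x, g x ∂volume ≠ ⊤) (hS : ∫⁻ x, g x ^ (3:ℝ) ∂volume ≠ ⊤) :
    ∫⁻ x, (∫⁻ y, g y * ENNReal.ofReal ‖x - y‖⁻¹ ∂volume) * g x ∂volume ≤
      ((ENNReal.ofReal 3 * volume (ball (0:E3) 1)) ^ (1/2:ℝ) + 1) *
        (∫⁻ x, g x ∂volume) ^ (3/2:ℝ) * (∫⁻ x, g x ^ (3:ℝ) ∂volume) ^ (1/6:ℝ) := by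
  set v1 := volume (ball (0:E3) 1) with hv1
  set c : ℝ≥0∞ := (ENNReal.ofReal 3 * v1) ^ (1/2:ℝ) with hc
  set M := ∫⁻ x, g x ∂volume with hMdef
  set S3 := ∫⁻ x, g x ^ (3:ℝ) ∂volume with hS3def
  have hcne : c ≠ ⊤ := by
    rw [hc]
    exact (ENNReal.rpow_lt_top_of_nonneg (by norm_num)
      (by exact ENNReal.mul_ne_top ENNReal.ofReal_ne_top measure_ball_lt_top.ne)).ne
  by_cases hM0 : M = 0
  · have hg0 : g =ᵐ[volume] 0 := (lintegral_eq_zero_iff hg).mp hM0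
    have : ∫⁻ x, (∫⁻ y, g y * ENNReal.ofReal ‖x - y‖⁻¹ ∂volume) * g x ∂volume = 0 := by
      rw [← lintegral_zero]
      apply lintegral_congr_ae
      filter_upwards [hg0] with x hx
      simp [hx]
    rw [this]
    exact zero_le
  -- now M ≠ 0
  have hS30 : S3 ≠ 0 := by
    intro h0
    apply hM0
    rw [hMdef, lintegral_eq_zero_iff hg]
    have := (lintegral_eq_zero_iff (hg.pow_const (3:ℝ))).mp h0
    filter_upwards [this] with x hx
    simpa [ENNReal.rpow_eq_zero_iff] using hx
  -- Cauchy-Schwarz for S2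
  have hconj : Real.HolderConjugate 2 2 := Real.HolderConjugate.two_two
  have hS2 : ∫⁻ x, g x ^ (2:ℝ) ∂volume ≤ M ^ (1/2:ℝ) * S3 ^ (1/2:ℝ) := by
    have key := ENNReal.lintegral_mul_le_Lp_mul_Lq volume hconj
      (hg.pow_const (1/2:ℝ)).aemeasurable (hg.pow_const (3/2:ℝ)).aemeasurable
    simp only [Pi.mul_apply] at key
    calc ∫⁻ x, g x ^ (2:ℝ) ∂volume
        = ∫⁻ x, g x ^ ((1:ℝ)/2) * g x ^ ((3:ℝ)/2) ∂volume := by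
          apply lintegral_congr; intro x
          rw [← ENNReal.rpow_add_of_nonneg ((1:ℝ)/2) ((3:ℝ)/2) (by norm_num)
            (by norm_num) (x := g x)]
          norm_num
      _ ≤ (∫⁻ x, (g x ^ ((1:ℝ)/2)) ^ (2:ℝ) ∂volume) ^ ((1:ℝ)/2)
            * (∫⁻ x, (g x ^ ((3:ℝ)/2)) ^ (2:ℝ) ∂volume) ^ ((1:ℝ)/2) := key
      _ = M ^ (1/2:ℝ) * S3 ^ (1/2:ℝ) := by
          congr 1
          · congr 1
            apply lintegral_congr; intro x
            rw [← ENNReal.rpow_mul]; norm_num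
          · congr 1
            apply lintegral_congr; intro x
            rw [← ENNReal.rpow_mul]; norm_num
  set S2 := ∫⁻ x, g x ^ (2:ℝ) ∂volume with hS2def
  set T : ℝ≥0∞ := M ^ ((1:ℝ)/2) * S3 ^ (-((1:ℝ)/6)) with hT
  have hTtop : T ≠ ⊤ := ENNReal.mul_ne_top (rpow_ne_top'' hM0 hM _) (rpow_ne_top'' hS30 hS _)
  have hT0 : T ≠ 0 := mul_ne_zero (rpow_ne_zero'' hM0 hM _) (rpow_ne_zero'' hS30 hS _)
  set R := T.toReal with hRdef
  have hRpos : 0 < R := ENNReal.toReal_pos hT0 hTtop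
  have hRT : ENNReal.ofReal R = T := ENNReal.ofReal_toReal hTtop
  have hWbound : ∀ x : E3, (∫⁻ y, g y * ENNReal.ofReal ‖x - y‖⁻¹ ∂volume)
      ≤ c * T ^ ((1:ℝ)/2) * S2 ^ ((1:ℝ)/2) + T⁻¹ * M := by
    intro x
    rw [← lintegral_add_compl (fun y => g y * ENNReal.ofReal ‖x - y‖⁻¹)
      (measurableSet_ball : MeasurableSet (ball x R))]
    have hkmeas : Measurable fun y : E3 => ENNReal.ofReal ‖x - y‖⁻¹ :=
      ENNReal.measurable_ofReal.comp ((continuous_const.sub continuous_id).norm.measurable.inv)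
    refine add_le_add ?_ ?_
    · -- near part
      calc ∫⁻ y in ball x R, g y * ENNReal.ofReal ‖x - y‖⁻¹ ∂volume
          ≤ (∫⁻ y in ball x R, g y ^ (2:ℝ) ∂volume) ^ ((1:ℝ)/2)
              * (∫⁻ y in ball x R, (ENNReal.ofReal ‖x - y‖⁻¹) ^ (2:ℝ) ∂volume) ^ ((1:ℝ)/2) := by
            have := ENNReal.lintegral_mul_le_Lp_mul_Lq (volume.restrict (ball x R)) hconj
              hg.aemeasurable hkmeas.aemeasurable
            simpa using this
        _ ≤ S2 ^ ((1:ℝ)/2) * (c * T ^ ((1:ℝ)/2)) := by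
            refine mul_le_mul' (ENNReal.rpow_le_rpow (setLIntegral_le_lintegral _ _) (by norm_num)) ?_
            have hker : (∫⁻ y in ball x R, (ENNReal.ofReal ‖x - y‖⁻¹) ^ (2:ℝ) ∂volume)
                ≤ (ENNReal.ofReal 3 * v1) * T := by
              have e : ∀ y : E3, (ENNReal.ofReal ‖x - y‖⁻¹) ^ (2:ℝ)
                  = ENNReal.ofReal (‖x - y‖⁻¹ ^ 2) := by
                intro y
                rw [show ((2:ℝ)) = ((2:ℕ):ℝ) by norm_num, ENNReal.rpow_natCast,
                  ENNReal.ofReal_pow (by positivity)]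
              calc (∫⁻ y in ball x R, (ENNReal.ofReal ‖x - y‖⁻¹) ^ (2:ℝ) ∂volume)
                  = ∫⁻ y in ball x R, ENNReal.ofReal (‖x - y‖⁻¹ ^ 2) ∂volume :=
                    lintegral_congr fun y => e y
                _ ≤ ENNReal.ofReal (3 * R) * v1 := kernel_bound x hRpos
                _ = (ENNReal.ofReal 3 * v1) * T := by
                    rw [ENNReal.ofReal_mul (by norm_num), hRT]
                    ring
            calc (∫⁻ y in ball x R, (ENNReal.ofReal ‖x - y‖⁻¹) ^ (2:ℝ) ∂volume) ^ ((1:ℝ)/2)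
                ≤ ((ENNReal.ofReal 3 * v1) * T) ^ ((1:ℝ)/2) :=
                  ENNReal.rpow_le_rpow hker (by norm_num)
              _ = c * T ^ ((1:ℝ)/2) := by
                  rw [ENNReal.mul_rpow_of_ne_top
                    (ENNReal.mul_ne_top ENNReal.ofReal_ne_top measure_ball_lt_top.ne) hTtop, hc]
        _ = c * T ^ ((1:ℝ)/2) * S2 ^ ((1:ℝ)/2) := by ring
    · -- far part
      calc ∫⁻ y in (ball x R)ᶜ, g y * ENNReal.ofReal ‖x - y‖⁻¹ ∂volume
          ≤ ∫⁻ y in (ball x R)ᶜ, g y * T⁻¹ ∂volume := by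
            refine setLIntegral_mono' measurableSet_ball.compl fun y hy => ?_
            refine mul_le_mul' le_rfl ?_
            have hdist : R ≤ ‖x - y‖ := by
              have := hy
              simp only [mem_compl_iff, mem_ball, not_lt] at this
              rwa [dist_eq_norm, norm_sub_rev] at this
            rw [← hRT, ← ENNReal.ofReal_inv_of_pos hRpos]
            exact ENNReal.ofReal_le_ofReal (inv_anti₀ hRpos hdist)
        _ = T⁻¹ * ∫⁻ y in (ball x R)ᶜ, g y ∂volume := by
            rw [lintegral_mul_const' T⁻¹ _ (by simp [hT0]), mul_comm]
        _ ≤ T⁻¹ * M := mul_le_mul' le_rfl (setLIntegral_le_lintegral _ _)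
  set B := c * T ^ ((1:ℝ)/2) * S2 ^ ((1:ℝ)/2) + T⁻¹ * M with hB
  have hmain : ∫⁻ x, (∫⁻ y, g y * ENNReal.ofReal ‖x - y‖⁻¹ ∂volume) * g x ∂volume ≤ B * M := by
    calc ∫⁻ x, (∫⁻ y, g y * ENNReal.ofReal ‖x - y‖⁻¹ ∂volume) * g x ∂volume
        ≤ ∫⁻ x, B * g x ∂volume := lintegral_mono fun x => mul_le_mul' (hWbound x) le_rfl
      _ = B * M := lintegral_const_mul B hg
  refine hmain.trans ?_
  -- final algebra
  have hMrw : ∀ a b : ℝ, M ^ a * M ^ b = M ^ (a + b) := fun a b =>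
    (ENNReal.rpow_add a b hM0 hM).symm
  have hSrw : ∀ a b : ℝ, S3 ^ a * S3 ^ b = S3 ^ (a + b) := fun a b =>
    (ENNReal.rpow_add a b hS30 hS).symm
  have hT12 : T ^ ((1:ℝ)/2) = M ^ ((1:ℝ)/4) * S3 ^ (-((1:ℝ)/12)) := by
    rw [hT, ENNReal.mul_rpow_of_ne_top (rpow_ne_top'' hM0 hM _) (rpow_ne_top'' hS30 hS _),
      ← ENNReal.rpow_mul, ← ENNReal.rpow_mul]
    norm_num
  have hTinv : T⁻¹ = M ^ (-((1:ℝ)/2)) * S3 ^ ((1:ℝ)/6) := by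
    rw [hT, ENNReal.mul_inv (Or.inl (rpow_ne_zero'' hM0 hM _))
      (Or.inl (rpow_ne_top'' hM0 hM _)), ← ENNReal.rpow_neg, ← ENNReal.rpow_neg]
    norm_num
  have hterm1 : c * T ^ ((1:ℝ)/2) * S2 ^ ((1:ℝ)/2) ≤ c * (M ^ ((1:ℝ)/2) * S3 ^ ((1:ℝ)/6)) := by
    have hS2' : S2 ^ ((1:ℝ)/2) ≤ M ^ ((1:ℝ)/4) * S3 ^ ((1:ℝ)/4) := by
      calc S2 ^ ((1:ℝ)/2) ≤ (M ^ ((1:ℝ)/2) * S3 ^ ((1:ℝ)/2)) ^ ((1:ℝ)/2) :=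
            ENNReal.rpow_le_rpow (by simpa using hS2) (by norm_num)
        _ = M ^ ((1:ℝ)/4) * S3 ^ ((1:ℝ)/4) := by
            rw [ENNReal.mul_rpow_of_ne_top (rpow_ne_top'' hM0 hM _) (rpow_ne_top'' hS30 hS _),
              ← ENNReal.rpow_mul, ← ENNReal.rpow_mul]
            norm_num
    calc c * T ^ ((1:ℝ)/2) * S2 ^ ((1:ℝ)/2)
        ≤ c * (M ^ ((1:ℝ)/4) * S3 ^ (-((1:ℝ)/12))) * (M ^ ((1:ℝ)/4) * S3 ^ ((1:ℝ)/4)) := by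
          rw [hT12]; exact mul_le_mul' le_rfl hS2'
      _ = c * (M ^ ((1:ℝ)/2) * S3 ^ ((1:ℝ)/6)) := by
          rw [show c * (M ^ ((1:ℝ)/4) * S3 ^ (-((1:ℝ)/12))) * (M ^ ((1:ℝ)/4) * S3 ^ ((1:ℝ)/4))
            = c * ((M ^ ((1:ℝ)/4) * M ^ ((1:ℝ)/4)) * (S3 ^ (-((1:ℝ)/12)) * S3 ^ ((1:ℝ)/4)))
            by ring, hMrw, hSrw]
          norm_num
  have hterm2 : T⁻¹ * M = M ^ ((1:ℝ)/2) * S3 ^ ((1:ℝ)/6) := by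
    rw [hTinv, show M ^ (-((1:ℝ)/2)) * S3 ^ ((1:ℝ)/6) * M
      = (M ^ (-((1:ℝ)/2)) * M ^ ((1:ℝ))) * S3 ^ ((1:ℝ)/6) by rw [ENNReal.rpow_one]; ring, hMrw]
    norm_num
  calc B * M ≤ (c * (M ^ ((1:ℝ)/2) * S3 ^ ((1:ℝ)/6)) + M ^ ((1:ℝ)/2) * S3 ^ ((1:ℝ)/6)) * M := by
        rw [hB]
        exact mul_le_mul' (add_le_add hterm1 (le_of_eq hterm2)) le_rfl
    _ = (c + 1) * M ^ (3/2:ℝ) * S3 ^ (1/6:ℝ) := by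
        rw [show (c * (M ^ ((1:ℝ)/2) * S3 ^ ((1:ℝ)/6)) + M ^ ((1:ℝ)/2) * S3 ^ ((1:ℝ)/6)) * M
          = (c + 1) * ((M ^ ((1:ℝ)/2) * M ^ ((1:ℝ))) * S3 ^ ((1:ℝ)/6)) by
            rw [ENNReal.rpow_one]; ring, hMrw]
        norm_num
        ring


lemma fderiv_component {N : ℕ} (Ψ : E3 → EuclideanSpace ℂ (Fin N)) (hΨ : ContDiff ℝ 1 Ψ)
    (j : Fin N) (x : E3) :
    fderiv ℝ (fun z => Ψ z j) x
      = ((EuclideanSpace.proj j : EuclideanSpace ℂ (Fin N) →L[ℂ] ℂ).restrictScalars ℝ).comp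
          (fderiv ℝ Ψ x) := by
  set P := (EuclideanSpace.proj j : EuclideanSpace ℂ (Fin N) →L[ℂ] ℂ).restrictScalars ℝ
  have h : (fun z => Ψ z j) = fun z => P (Ψ z) := rfl
  rw [h, show (fun z => P (Ψ z)) = (⇑P ∘ Ψ) from rfl,
    fderiv_comp x P.differentiableAt (hΨ.differentiable one_ne_zero).differentiableAt,
    P.fderiv]

lemma fderiv_sq_bound {N : ℕ} (Ψ : E3 → EuclideanSpace ℂ (Fin N)) (hΨ : ContDiff ℝ 1 Ψ)
    (x : E3) :
    ‖fderiv ℝ Ψ x‖ ^ 2 ≤ ∑ j, ‖fderiv ℝ (fun z => Ψ z j) x‖ ^ 2 := by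
  set L := fderiv ℝ Ψ x with hL
  have hLj : ∀ j, fderiv ℝ (fun z => Ψ z j) x
      = ((EuclideanSpace.proj j : EuclideanSpace ℂ (Fin N) →L[ℂ] ℂ).restrictScalars ℝ).comp L :=
    fun j => fderiv_component Ψ hΨ j x
  set S := ∑ j, ‖fderiv ℝ (fun z => Ψ z j) x‖ ^ 2 with hSdef
  have hS0 : 0 ≤ S := Finset.sum_nonneg fun j _ => by positivity
  have hb : ‖L‖ ≤ Real.sqrt S := by
    refine ContinuousLinearMap.opNorm_le_bound _ (Real.sqrt_nonneg _) fun v => ?_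
    have h1 : ‖L v‖ ^ 2 = ∑ j, ‖(L v) j‖ ^ 2 := by
      rw [EuclideanSpace.norm_eq, Real.sq_sqrt (Finset.sum_nonneg fun j _ => by positivity)]
    have h2 : ‖L v‖ ^ 2 ≤ S * ‖v‖ ^ 2 := by
      rw [h1, hSdef, Finset.sum_mul]
      refine Finset.sum_le_sum fun j _ => ?_
      have : (L v) j = (fderiv ℝ (fun z => Ψ z j) x) v := by rw [hLj j]; rfl
      rw [this]
      calc ‖(fderiv ℝ (fun z => Ψ z j) x) v‖ ^ 2
          ≤ (‖fderiv ℝ (fun z => Ψ z j) x‖ * ‖v‖) ^ 2 := by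
            have := (fderiv ℝ (fun z => Ψ z j) x).le_opNorm v
            have h0 : (0:ℝ) ≤ ‖(fderiv ℝ (fun z => Ψ z j) x) v‖ := norm_nonneg _
            nlinarith
        _ = ‖fderiv ℝ (fun z => Ψ z j) x‖ ^ 2 * ‖v‖ ^ 2 := by ring
    calc ‖L v‖ = Real.sqrt (‖L v‖ ^ 2) := (Real.sqrt_sq (norm_nonneg _)).symm
      _ ≤ Real.sqrt (S * ‖v‖ ^ 2) := Real.sqrt_le_sqrt h2
      _ = Real.sqrt S * ‖v‖ := by
          rw [Real.sqrt_mul hS0, Real.sqrt_sq (norm_nonneg _)]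
  calc ‖L‖ ^ 2 ≤ Real.sqrt S ^ 2 := by
        have := norm_nonneg L; nlinarith
    _ = S := Real.sq_sqrt hS0

/-- For a bounded open set `Ω ⊆ ℝ³` there is `C > 0`, depending only on `N`, such that for
every `C¹` function `Ψ : ℝ³ → ℂᴺ` with compact support contained in `Ω`:
`0 ≤ ⟨V_H(Ψ)Ψ, Ψ⟩_{L²(Ω)} ≤ C ‖Ψ‖³_{L²} ‖∇Ψ‖_{L²}`, where
`⟨V_H(Ψ)Ψ, Ψ⟩_{L²(Ω)} = ∫_Ω V_H(Ψ)(x) ρ(Ψ)(x) dx`,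
`V_H(Ψ)(x) = ∫_{ℝ³} ρ(Ψ)(y)/‖x−y‖ dy` and `ρ(Ψ) = Σⱼ |ψⱼ|²`. -/
theorem hartree_energy_nonneg_and_bound
    (Ω : Set (EuclideanSpace ℝ (Fin 3)))
    (hΩo : IsOpen Ω) (hΩb : Bornology.IsBounded Ω)
    (N : ℕ) (hN : 1 ≤ N) :
    ∃ C > (0 : ℝ), ∀ Ψ : EuclideanSpace ℝ (Fin 3) → EuclideanSpace ℂ (Fin N),
      ContDiff ℝ 1 Ψ → HasCompactSupport Ψ → tsupport Ψ ⊆ Ω →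
      0 ≤ ∫ x in Ω,
            (∫ y, (∑ j, ‖Ψ y j‖ ^ 2) / ‖x - y‖ ∂volume) * (∑ j, ‖Ψ x j‖ ^ 2) ∂volume
      ∧ ∫ x in Ω,
            (∫ y, (∑ j, ‖Ψ y j‖ ^ 2) / ‖x - y‖ ∂volume) * (∑ j, ‖Ψ x j‖ ^ 2) ∂volume
          ≤ C * Real.sqrt (∫ x, ∑ j, ‖Ψ x j‖ ^ 2 ∂volume) ^ 3
              * Real.sqrt (∑ j, ∫ x, ‖fderiv ℝ (fun z => Ψ z j) x‖ ^ 2 ∂volume) := by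
  classical
  set c : ℝ≥0∞ := (ENNReal.ofReal 3 * volume (ball (0:E3) 1)) ^ ((1:ℝ)/2) with hc
  have hcne : c ≠ ⊤ :=
    rpow_ne_top'' (mul_ne_zero (by simp) (measure_ball_pos volume 0 one_pos).ne')
      (ENNReal.mul_ne_top ENNReal.ofReal_ne_top measure_ball_lt_top.ne) _
  set cS : ℝ≥0 := SNormLESNormFDerivOfEqConst (EuclideanSpace ℂ (Fin N)) (volume : Measure E3) 2
    with hcS
  refine ⟨(c+1).toReal * ((cS:ℝ) + 1) + 1, by positivity, ?_⟩
  intro Ψ hΨ hcs hsupp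
  set ρ : E3 → ℝ := fun x => ∑ j, ‖Ψ x j‖^2 with hρ
  have hρnn : ∀ x, 0 ≤ ρ x := fun x => Finset.sum_nonneg fun j _ => by positivity
  constructor
  · refine setIntegral_nonneg hΩo.measurableSet fun x _ => mul_nonneg ?_ (hρnn x)
    exact integral_nonneg fun y => div_nonneg (hρnn y) (norm_nonneg _)
  -- Part 2
  have hρcont : Continuous ρ := by
    rw [hρ]
    exact continuous_finset_sum _ fun j _ =>
      (((EuclideanSpace.proj j : EuclideanSpace ℂ (Fin N) →L[ℂ] ℂ).restrictScalars
        ℝ).continuous.comp hΨ.continuous).norm.pow 2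
  have hρeq : ∀ x, ρ x = ‖Ψ x‖^2 := by
    intro x
    rw [hρ, EuclideanSpace.norm_eq, Real.sq_sqrt (Finset.sum_nonneg fun j _ => by positivity)]
  have hρcs : HasCompactSupport ρ := by
    have : ρ = (fun v : EuclideanSpace ℂ (Fin N) => ‖v‖^2) ∘ Ψ := by
      funext x; simp [hρeq x]
    rw [this]
    exact hcs.comp_left (by simp)
  have hρint : Integrable ρ := hρcont.integrable_of_hasCompactSupport hρcs
  have hρ3int : Integrable (fun x => ρ x ^ 3) :=
    (hρcont.pow 3).integrable_of_hasCompactSupport (HasCompactSupport.comp_left (g := fun t : ℝ => t^3) hρcs (by simp) : HasCompactSupport (fun x => ρ x ^ 3))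
  set g : E3 → ℝ≥0∞ := fun x => ENNReal.ofReal (ρ x) with hg
  have hgmeas : Measurable g := ENNReal.measurable_ofReal.comp hρcont.measurable
  set M := ∫⁻ x, g x ∂volume with hM
  set S3 := ∫⁻ x, g x ^ (3:ℝ) ∂volume with hS3
  have hMeq : M = ENNReal.ofReal (∫ x, ρ x ∂volume) :=
    (MeasureTheory.ofReal_integral_eq_lintegral_ofReal hρint
      (Filter.Eventually.of_forall hρnn)).symm
  have hMne : M ≠ ⊤ := by rw [hMeq]; exact ENNReal.ofReal_ne_top
  have h3eq : ∀ x, g x ^ (3:ℝ) = ENNReal.ofReal (ρ x ^ 3) := by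
    intro x
    rw [hg, show ((3:ℝ)) = ((3:ℕ):ℝ) by norm_num, ENNReal.rpow_natCast,
      ← ENNReal.ofReal_pow (hρnn x)]
  have hS3eq : S3 = ENNReal.ofReal (∫ x, ρ x ^ 3 ∂volume) := by
    rw [hS3, lintegral_congr h3eq]
    exact (MeasureTheory.ofReal_integral_eq_lintegral_ofReal hρ3int
      (Filter.Eventually.of_forall fun x => by positivity)).symm
  have hS3ne : S3 ≠ ⊤ := by rw [hS3eq]; exact ENNReal.ofReal_ne_top
  set W : E3 → ℝ≥0∞ := fun x => ∫⁻ y, g y * ENNReal.ofReal ‖x - y‖⁻¹ ∂volume with hW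
  have hWmeas : Measurable W := by
    rw [hW]
    apply Measurable.lintegral_prod_right (f := fun x y => g y * ENNReal.ofReal ‖x - y‖⁻¹)
    exact (hgmeas.comp measurable_snd).mul (ENNReal.measurable_ofReal.comp
      ((continuous_fst.sub continuous_snd).norm.measurable.inv))
  have hV : ∀ x, (∫ y, ρ y / ‖x - y‖ ∂volume) = (W x).toReal := by
    intro x
    have h1 : (∫ y, ρ y / ‖x - y‖ ∂volume) = ∫ y, ρ y * ‖x - y‖⁻¹ ∂volume := by
      simp only [div_eq_mul_inv]
    have hmbl : AEStronglyMeasurable (fun y : E3 => ρ y * ‖x - y‖⁻¹) volume := by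
      apply Measurable.aestronglyMeasurable
      fun_prop
    rw [h1, integral_eq_lintegral_of_nonneg_ae
      (Filter.Eventually.of_forall fun y => mul_nonneg (hρnn y) (by positivity)) hmbl]
    congr 1
    apply lintegral_congr
    intro y
    rw [ENNReal.ofReal_mul (hρnn y)]
  set D := ∑ j, ∫ x, ‖fderiv ℝ (fun z => Ψ z j) x‖ ^ 2 ∂volume with hD
  set I := ∫ x, ∑ j, ‖Ψ x j‖ ^ 2 ∂volume with hI
  have hIρ : I = ∫ x, ρ x ∂volume := rfl
  have hI0 : 0 ≤ I := by rw [hIρ]; exact integral_nonneg hρnn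
  -- integrability of derivative components
  have hDj : ∀ j : Fin N, Integrable (fun x : E3 => ‖fderiv ℝ (fun z => Ψ z j) x‖^2) := by
    intro j
    have hP : ContDiff ℝ 1 ((EuclideanSpace.proj j : EuclideanSpace ℂ (Fin N) →L[ℂ] ℂ).restrictScalars ℝ) :=
      ContinuousLinearMap.contDiff _
    have hψj : ContDiff ℝ 1 (fun z => Ψ z j) := hP.comp hΨ
    have hcsj : HasCompactSupport (fun z => Ψ z j) :=
      hcs.comp_left (g := fun v : EuclideanSpace ℂ (Fin N) => v j) (by simp)
    have hfd : Continuous (fderiv ℝ (fun z => Ψ z j)) := hψj.continuous_fderiv one_ne_zero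
    have hfds : HasCompactSupport (fderiv ℝ (fun z => Ψ z j)) := hcsj.fderiv (𝕜 := ℝ)
    exact (hfd.norm.pow 2).integrable_of_hasCompactSupport
      (HasCompactSupport.comp_left (g := fun L : E3 →L[ℝ] ℂ => ‖L‖^2) hfds (by simp) :
        HasCompactSupport (fun x : E3 => ‖fderiv ℝ (fun z => Ψ z j) x‖^2))
  have hDnn : 0 ≤ D := Finset.sum_nonneg fun j _ =>
    integral_nonneg fun x => by positivity
  have hsum_eq : ∫ x, (∑ j, ‖fderiv ℝ (fun z => Ψ z j) x‖^2) ∂volume = D := by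
    rw [hD]; exact integral_finset_sum _ fun j _ => hDj j
  -- Sobolev chain
  have hsob1 : S3 ^ ((1:ℝ)/6) = eLpNorm Ψ 6 volume := by
    rw [eLpNorm_eq_lintegral_rpow_enorm_toReal (by norm_num) (by norm_num), hS3]
    simp only [enorm_eq_nnnorm]
    have hpt : ∀ x, g x ^ (3:ℝ) = (‖Ψ x‖₊ : ℝ≥0∞) ^ ((6:ℝ≥0∞).toReal) := by
      intro x
      rw [hg]
      simp only [ENNReal.toReal_ofNat]
      rw [hρeq x, show ‖Ψ x‖^2 = ‖Ψ x‖^(2:ℕ) from rfl, ENNReal.ofReal_pow (norm_nonneg _),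
        ofReal_norm, enorm_eq_nnnorm, ← ENNReal.rpow_natCast (‖Ψ x‖₊ : ℝ≥0∞) 2,
        ← ENNReal.rpow_mul]
      norm_num
    rw [lintegral_congr hpt]
    simp
  have hsob2 : eLpNorm Ψ 6 volume ≤ (cS : ℝ≥0∞) * eLpNorm (fderiv ℝ Ψ) 2 volume := by
    have h := MeasureTheory.eLpNorm_le_eLpNorm_fderiv_of_eq (F := EuclideanSpace ℂ (Fin N))
      (volume : Measure E3) hΨ hcs (p := 2) (p' := 6) (by norm_num)
      (by rw [finrank_euclideanSpace_fin]; norm_num)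
      (by rw [finrank_euclideanSpace_fin]; norm_num)
    rw [hcS]
    exact_mod_cast h
  have hsob3 : eLpNorm (fderiv ℝ Ψ) 2 volume ≤ ENNReal.ofReal (Real.sqrt D) := by
    rw [eLpNorm_eq_lintegral_rpow_enorm_toReal (by norm_num) (by norm_num)]
    simp only [enorm_eq_nnnorm]
    have hpt : ∀ x, (‖fderiv ℝ Ψ x‖₊ : ℝ≥0∞) ^ ((2:ℝ≥0∞).toReal)
        ≤ ENNReal.ofReal (∑ j, ‖fderiv ℝ (fun z => Ψ z j) x‖^2) := by
      intro x
      simp only [ENNReal.toReal_ofNat]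
      rw [show ((2:ℝ)) = ((2:ℕ):ℝ) by norm_num, ENNReal.rpow_natCast,
        ← enorm_eq_nnnorm, ← ofReal_norm, ← ENNReal.ofReal_pow (norm_nonneg _)]
      exact ENNReal.ofReal_le_ofReal (fderiv_sq_bound Ψ hΨ x)
    calc (∫⁻ x, (‖fderiv ℝ Ψ x‖₊ : ℝ≥0∞) ^ ((2:ℝ≥0∞).toReal) ∂volume) ^ (1/(2:ℝ≥0∞).toReal)
        ≤ (∫⁻ x, ENNReal.ofReal (∑ j, ‖fderiv ℝ (fun z => Ψ z j) x‖^2) ∂volume)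
            ^ (1/(2:ℝ≥0∞).toReal) :=
          ENNReal.rpow_le_rpow (lintegral_mono hpt) (by simp)
      _ = ENNReal.ofReal (Real.sqrt D) := by
          rw [← MeasureTheory.ofReal_integral_eq_lintegral_ofReal
            (integrable_finset_sum _ fun j _ => hDj j)
            (Filter.Eventually.of_forall fun x => Finset.sum_nonneg fun j _ => by positivity),
            hsum_eq]
          simp only [ENNReal.toReal_ofNat]
          rw [ENNReal.ofReal_rpow_of_nonneg hDnn (by norm_num), Real.sqrt_eq_rpow]
  have hS3fin : (S3 ^ ((1:ℝ)/6)).toReal ≤ (cS:ℝ) * Real.sqrt D := by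
    have h1 : S3 ^ ((1:ℝ)/6) ≤ (cS : ℝ≥0∞) * ENNReal.ofReal (Real.sqrt D) := by
      rw [hsob1]
      exact hsob2.trans (mul_le_mul' le_rfl hsob3)
    have h2 := ENNReal.toReal_mono
      (ENNReal.mul_ne_top ENNReal.coe_ne_top ENNReal.ofReal_ne_top) h1
    rwa [ENNReal.toReal_mul, ENNReal.coe_toReal,
      ENNReal.toReal_ofReal (Real.sqrt_nonneg _)] at h2
  -- convert the goal's integral
  have hgoalLHS : (∫ x in Ω, (∫ y, (∑ j, ‖Ψ y j‖ ^ 2) / ‖x - y‖ ∂volume)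
        * (∑ j, ‖Ψ x j‖ ^ 2) ∂volume)
      = ∫ x in Ω, (W x).toReal * ρ x ∂volume := by
    refine setIntegral_congr_fun hΩo.measurableSet fun x _ => ?_
    calc (∫ y, (∑ j, ‖Ψ y j‖ ^ 2) / ‖x - y‖ ∂volume) * (∑ j, ‖Ψ x j‖ ^ 2)
        = (∫ y, ρ y / ‖x - y‖ ∂volume) * ρ x := rfl
      _ = (W x).toReal * ρ x := by rw [hV x]
  have hEbound := hls g hgmeas hMne hS3ne
  have hfin : (c + 1) * M ^ (3/2:ℝ) * S3 ^ (1/6:ℝ) ≠ ⊤ :=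
    ENNReal.mul_ne_top (ENNReal.mul_ne_top
      (by simp [hcne, ENNReal.add_eq_top])
      (ENNReal.rpow_ne_top_of_nonneg (by norm_num) hMne))
      (ENNReal.rpow_ne_top_of_nonneg (by norm_num) hS3ne)
  have hLHS2 : ∫ x in Ω, (W x).toReal * ρ x ∂volume
      ≤ ((c+1) * M ^ (3/2:ℝ) * S3 ^ (1/6:ℝ)).toReal := by
    have hmbl2 : AEStronglyMeasurable (fun x => (W x).toReal * ρ x) (volume.restrict Ω) :=
      ((ENNReal.measurable_toReal.comp hWmeas).mul hρcont.measurable).aestronglyMeasurable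
    rw [integral_eq_lintegral_of_nonneg_ae
      (Filter.Eventually.of_forall fun x => mul_nonneg ENNReal.toReal_nonneg (hρnn x)) hmbl2]
    apply ENNReal.toReal_mono hfin
    calc ∫⁻ x in Ω, ENNReal.ofReal ((W x).toReal * ρ x) ∂volume
        ≤ ∫⁻ x in Ω, W x * g x ∂volume := by
          refine setLIntegral_mono' hΩo.measurableSet fun x _ => ?_
          rw [ENNReal.ofReal_mul ENNReal.toReal_nonneg]
          exact mul_le_mul' ENNReal.ofReal_toReal_le le_rfl
      _ ≤ ∫⁻ x, W x * g x ∂volume := setLIntegral_le_lintegral _ _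
      _ ≤ (c + 1) * M ^ (3/2:ℝ) * S3 ^ (1/6:ℝ) := hEbound
  have hM32 : (M ^ (3/2:ℝ)).toReal = Real.sqrt I ^ 3 := by
    rw [hMeq, ENNReal.ofReal_rpow_of_nonneg hI0 (by norm_num),
      ENNReal.toReal_ofReal (Real.rpow_nonneg hI0 _),
      show Real.sqrt I ^ 3 = (I ^ ((1:ℝ)/2)) ^ (3:ℕ) by rw [Real.sqrt_eq_rpow],
      ← Real.rpow_natCast (I ^ ((1:ℝ)/2)) 3, ← Real.rpow_mul hI0]
    norm_num
  have hfinal : ((c+1) * M ^ (3/2:ℝ) * S3 ^ (1/6:ℝ)).toReal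
      ≤ ((c+1).toReal * ((cS:ℝ) + 1) + 1) * Real.sqrt I ^ 3 * Real.sqrt D := by
    rw [ENNReal.toReal_mul, ENNReal.toReal_mul, hM32]
    have hs16 : (S3 ^ (1/6:ℝ)).toReal ≤ (cS:ℝ) * Real.sqrt D := hS3fin
    calc (c+1).toReal * Real.sqrt I ^ 3 * (S3 ^ (1/6:ℝ)).toReal
        ≤ (c+1).toReal * Real.sqrt I ^ 3 * ((cS:ℝ) * Real.sqrt D) := by
          apply mul_le_mul_of_nonneg_left hs16 (by positivity)
      _ = ((c+1).toReal * (cS:ℝ)) * Real.sqrt I ^ 3 * Real.sqrt D := by ring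
      _ ≤ ((c+1).toReal * ((cS:ℝ) + 1) + 1) * Real.sqrt I ^ 3 * Real.sqrt D := by
          have hk : (c+1).toReal * (cS:ℝ) ≤ (c+1).toReal * ((cS:ℝ) + 1) + 1 := by
            nlinarith [ENNReal.toReal_nonneg (a := c+1), NNReal.coe_nonneg cS]
          apply mul_le_mul_of_nonneg_right
            (mul_le_mul_of_nonneg_right hk (by positivity)) (Real.sqrt_nonneg _)
  rw [hgoalLHS]
  exact hLHS2.trans hfinal
end
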